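/- arXiv:1710.03160 — 5 statements merged into one kernel-verified Lean document; each statement's English description precedes it below -/
import Mathlib

section
/- For every x > 0 and τ ∈ (0,1), J_fwd(x, τ) = inf over c ∈ ℝ of { (1/2)c²τ + (1/(1−τ)) · J_BS(x · e^{−cτ}) }. -/
open MeasureTheory Set

/-- `IsAC f g` expresses that `f` is absolutely continuous on `[0,1]` with `f 0 = 0`:
`g` is its (integrable) derivative, `g²` is integrable (finite energy), and
`f t = ∫₀ᵗ g(s) ds` on `[0,1]`. -/
def IsAC (f g : ℝ → ℝ) : Prop :=
  IntervalIntegrable g volume 0 1 ∧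
  IntervalIntegrable (fun t => (g t) ^ 2) volume 0 1 ∧
  ∀ t ∈ Icc (0:ℝ) 1, f t = ∫ s in (0:ℝ)..t, g s

/-- The energy `(1/2)∫₀¹ (f'(t))² dt` of a path with derivative `g`. -/
noncomputable def energy (g : ℝ → ℝ) : ℝ :=
  (1 / 2) * ∫ t in (0:ℝ)..1, (g t) ^ 2

/-- The rate function `J_BS(x)` for an Asian option with averaging starting at time `0`
in the Black-Scholes model: the infimum of `(1/2)∫₀¹ (φ'(u))² du` over absolutely
continuous `φ` with `φ(0) = 0` and `∫₀¹ exp(φ(u)) du = x`. -/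
noncomputable def JBS (x : ℝ) : ℝ :=
  sInf { E | ∃ f g : ℝ → ℝ, IsAC f g ∧ (∫ u in (0:ℝ)..1, Real.exp (f u)) = x ∧ E = energy g }

/-- The rate function `J_fwd(x, τ)` for a forward start Asian option in the
Black-Scholes model: the infimum of `(1/2)∫₀¹ (f'(t))² dt` over absolutely continuous
`f` with `f(0) = 0` and `(1/(1-τ))∫_τ¹ exp(f(t)) dt = x`. -/
noncomputable def Jfwd (x τ : ℝ) : ℝ :=
  sInf { E | ∃ f g : ℝ → ℝ, IsAC f g ∧
    (1 / (1 - τ)) * (∫ t in τ..1, Real.exp (f t)) = x ∧ E = energy g }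


lemma energy_nonneg (g : ℝ → ℝ) : 0 ≤ energy g := by
  have h : 0 ≤ ∫ t in (0:ℝ)..1, (g t)^2 :=
    intervalIntegral.integral_nonneg (by norm_num) (fun u _ => sq_nonneg _)
  unfold energy; linarith

lemma exp_integral_linear (b : ℝ) (hb : b ≠ 0) :
    (∫ u in (0:ℝ)..1, Real.exp (b * u)) = (Real.exp b - 1) / b := by
  rw [intervalIntegral.integral_comp_mul_left Real.exp hb]
  simp [integral_exp, smul_eq_mul]
  field_simp

lemma exp_bound_aux (b : ℝ) : Real.exp b - 1 ≤ b * Real.exp b := by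
  have h := Real.add_one_le_exp (-b)
  have h2 : Real.exp (-b) * Real.exp b = 1 := by rw [← Real.exp_add]; simp
  have h3 : (0:ℝ) < Real.exp b := Real.exp_pos b
  nlinarith [mul_le_mul_of_nonneg_right h h3.le]

lemma exists_b (y : ℝ) (hy : 0 < y) :
    ∃ b : ℝ, (∫ u in (0:ℝ)..1, Real.exp (b * u)) = y := by
  rcases lt_trichotomy y 1 with h | h | h
  · -- y < 1
    set a := Real.log y with ha_def
    have ha : a < 0 := Real.log_neg hy h
    have hexpa : Real.exp a = y := Real.exp_log hy
    set A := min a (-(1/y)) with hA_def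
    have hA0 : A < 0 := lt_of_le_of_lt (min_le_left _ _) ha
    have hAa : A ≤ a := min_le_left _ _
    have hAy : A ≤ -(1/y) := min_le_right _ _
    set H : ℝ → ℝ := fun b => (Real.exp b - 1) / b with hH_def
    have hHa : y ≤ H a := by
      rw [hH_def]
      rw [le_div_iff_of_neg ha]
      have := exp_bound_aux a
      nlinarith [hexpa]
    have hHA : H A ≤ y := by
      rw [hH_def]
      rw [div_le_iff_of_neg hA0]
      have h1 : y * A ≤ y * (-(1/y)) := mul_le_mul_of_nonneg_left hAy hy.le
      have h2 : y * (-(1/y)) = -1 := by field_simp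
      nlinarith [Real.exp_pos A]
    have hcont : ContinuousOn H (Icc A a) := by
      apply ContinuousOn.div
      · exact (Real.continuous_exp.sub continuous_const).continuousOn
      · exact continuousOn_id
      · intro z hz; exact ne_of_lt (lt_of_le_of_lt hz.2 ha)
    have := intermediate_value_Icc hAa hcont
    obtain ⟨b, hbmem, hbeq⟩ := this ⟨hHA, hHa⟩
    have hb0 : b ≠ 0 := ne_of_lt (lt_of_le_of_lt hbmem.2 ha)
    exact ⟨b, by rw [exp_integral_linear b hb0]; exact hbeq⟩
  · exact ⟨0, by simp [h]⟩
  · -- 1 < y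
    set a := Real.log y with ha_def
    have ha : 0 < a := Real.log_pos h
    have hexpa : Real.exp a = y := Real.exp_log hy
    set B := max a (4*y + 4) with hB_def
    have haB : a ≤ B := le_max_left _ _
    have hBy : 4*y + 4 ≤ B := le_max_right _ _
    have hB0 : 0 < B := lt_of_lt_of_le ha haB
    set H : ℝ → ℝ := fun b => (Real.exp b - 1) / b with hH_def
    have hHa : H a ≤ y := by
      rw [hH_def, div_le_iff₀ ha]
      have := exp_bound_aux a
      nlinarith [hexpa]
    have hHB : y ≤ H B := by
      rw [hH_def, le_div_iff₀ hB0]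
      have h1 : 1 + B/2 ≤ Real.exp (B/2) := by
        have := Real.add_one_le_exp (B/2); linarith
      have h2 : Real.exp (B/2) * Real.exp (B/2) = Real.exp B := by
        rw [← Real.exp_add]; ring_nf
      have h3 : (1 + B/2)^2 ≤ Real.exp B := by
        rw [← h2]; nlinarith [hB0]
      nlinarith [hB0, hy]
    have hcont : ContinuousOn H (Icc a B) := by
      apply ContinuousOn.div
      · exact (Real.continuous_exp.sub continuous_const).continuousOn
      · exact continuousOn_id
      · intro z hz; exact ne_of_gt (lt_of_lt_of_le ha hz.1)
    have := intermediate_value_Icc haB hcont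
    obtain ⟨b, hbmem, hbeq⟩ := this ⟨hHa, hHB⟩
    have hb0 : b ≠ 0 := ne_of_gt (lt_of_lt_of_le ha hbmem.1)
    exact ⟨b, by rw [exp_integral_linear b hb0]; exact hbeq⟩


lemma cov_fwd (τ : ℝ) (hτ1 : τ < 1) (h : ℝ → ℝ) (a b : ℝ) :
    (∫ t in a..b, h ((t - τ)/(1 - τ))) =
      (1 - τ) * ∫ u in (a - τ)/(1-τ)..(b - τ)/(1-τ), h u := by
  have hσ : (1:ℝ) - τ ≠ 0 := ne_of_gt (sub_pos.2 hτ1)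
  rw [intervalIntegral.integral_comp_sub_right (fun s => h (s / (1 - τ))) τ,
    intervalIntegral.integral_comp_div h hσ, smul_eq_mul]

lemma cov_bwd (τ : ℝ) (hτ1 : τ < 1) (h : ℝ → ℝ) (a b : ℝ) :
    (∫ u in a..b, h ((1-τ)*u + τ)) =
      (1-τ)⁻¹ * ∫ t in (1-τ)*a+τ..(1-τ)*b+τ, h t := by
  have hσ : (1:ℝ) - τ ≠ 0 := ne_of_gt (sub_pos.2 hτ1)
  rw [intervalIntegral.integral_comp_mul_add h hσ τ, smul_eq_mul]

lemma II_fwd (τ : ℝ) (hτ1 : τ < 1) {h : ℝ → ℝ}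
    (hh : IntervalIntegrable h volume 0 1) :
    IntervalIntegrable (fun t => h ((t - τ)/(1 - τ))) volume τ 1 := by
  have hσ0 : (0:ℝ) < 1 - τ := sub_pos.2 hτ1
  have hσ : (1:ℝ) - τ ≠ 0 := ne_of_gt hσ0
  have h1 := (hh.comp_mul_right (c := (1-τ)⁻¹)).comp_sub_right τ
  have e0 : (0:ℝ)/(1-τ)⁻¹ + τ = τ := by simp
  have e1 : (1:ℝ)/(1-τ)⁻¹ + τ = 1 := by field_simp; ring
  rw [e0, e1] at h1
  simpa [div_eq_mul_inv] using h1

lemma II_bwd (τ : ℝ) (hτ1 : τ < 1) {h : ℝ → ℝ}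
    (hh : IntervalIntegrable h volume τ 1) :
    IntervalIntegrable (fun u => h ((1-τ)*u + τ)) volume 0 1 := by
  have hσ0 : (0:ℝ) < 1 - τ := sub_pos.2 hτ1
  have hσ : (1:ℝ) - τ ≠ 0 := ne_of_gt hσ0
  have h1 := (hh.comp_add_right τ).comp_mul_left (c := 1-τ)
  have e0 : (τ - τ)/(1-τ) = 0 := by simp
  have e1 : ((1:ℝ) - τ)/(1-τ) = 1 := div_self hσ
  rw [e0, e1] at h1
  exact h1


lemma lift (x τ c : ℝ) (hτ0 : 0 < τ) (hτ1 : τ < 1)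
    (φ ψ : ℝ → ℝ) (hAC : IsAC φ ψ)
    (hcon : (∫ u in (0:ℝ)..1, Real.exp (φ u)) = x * Real.exp (-c * τ)) :
    ∃ f g : ℝ → ℝ, IsAC f g ∧
      (1 / (1 - τ)) * (∫ t in τ..1, Real.exp (f t)) = x ∧
      energy g = (1/2) * c^2 * τ + (1/(1-τ)) * energy ψ := by
  obtain ⟨hψ, hψ2, hφ⟩ := hAC
  have hσ0 : (0:ℝ) < 1 - τ := sub_pos.2 hτ1
  have hσ : (1:ℝ) - τ ≠ 0 := ne_of_gt hσ0
  set g : ℝ → ℝ := fun t => if t ≤ τ then c else (1-τ)⁻¹ * ψ ((t - τ)/(1-τ)) with hg_def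
  -- integrability of g and g² on the two pieces
  have hg_low : IntervalIntegrable g volume 0 τ := by
    refine (intervalIntegrable_const (c := c)).congr_ae ?_
    rw [uIoc_of_le hτ0.le]
    filter_upwards [ae_restrict_mem measurableSet_Ioc] with t ht
    simp [hg_def, ht.2]
  have hg_high : IntervalIntegrable g volume τ 1 := by
    refine ((II_fwd τ hτ1 hψ).const_mul ((1-τ)⁻¹)).congr_ae ?_
    rw [uIoc_of_le hτ1.le]
    filter_upwards [ae_restrict_mem measurableSet_Ioc] with t ht
    simp [hg_def, not_le.2 ht.1]
  have hg01 : IntervalIntegrable g volume 0 1 := hg_low.trans hg_high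
  have hg2_low : IntervalIntegrable (fun t => (g t)^2) volume 0 τ := by
    refine (intervalIntegrable_const (c := c^2)).congr_ae ?_
    rw [uIoc_of_le hτ0.le]
    filter_upwards [ae_restrict_mem measurableSet_Ioc] with t ht
    simp [hg_def, ht.2]
  have hg2_high : IntervalIntegrable (fun t => (g t)^2) volume τ 1 := by
    refine (((II_fwd τ hτ1 hψ2).const_mul (((1-τ)⁻¹)^2))).congr_ae ?_
    rw [uIoc_of_le hτ1.le]
    filter_upwards [ae_restrict_mem measurableSet_Ioc] with t ht
    simp only [hg_def, not_le.2 ht.1, if_false, mul_pow]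
  have hg201 : IntervalIntegrable (fun t => (g t)^2) volume 0 1 := hg2_low.trans hg2_high
  set f : ℝ → ℝ := fun t => ∫ s in (0:ℝ)..t, g s with hf_def
  have hACf : IsAC f g := ⟨hg01, hg201, fun t _ => rfl⟩
  have hlow_int : (∫ s in (0:ℝ)..τ, g s) = c * τ := by
    rw [intervalIntegral.integral_congr_ae (g := fun _ => c) ?_]
    · simp [mul_comm]
    · refine Filter.Eventually.of_forall (fun s hs => ?_)
      rw [uIoc_of_le hτ0.le] at hs
      exact if_pos hs.2
  have hup_int : ∀ t, τ ≤ t →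
      (∫ s in τ..t, g s) = ∫ s in τ..t, (1-τ)⁻¹ * ψ ((s - τ)/(1-τ)) := by
    intro t ht
    refine intervalIntegral.integral_congr_ae (Filter.Eventually.of_forall (fun s hs => ?_))
    rw [uIoc_of_le ht] at hs
    exact if_neg (not_le.2 hs.1)
  have hf_eq : ∀ t ∈ Icc τ 1, f t = c * τ + φ ((t - τ)/(1-τ)) := by
    intro t ht
    have hsub : uIcc τ t ⊆ uIcc τ 1 := by
      rw [uIcc_of_le ht.1, uIcc_of_le hτ1.le]
      exact Icc_subset_Icc le_rfl ht.2
    have h2 : f t = (∫ s in (0:ℝ)..τ, g s) + ∫ s in τ..t, g s :=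
      (intervalIntegral.integral_add_adjacent_intervals hg_low (hg_high.mono_set hsub)).symm
    have hmem : (t - τ)/(1-τ) ∈ Icc (0:ℝ) 1 :=
      ⟨div_nonneg (sub_nonneg.2 ht.1) hσ0.le, (div_le_one hσ0).2 (by linarith [ht.2])⟩
    rw [h2, hlow_int, hup_int t ht.1, intervalIntegral.integral_const_mul,
      cov_fwd τ hτ1 ψ τ t, show (τ - τ)/(1-τ) = 0 by simp, ← hφ _ hmem,
      inv_mul_cancel_left₀ hσ]
  have hcon' : (∫ t in τ..1, Real.exp (f t)) = (1-τ) * x := by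
    rw [intervalIntegral.integral_congr
      (g := fun t => Real.exp (c*τ + φ ((t - τ)/(1-τ))))
      (fun t ht => by rw [hf_eq t (by rwa [uIcc_of_le hτ1.le] at ht)]),
      cov_fwd τ hτ1 (fun u => Real.exp (c*τ + φ u)) τ 1,
      show (τ - τ)/(1-τ) = 0 by simp, show ((1:ℝ) - τ)/(1-τ) = 1 from div_self hσ]
    simp only [Real.exp_add]
    rw [intervalIntegral.integral_const_mul, hcon,
      show Real.exp (c*τ) * (x * Real.exp (-c*τ)) =
        x * (Real.exp (c*τ) * Real.exp (-c*τ)) from by ring, ← Real.exp_add]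
    simp [mul_comm]
  have hsplit : (∫ t in (0:ℝ)..1, (g t)^2)
      = (∫ t in (0:ℝ)..τ, (g t)^2) + ∫ t in τ..1, (g t)^2 :=
    (intervalIntegral.integral_add_adjacent_intervals hg2_low hg2_high).symm
  have h1 : (∫ t in (0:ℝ)..τ, (g t)^2) = c^2 * τ := by
    rw [intervalIntegral.integral_congr_ae (g := fun _ => c^2) ?_]
    · simp [mul_comm]
    · refine Filter.Eventually.of_forall (fun s hs => ?_)
      rw [uIoc_of_le hτ0.le] at hs
      simp [hg_def, hs.2]
  have h2 : (∫ t in τ..1, (g t)^2) = (1-τ)⁻¹ * ∫ u in (0:ℝ)..1, (ψ u)^2 := by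
    rw [intervalIntegral.integral_congr_ae
      (g := fun t => ((1-τ)⁻¹)^2 * (ψ ((t - τ)/(1-τ)))^2) ?_]
    · rw [intervalIntegral.integral_const_mul, cov_fwd τ hτ1 (fun u => (ψ u)^2) τ 1,
        show (τ - τ)/(1-τ) = 0 by simp, show ((1:ℝ) - τ)/(1-τ) = 1 from div_self hσ]
      field_simp
    · refine Filter.Eventually.of_forall (fun s hs => ?_)
      rw [uIoc_of_le hτ1.le] at hs
      simp only [hg_def, not_le.2 hs.1, if_false, mul_pow]
  refine ⟨f, g, hACf, ?_, ?_⟩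
  · rw [hcon']; field_simp
  · unfold energy
    rw [hsplit, h1, h2]
    ring


lemma project (x τ : ℝ) (hτ0 : 0 < τ) (hτ1 : τ < 1)
    (f g : ℝ → ℝ) (hAC : IsAC f g)
    (hcon : (1 / (1 - τ)) * (∫ t in τ..1, Real.exp (f t)) = x) :
    ∃ c : ℝ, ∃ φ ψ : ℝ → ℝ, IsAC φ ψ ∧
      (∫ u in (0:ℝ)..1, Real.exp (φ u)) = x * Real.exp (-c * τ) ∧
      (1/2) * c^2 * τ + (1/(1-τ)) * energy ψ ≤ energy g := by
  obtain ⟨hg, hg2, hf⟩ := hAC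
  have hσ0 : (0:ℝ) < 1 - τ := sub_pos.2 hτ1
  have hσ : (1:ℝ) - τ ≠ 0 := ne_of_gt hσ0
  have hτne : τ ≠ 0 := ne_of_gt hτ0
  set c : ℝ := f τ / τ with hc_def
  have hfτ : f τ = c * τ := by rw [hc_def]; field_simp
  have hτ_mem : τ ∈ Icc (0:ℝ) 1 := ⟨hτ0.le, hτ1.le⟩
  have hsub_low : uIcc (0:ℝ) τ ⊆ uIcc (0:ℝ) 1 := by
    rw [uIcc_of_le hτ0.le, uIcc_of_le zero_le_one]
    exact Icc_subset_Icc le_rfl hτ1.le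
  have hsub_high : uIcc τ (1:ℝ) ⊆ uIcc (0:ℝ) 1 := by
    rw [uIcc_of_le hτ1.le, uIcc_of_le zero_le_one]
    exact Icc_subset_Icc hτ0.le le_rfl
  have hg_low := hg.mono_set hsub_low
  have hg_high := hg.mono_set hsub_high
  have hg2_low := hg2.mono_set hsub_low
  have hg2_high := hg2.mono_set hsub_high
  set ψ : ℝ → ℝ := fun u => (1-τ) * g ((1-τ)*u + τ) with hψ_def
  have hψ : IntervalIntegrable ψ volume 0 1 := (II_bwd τ hτ1 hg_high).const_mul (1-τ)
  have hψ2 : IntervalIntegrable (fun u => (ψ u)^2) volume 0 1 := by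
    refine ((II_bwd τ hτ1 hg2_high).const_mul ((1-τ)^2)).congr_ae
      (Filter.Eventually.of_forall (fun u => ?_))
    simp [hψ_def, mul_pow]
  set φ : ℝ → ℝ := fun u => ∫ s in (0:ℝ)..u, ψ s with hφ_def
  have hACφ : IsAC φ ψ := ⟨hψ, hψ2, fun t _ => rfl⟩
  have hφeq : ∀ u ∈ Icc (0:ℝ) 1, φ u = f ((1-τ)*u + τ) - c * τ := by
    intro u hu
    have hmemt : (1-τ)*u + τ ∈ Icc (0:ℝ) 1 :=
      ⟨by nlinarith [hu.1, hu.2], by nlinarith [hu.1, hu.2]⟩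
    have hsubB : uIcc (0:ℝ) ((1-τ)*u + τ) ⊆ uIcc (0:ℝ) 1 := by
      rw [uIcc_of_le (by nlinarith [hu.1, hu.2] : (0:ℝ) ≤ (1-τ)*u + τ), uIcc_of_le zero_le_one]
      exact Icc_subset_Icc le_rfl hmemt.2
    have h1 : φ u = ∫ s in (0:ℝ)..u, (1-τ) * g ((1-τ)*s + τ) := rfl
    rw [h1, intervalIntegral.integral_const_mul, cov_bwd τ hτ1 g 0 u,
      mul_inv_cancel_left₀ hσ, show (1-τ)*0 + τ = τ by ring,
      ← intervalIntegral.integral_interval_sub_left (hg.mono_set hsubB) hg_low,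
      ← hf _ hmemt, ← hf τ hτ_mem, hfτ]
  have hI : (∫ t in τ..1, Real.exp (f t)) = (1-τ) * x := by
    rw [← hcon]; field_simp
  have hconφ : (∫ u in (0:ℝ)..1, Real.exp (φ u)) = x * Real.exp (-c * τ) := by
    rw [intervalIntegral.integral_congr
      (g := fun u => Real.exp (f ((1-τ)*u + τ) - c*τ))
      (fun u hu => by rw [hφeq u (by rwa [uIcc_of_le zero_le_one] at hu)])]
    simp only [Real.exp_sub]
    rw [intervalIntegral.integral_div, cov_bwd τ hτ1 (fun t => Real.exp (f t)) 0 1,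
      show (1-τ)*0 + τ = τ by ring, show (1-τ)*1 + τ = 1 by ring, hI,
      inv_mul_cancel_left₀ hσ, neg_mul, Real.exp_neg, div_eq_mul_inv]
  have hsplit : (∫ t in (0:ℝ)..1, (g t)^2)
      = (∫ t in (0:ℝ)..τ, (g t)^2) + ∫ t in τ..1, (g t)^2 :=
    (intervalIntegral.integral_add_adjacent_intervals hg2_low hg2_high).symm
  have hCS : c^2 * τ ≤ ∫ t in (0:ℝ)..τ, (g t)^2 := by
    have h0 : 0 ≤ ∫ t in (0:ℝ)..τ, (g t - c)^2 :=
      intervalIntegral.integral_nonneg hτ0.le (fun t _ => sq_nonneg _)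
    have hexp : (∫ t in (0:ℝ)..τ, (g t - c)^2)
        = (∫ t in (0:ℝ)..τ, (g t)^2) - 2*c*(∫ t in (0:ℝ)..τ, g t) + c^2*τ := by
      have hpt : ∀ t : ℝ, (g t - c)^2 = ((g t)^2 - (2*c) * g t) + c^2 := fun t => by ring
      simp only [hpt]
      rw [intervalIntegral.integral_add (hg2_low.sub (hg_low.const_mul (2*c)))
        intervalIntegrable_const,
        intervalIntegral.integral_sub hg2_low (hg_low.const_mul (2*c)),
        intervalIntegral.integral_const_mul, intervalIntegral.integral_const, smul_eq_mul]
      ring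
    have hgint : (∫ t in (0:ℝ)..τ, g t) = c * τ := by rw [← hf τ hτ_mem, hfτ]
    rw [hexp, hgint] at h0
    nlinarith [h0]
  have hψen : (1/(1-τ)) * energy ψ = (1/2) * ∫ t in τ..1, (g t)^2 := by
    unfold energy
    have hpt : ∀ u : ℝ, (ψ u)^2 = (1-τ)^2 * (g ((1-τ)*u + τ))^2 := fun u => by
      simp [hψ_def, mul_pow]
    simp only [hpt]
    rw [intervalIntegral.integral_const_mul, cov_bwd τ hτ1 (fun t => (g t)^2) 0 1,
      show (1-τ)*0 + τ = τ by ring, show (1-τ)*1 + τ = 1 by ring]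
    field_simp
  refine ⟨c, φ, ψ, hACφ, hconφ, ?_⟩
  have hen : energy g = (1/2) * ((∫ t in (0:ℝ)..τ, (g t)^2) + ∫ t in τ..1, (g t)^2) := by
    unfold energy; rw [hsplit]
  rw [hen, hψen]
  nlinarith [hCS]


/-- For every `x > 0` and `τ ∈ (0,1)`,
`J_fwd(x, τ) = inf_{c ∈ ℝ} { (1/2)c²τ + (1/(1−τ)) · J_BS(x·e^{−cτ}) }`. -/
theorem forward_rate_function_double_layer (x τ : ℝ) (hx : 0 < x) (hτ : τ ∈ Ioo (0:ℝ) 1) :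
    Jfwd x τ =
      ⨅ c : ℝ, ((1 / 2) * c ^ 2 * τ + (1 / (1 - τ)) * JBS (x * Real.exp (-c * τ))) := by
  obtain ⟨hτ0, hτ1⟩ := hτ
  have hσ0 : (0:ℝ) < 1 - τ := sub_pos.2 hτ1
  have hσ : (1:ℝ) - τ ≠ 0 := ne_of_gt hσ0
  have h1σ : (0:ℝ) < 1/(1-τ) := by positivity
  set SBS : ℝ → Set ℝ := fun y =>
    {E | ∃ f g : ℝ → ℝ, IsAC f g ∧ (∫ u in (0:ℝ)..1, Real.exp (f u)) = y ∧ E = energy g}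
    with hSBS_def
  set Sf : Set ℝ := {E | ∃ f g : ℝ → ℝ, IsAC f g ∧
    (1 / (1 - τ)) * (∫ t in τ..1, Real.exp (f t)) = x ∧ E = energy g} with hSf_def
  have hJBS : ∀ y, JBS y = sInf (SBS y) := fun y => rfl
  have hJf : Jfwd x τ = sInf Sf := rfl
  have hxe : ∀ c : ℝ, 0 < x * Real.exp (-c * τ) := fun c => mul_pos hx (Real.exp_pos _)
  have hbddBS : ∀ y, BddBelow (SBS y) := by
    intro y; refine ⟨0, ?_⟩; rintro E ⟨f, g, _, _, rfl⟩; exact energy_nonneg g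
  have hneBS : ∀ c : ℝ, (SBS (x * Real.exp (-c * τ))).Nonempty := by
    intro c
    obtain ⟨b, hb⟩ := exists_b _ (hxe c)
    exact ⟨energy (fun _ => b), fun u => b * u, fun _ => b,
      ⟨intervalIntegrable_const, intervalIntegrable_const,
        fun t ht => by simp [mul_comm]⟩, hb, rfl⟩
  have hbddSf : BddBelow Sf := by
    refine ⟨0, ?_⟩; rintro E ⟨f, g, _, _, rfl⟩; exact energy_nonneg g
  have hneSf : Sf.Nonempty := by
    obtain ⟨E, φ, ψ, hACφ, hconφ, hE⟩ := hneBS 0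
    obtain ⟨f, g, hACf, hconf, hen⟩ := lift x τ 0 hτ0 hτ1 φ ψ hACφ hconφ
    exact ⟨energy g, f, g, hACf, hconf, rfl⟩
  have hJBSnn : ∀ y, 0 ≤ JBS y := by
    intro y; rw [hJBS]
    apply Real.sInf_nonneg
    rintro E ⟨f, g, _, _, rfl⟩; exact energy_nonneg g
  have hFnn : ∀ c : ℝ,
      0 ≤ (1 / 2) * c ^ 2 * τ + (1 / (1 - τ)) * JBS (x * Real.exp (-c * τ)) := by
    intro c
    have h1 := hJBSnn (x * Real.exp (-c * τ))
    have h2 : 0 ≤ (1/2) * c^2 * τ := by positivity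
    nlinarith [h1σ]
  apply le_antisymm
  · apply le_ciInf
    intro c
    have key : (1-τ) * (sInf Sf - (1/2)*c^2*τ) ≤ sInf (SBS (x * Real.exp (-c * τ))) := by
      apply le_csInf (hneBS c)
      rintro E ⟨φ, ψ, hACφ, hconφ, rfl⟩
      obtain ⟨f, g, hACf, hconf, hen⟩ := lift x τ c hτ0 hτ1 φ ψ hACφ hconφ
      have hle : sInf Sf ≤ energy g := csInf_le hbddSf ⟨f, g, hACf, hconf, rfl⟩
      rw [hen] at hle
      have h4 : (1-τ) * ((1/(1-τ)) * energy ψ) = energy ψ := by field_simp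
      linarith [mul_le_mul_of_nonneg_left hle hσ0.le, h4]
    have key2 := mul_le_mul_of_nonneg_left key h1σ.le
    rw [show (1/(1-τ)) * ((1-τ) * (sInf Sf - (1/2)*c^2*τ)) = sInf Sf - (1/2)*c^2*τ
      from by field_simp] at key2
    rw [hJf, hJBS]
    linarith
  · rw [hJf]
    apply le_csInf hneSf
    rintro E ⟨f, g, hACf, hconf, rfl⟩
    obtain ⟨c, φ, ψ, hACφ, hconφ, hle⟩ := project x τ hτ0 hτ1 f g hACf hconf
    have h1 : JBS (x * Real.exp (-c * τ)) ≤ energy ψ := by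
      rw [hJBS]; exact csInf_le (hbddBS _) ⟨φ, ψ, hACφ, hconφ, rfl⟩
    have h2 : (1/2)*c^2*τ + (1/(1-τ)) * JBS (x * Real.exp (-c * τ)) ≤ energy g := by
      have h3 : (1/(1-τ)) * JBS (x * Real.exp (-c * τ)) ≤ (1/(1-τ)) * energy ψ :=
        mul_le_mul_of_nonneg_left h1 h1σ.le
      linarith
    exact le_trans (ciInf_le ⟨0, by rintro _ ⟨c2, rfl⟩; exact hFnn c2⟩ c) h2
end

section
/- For every x ≥ 1, if β ≥ 0 satisfies sinh(β)/β = x (with the convention that sinh(β)/β = 1 when β = 0), then J_BS(x) = (1/2)β² − β·tanh(β/2). -/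
open MeasureTheory Set
open scoped ENNReal NNReal

lemma hd_scs (t : ℝ) : HasDerivAt (fun s : ℝ => s*Real.cosh s - Real.sinh s) (t*Real.sinh t) t := by
  have h := ((hasDerivAt_id t).mul (Real.hasDerivAt_cosh t)).sub (Real.hasDerivAt_sinh t)
  refine h.congr_deriv ?_
  simp only [id_eq, one_mul]
  ring

lemma hd_two_sq (t : ℝ) : HasDerivAt (fun s : ℝ => 2*s^2) (4*t) t := by
  have h := (hasDerivAt_pow 2 t).const_mul (2:ℝ)
  refine h.congr_deriv ?_
  simp only [Nat.cast_ofNat, pow_one]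
  ring

lemma cont_q : Continuous (fun s : ℝ => Real.sinh s / Real.cosh s) :=
  Real.continuous_sinh.div Real.continuous_cosh (fun t => (Real.cosh_pos t).ne')

lemma cont_R : Continuous (fun s : ℝ => 2*s^2 - 2*s*(Real.sinh s / Real.cosh s)) := by
  have h1 : Continuous (fun s : ℝ => 2*s^2) := continuous_const.mul (continuous_pow 2)
  have h2 : Continuous (fun s : ℝ => 2*s*(Real.sinh s / Real.cosh s)) :=
    (continuous_const.mul continuous_id).mul cont_q
  exact h1.sub h2

lemma aux_scs_pos {s : ℝ} (hs : 0 < s) : Real.sinh s < s * Real.cosh s := by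
  have hmono : StrictMonoOn (fun t : ℝ => t * Real.cosh t - Real.sinh t) (Ici 0) := by
    apply strictMonoOn_of_deriv_pos (convex_Ici 0)
    · exact (((continuous_id.mul Real.continuous_cosh).sub Real.continuous_sinh)).continuousOn
    · intro t ht
      rw [interior_Ici] at ht
      have h1 := hd_scs t
      rw [h1.deriv]
      exact mul_pos ht (Real.sinh_pos_iff.2 ht)
  have := hmono (self_mem_Ici) (le_of_lt hs : (0:ℝ) ≤ s) hs
  simpa using this

lemma aux_scs {s : ℝ} (hs : 0 ≤ s) : Real.sinh s ≤ s * Real.cosh s := by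
  rcases eq_or_lt_of_le hs with h | h
  · simp [← h]
  · exact (aux_scs_pos h).le

lemma aux_tanh_le {s : ℝ} (hs : 0 ≤ s) : Real.sinh s / Real.cosh s ≤ s := by
  rw [div_le_iff₀ (Real.cosh_pos _)]
  exact aux_scs hs

lemma aux_R_mono : MonotoneOn (fun s : ℝ => 2*s^2 - 2*s*(Real.sinh s / Real.cosh s)) (Ici 0) := by
  apply monotoneOn_of_deriv_nonneg (convex_Ici 0)
  · exact cont_R.continuousOn
  · intro t ht
    rw [interior_Ici] at ht
    apply DifferentiableAt.differentiableWithinAt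
    have : DifferentiableAt ℝ (fun s : ℝ => Real.sinh s / Real.cosh s) t :=
      (Real.differentiable_sinh t).div (Real.differentiable_cosh t) (Real.cosh_pos _).ne'
    fun_prop
  · intro t ht
    rw [interior_Ici] at ht
    have hq : HasDerivAt (fun s : ℝ => Real.sinh s / Real.cosh s)
        ((Real.cosh t * Real.cosh t - Real.sinh t * Real.sinh t) / (Real.cosh t)^2) t :=
      (Real.hasDerivAt_sinh t).div (Real.hasDerivAt_cosh t) (Real.cosh_pos _).ne'
    have hq' : HasDerivAt (fun s : ℝ => Real.sinh s / Real.cosh s) (1 / (Real.cosh t)^2) t := by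
      convert hq using 1
      have := Real.cosh_sq_sub_sinh_sq t
      field_simp
      nlinarith [this]
    have hD : HasDerivAt (fun s : ℝ => 2*s^2 - 2*s*(Real.sinh s / Real.cosh s))
        (4*t - 2*(1*(Real.sinh t / Real.cosh t) + t * (1 / (Real.cosh t)^2))) t := by
      have h1 : HasDerivAt (fun s : ℝ => s*(Real.sinh s / Real.cosh s))
          (1 * (Real.sinh t / Real.cosh t) + t * (1 / (Real.cosh t)^2)) t :=
        (hasDerivAt_id t).mul hq'
      have h2 := hd_two_sq t
      have h5 := h2.sub (h1.const_mul (2:ℝ))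
      have h6 : (fun s : ℝ => 2*s^2 - 2*(s*(Real.sinh s/Real.cosh s)))
          = (fun s : ℝ => 2*s^2 - 2*s*(Real.sinh s/Real.cosh s)) := by funext u; ring
      rw [← h6]
      exact h5
    rw [hD.deriv]
    have h3 : Real.sinh t / Real.cosh t ≤ t := aux_tanh_le ht.le
    have h4 : t * (1 / (Real.cosh t)^2) ≤ t * 1 := by
      apply mul_le_mul_of_nonneg_left _ ht.le
      rw [div_le_one (by positivity)]
      nlinarith [Real.one_le_cosh t]
    nlinarith

lemma aux_H_at_c {c : ℝ} (hc : 0 < c) :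
    4*(c*Real.cosh c - Real.sinh c)^2 -
      2*(2*c^2 - 2*c*(Real.sinh c/Real.cosh c))*((Real.cosh c)^2 - Real.sinh c*Real.cosh c/c) = 0 := by
  have h1 : Real.cosh c ≠ 0 := (Real.cosh_pos _).ne'
  field_simp
  ring

lemma aux_Hnonneg {c : ℝ} (hc : 0 < c) {s : ℝ} (hs : 0 ≤ s) :
    2*(2*c^2 - 2*c*(Real.sinh c/Real.cosh c))*((Real.cosh s)^2 - Real.sinh c*Real.cosh c/c)
      ≤ 4*(s*Real.cosh s - Real.sinh s)^2 := by
  set T : ℝ := 2*c^2 - 2*c*(Real.sinh c/Real.cosh c) with hT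
  set x : ℝ := Real.sinh c*Real.cosh c/c with hx
  set H : ℝ → ℝ := fun s => 4*(s*Real.cosh s - Real.sinh s)^2 - 2*T*((Real.cosh s)^2 - x) with hH
  have hderiv : ∀ t : ℝ, HasDerivAt H
      (8*(t*Real.cosh t - Real.sinh t)*(t*Real.sinh t) - 2*T*(2*Real.cosh t*Real.sinh t)) t := by
    intro t
    have h1 := hd_scs t
    have h2 : HasDerivAt (fun s : ℝ => 4*(s*Real.cosh s - Real.sinh s)^2)
        (8*(t*Real.cosh t - Real.sinh t)*(t*Real.sinh t)) t := by
      have h := ((h1.pow 2).const_mul (4:ℝ))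
      refine h.congr_deriv ?_
      simp only [Nat.cast_ofNat, pow_one]
      ring
    have h3 : HasDerivAt (fun s : ℝ => 2*T*((Real.cosh s)^2 - x))
        (2*T*(2*Real.cosh t*Real.sinh t)) t := by
      have := ((((Real.hasDerivAt_cosh t).pow 2).sub_const x).const_mul (2*T))
      refine this.congr_deriv ?_; ring
    exact h2.sub h3
  have hcont : Continuous H := by
    apply Continuous.sub
    · fun_prop
    · fun_prop
  -- rewrite derivative in factored form
  have hfact : ∀ t : ℝ,
      8*(t*Real.cosh t - Real.sinh t)*(t*Real.sinh t) - 2*T*(2*Real.cosh t*Real.sinh t)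
      = 4*Real.sinh t*Real.cosh t*((2*t^2 - 2*t*(Real.sinh t/Real.cosh t)) - T) := by
    intro t
    have h1 : Real.cosh t ≠ 0 := (Real.cosh_pos _).ne'
    field_simp
    ring
  have hRc : (2*c^2 - 2*c*(Real.sinh c/Real.cosh c)) = T := rfl
  have hanti : AntitoneOn H (Icc 0 c) := by
    apply antitoneOn_of_deriv_nonpos (convex_Icc 0 c) hcont.continuousOn
    · intro t ht
      exact ((hderiv t).differentiableAt).differentiableWithinAt
    · intro t ht
      rw [interior_Icc] at ht
      rw [(hderiv t).deriv, hfact t]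
      have h1 : (2*t^2 - 2*t*(Real.sinh t/Real.cosh t)) - T ≤ 0 := by
        rw [← hRc]
        have := aux_R_mono (mem_Ici.2 ht.1.le) (mem_Ici.2 (ht.1.le.trans ht.2.le)) ht.2.le
        linarith
      have h2 : 0 ≤ 4*Real.sinh t*Real.cosh t := by
        have := Real.sinh_nonneg_iff.2 ht.1.le
        have := (Real.cosh_pos t).le
        positivity
      exact mul_nonpos_of_nonneg_of_nonpos h2 h1
  have hmono : MonotoneOn H (Ici c) := by
    apply monotoneOn_of_deriv_nonneg (convex_Ici c) hcont.continuousOn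
    · intro t ht
      exact ((hderiv t).differentiableAt).differentiableWithinAt
    · intro t ht
      rw [interior_Ici] at ht
      rw [(hderiv t).deriv, hfact t]
      have h1 : 0 ≤ (2*t^2 - 2*t*(Real.sinh t/Real.cosh t)) - T := by
        rw [← hRc]
        have := aux_R_mono (mem_Ici.2 hc.le) (mem_Ici.2 (hc.le.trans ht.le)) ht.le
        linarith
      have h2 : 0 ≤ 4*Real.sinh t*Real.cosh t := by
        have := Real.sinh_nonneg_iff.2 (hc.le.trans ht.le)
        have := (Real.cosh_pos t).le
        positivity
      positivity
  have hHc : H c = 0 := by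
    rw [hH]
    simpa using aux_H_at_c hc
  have key : 0 ≤ H s := by
    rcases le_total s c with h | h
    · have := hanti (mem_Icc.2 ⟨hs, h⟩) (mem_Icc.2 ⟨hc.le, le_rfl⟩) h
      rw [hHc] at this; linarith
    · have := hmono (mem_Ici.2 le_rfl) (mem_Ici.2 h) h
      rw [hHc] at this; linarith
  rw [hH] at key
  dsimp at key
  linarith


lemma hd_q (t : ℝ) : HasDerivAt (fun s : ℝ => Real.sinh s / Real.cosh s) (1/(Real.cosh t)^2) t := by
  have hq : HasDerivAt (fun s : ℝ => Real.sinh s / Real.cosh s)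
      ((Real.cosh t * Real.cosh t - Real.sinh t * Real.sinh t) / (Real.cosh t)^2) t :=
    (Real.hasDerivAt_sinh t).div (Real.hasDerivAt_cosh t) (Real.cosh_pos _).ne'
  convert hq using 1
  have := Real.cosh_sq_sub_sinh_sq t
  field_simp
  nlinarith [this]

noncomputable def sM (m : ℝ) : ℝ := Real.arsinh (Real.sqrt (Real.exp m - 1))

noncomputable def Phi (m : ℝ) : ℝ := 2*(sM m * Real.cosh (sM m) - Real.sinh (sM m))

lemma sM_nonneg (m : ℝ) : 0 ≤ sM m := Real.arsinh_nonneg_iff.2 (Real.sqrt_nonneg _)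

lemma cosh_sM {m : ℝ} (hm : 0 ≤ m) : Real.cosh (sM m) = Real.exp (m/2) := by
  rw [sM, Real.cosh_arsinh, Real.sq_sqrt (by nlinarith [Real.one_le_exp hm] : (0:ℝ) ≤ Real.exp m - 1)]
  rw [Real.exp_half]
  congr 1
  ring

lemma sinh_sM (m : ℝ) : Real.sinh (sM m) = Real.sqrt (Real.exp m - 1) := Real.sinh_arsinh _

lemma Phi_continuous : Continuous Phi := by
  have h : Continuous sM := Real.continuous_arsinh.comp ((Real.continuous_exp.sub continuous_const).sqrt)
  unfold Phi
  fun_prop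

lemma Phi_nonneg (m : ℝ) : 0 ≤ Phi m := by
  have h : Real.sinh (sM m) ≤ sM m * Real.cosh (sM m) := aux_scs (sM_nonneg m)
  unfold Phi
  linarith

lemma integral_tanh_sq {s : ℝ} :
    ∫ u in (0:ℝ)..s, (Real.sinh u / Real.cosh u)^2 = s - Real.sinh s / Real.cosh s := by
  have hderiv : ∀ u ∈ uIcc (0:ℝ) s, HasDerivAt (fun v : ℝ => v - Real.sinh v / Real.cosh v)
      ((Real.sinh u / Real.cosh u)^2) u := by
    intro u _
    have h := (hasDerivAt_id u).sub (hd_q u)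
    refine h.congr_deriv ?_
    have hc := (Real.cosh_pos u).ne'
    have := Real.cosh_sq_sub_sinh_sq u
    field_simp
    nlinarith [this]
  have hcont : Continuous (fun u : ℝ => (Real.sinh u / Real.cosh u)^2) := cont_q.pow 2
  have := intervalIntegral.integral_eq_sub_of_hasDerivAt hderiv (hcont.intervalIntegrable 0 s)
  simpa using this

lemma integral_A {m : ℝ} (hm : 0 ≤ m) :
    ∫ y in (0:ℝ)..m, Real.sqrt (Real.exp m - Real.exp y) = Phi m := by
  set s := sM m with hs
  have hcoshs : Real.cosh s = Real.exp (m/2) := cosh_sM hm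
  set θ : ℝ → ℝ := fun u => m - 2*Real.log (Real.cosh u) with hθdef
  set θ' : ℝ → ℝ := fun u => -(2*(Real.sinh u/Real.cosh u)) with hθ'def
  have hθd : ∀ u : ℝ, HasDerivAt θ (θ' u) u := by
    intro u
    have h1 : HasDerivAt (fun v : ℝ => Real.log (Real.cosh v)) (Real.sinh u / Real.cosh u) u :=
      (Real.hasDerivAt_cosh u).log (Real.cosh_pos u).ne'
    have h2 := (h1.const_mul (2:ℝ)).const_sub m
    exact h2
  have hθ'cont : Continuous θ' := (continuous_const.mul cont_q).neg
  have hfcont : Continuous (fun y : ℝ => Real.sqrt (Real.exp m - Real.exp y)) := by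
    fun_prop
  have hcov := intervalIntegral.integral_comp_smul_deriv
      (f := θ) (f' := θ') (g := fun y => Real.sqrt (Real.exp m - Real.exp y))
      (a := s) (b := 0)
      (fun u _ => hθd u) hθ'cont.continuousOn hfcont
  have hθs : θ s = 0 := by
    simp only [hθdef, hcoshs, Real.log_exp]
    ring
  have hθ0 : θ 0 = m := by
    simp [hθdef]
  rw [hθs, hθ0] at hcov
  -- LHS of hcov equals -(∫ 0..s); compute integrand on [0, s]
  have hintgr : ∀ u ∈ uIcc (0:ℝ) s,
      θ' u • Real.sqrt (Real.exp m - Real.exp (θ u))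
        = -(2*Real.exp (m/2)) * (Real.sinh u / Real.cosh u)^2 := by
    intro u hu
    have hu0 : 0 ≤ u := by
      rcases hu with ⟨h1, h2⟩
      exact le_trans (min_eq_left (sM_nonneg m)).symm.le h1
    have hcu := Real.cosh_pos u
    have hexpθ : Real.exp (θ u) = Real.exp m / (Real.cosh u)^2 := by
      simp only [hθdef]
      rw [Real.exp_sub]
      congr 1
      rw [show (2:ℝ)*Real.log (Real.cosh u) = Real.log ((Real.cosh u)^2) by
        rw [Real.log_pow]; push_cast; ring]
      exact Real.exp_log (by positivity)
    have hval : Real.exp m - Real.exp (θ u) = Real.exp m * (Real.sinh u / Real.cosh u)^2 := by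
      rw [hexpθ]
      have := Real.cosh_sq_sub_sinh_sq u
      field_simp
      linear_combination this
    rw [hval, Real.sqrt_mul (Real.exp_nonneg m), Real.sqrt_sq (by positivity : 0 ≤ Real.sinh u / Real.cosh u)]
    rw [← Real.exp_half]
    simp only [hθ'def, smul_eq_mul]
    ring
  have hL : (∫ x in (0:ℝ)..s, θ' x • ((fun y => Real.sqrt (Real.exp m - Real.exp y)) ∘ θ) x)
      = -(2*Real.exp (m/2)) * (s - Real.sinh s / Real.cosh s) := by
    have hintgr' : ∀ u ∈ uIcc (0:ℝ) s,
        θ' u • ((fun y => Real.sqrt (Real.exp m - Real.exp y)) ∘ θ) u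
          = -(2*Real.exp (m/2)) * (Real.sinh u / Real.cosh u)^2 := by
      intro u hu
      simpa [Function.comp] using hintgr u hu
    rw [intervalIntegral.integral_congr hintgr']
    rw [intervalIntegral.integral_const_mul, integral_tanh_sq]
  have hsym : (∫ x in s..(0:ℝ), θ' x • ((fun y => Real.sqrt (Real.exp m - Real.exp y)) ∘ θ) x)
      = -(∫ x in (0:ℝ)..s, θ' x • ((fun y => Real.sqrt (Real.exp m - Real.exp y)) ∘ θ) x) :=
    intervalIntegral.integral_symm 0 s
  rw [hsym, hL] at hcov
  rw [← hcov]
  unfold Phi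
  rw [← hs, hcoshs]
  have h1 : Real.sinh s = Real.exp (m/2) * (Real.sinh s / Real.cosh s) := by
    rw [hcoshs] at *
    field_simp
  rw [h1]
  field_simp

lemma Phi_def (m : ℝ) : Phi m = 2*(sM m * Real.cosh (sM m) - Real.sinh (sM m)) := rfl
lemma primitive_hasDerivAt {h : ℝ → ℝ} (hc : Continuous h) (t : ℝ) :
    HasDerivAt (fun u => ∫ s in (0:ℝ)..u, h s) (h t) t :=
  intervalIntegral.integral_hasDerivAt_right (hc.intervalIntegrable 0 t)
    (hc.stronglyMeasurableAtFilter volume (nhds t)) hc.continuousAt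

lemma star_cont {h : ℝ → ℝ} (hc : Continuous h) {ν : ℝ} (hν : 0 ≤ ν) {m : ℝ}
    (hm : IsGreatest ((fun t => ∫ s in (0:ℝ)..t, h s) '' Icc (0:ℝ) 1) m) :
    ν * Phi m - ν^2/2 * (Real.exp m - ∫ t in (0:ℝ)..1, Real.exp (∫ s in (0:ℝ)..t, h s))
      ≤ (1/2) * ∫ t in (0:ℝ)..1, (h t)^2 := by
  set φ : ℝ → ℝ := fun u => ∫ s in (0:ℝ)..u, h s with hφdef
  have hφd : ∀ t, HasDerivAt φ (h t) t := primitive_hasDerivAt hc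
  have hφcont : Continuous φ := continuous_iff_continuousAt.2 fun t => (hφd t).continuousAt
  obtain ⟨t₀, ht₀, hφt₀⟩ : ∃ t₀ ∈ Icc (0:ℝ) 1, φ t₀ = m := by
    obtain ⟨t₀, ht₀, h₀⟩ := hm.1
    exact ⟨t₀, ht₀, h₀⟩
  have hub : ∀ t ∈ Icc (0:ℝ) 1, φ t ≤ m := fun t ht => hm.2 ⟨t, ht, rfl⟩
  have hm0 : 0 ≤ m := by
    have := hub 0 (by norm_num)
    simpa [hφdef, intervalIntegral.integral_same] using this
  set q : ℝ → ℝ := fun y => ν * Real.sqrt (Real.exp m - Real.exp y) with hqdef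
  have hqc : Continuous q := by fun_prop
  set Q : ℝ → ℝ := fun y => ∫ r in (0:ℝ)..y, q r with hQdef
  have hQd : ∀ y, HasDerivAt Q (q y) y := primitive_hasDerivAt hqc
  have hFd : ∀ t, HasDerivAt (fun u => Q (φ u)) (q (φ t) * h t) t := by
    intro t
    have := (hQd (φ t)).comp t (hφd t)
    exact this
  have hqφc : Continuous fun t => q (φ t) := hqc.comp hφcont
  have hFTC : (∫ t in (0:ℝ)..t₀, q (φ t) * h t) = Q m := by
    have := intervalIntegral.integral_eq_sub_of_hasDerivAt
      (f := fun u => Q (φ u)) (f' := fun t => q (φ t) * h t)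
      (fun t _ => hFd t) ((hqφc.mul hc).intervalIntegrable 0 t₀)
    rw [this]
    show Q (φ t₀) - Q (φ 0) = Q m
    have hφ0 : φ 0 = 0 := intervalIntegral.integral_same
    have hQ0 : Q 0 = 0 := intervalIntegral.integral_same
    rw [hφt₀, hφ0, hQ0, sub_zero]
  have hQm : Q m = ν * Phi m := by
    rw [hQdef]
    simp only [hqdef]
    rw [intervalIntegral.integral_const_mul, integral_A hm0]
  -- pointwise bounds
  have ineq1 : (∫ t in (0:ℝ)..t₀, (q (φ t) * h t - (q (φ t))^2/2))
      ≤ ∫ t in (0:ℝ)..t₀, (1/2) * (h t)^2 := by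
    apply intervalIntegral.integral_mono_on ht₀.1
    · exact ((hqφc.mul hc).sub ((hqφc.pow 2).div_const 2)).intervalIntegrable 0 t₀
    · exact ((continuous_const.mul (hc.pow 2))).intervalIntegrable 0 t₀
    · intro t _
      nlinarith [sq_nonneg (h t - q (φ t))]
  have ineq2 : (∫ t in t₀..1, -((q (φ t))^2/2))
      ≤ ∫ t in t₀..1, (1/2) * (h t)^2 := by
    apply intervalIntegral.integral_mono_on ht₀.2
    · exact (((hqφc.pow 2).div_const 2).neg).intervalIntegrable t₀ 1
    · exact ((continuous_const.mul (hc.pow 2))).intervalIntegrable t₀ 1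
    · intro t _
      nlinarith [sq_nonneg (h t), sq_nonneg (q (φ t))]
  -- split integrals
  have hsplit : (∫ t in (0:ℝ)..t₀, (1/2) * (h t)^2) + (∫ t in t₀..1, (1/2) * (h t)^2)
      = (1/2) * ∫ t in (0:ℝ)..1, (h t)^2 := by
    rw [← intervalIntegral.integral_const_mul]
    exact intervalIntegral.integral_add_adjacent_intervals
      ((continuous_const.mul (hc.pow 2)).intervalIntegrable 0 t₀)
      ((continuous_const.mul (hc.pow 2)).intervalIntegrable t₀ 1)
  have hsplitL : (∫ t in (0:ℝ)..t₀, (q (φ t) * h t - (q (φ t))^2/2)) + (∫ t in t₀..1, -((q (φ t))^2/2))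
      = Q m - (1/2) * ∫ t in (0:ℝ)..1, (q (φ t))^2 := by
    have e1 : (∫ t in (0:ℝ)..t₀, (q (φ t) * h t - (q (φ t))^2/2))
        = (∫ t in (0:ℝ)..t₀, q (φ t) * h t) - ∫ t in (0:ℝ)..t₀, (q (φ t))^2/2 := by
      apply intervalIntegral.integral_sub
      · exact (hqφc.mul hc).intervalIntegrable 0 t₀
      · exact ((hqφc.pow 2).div_const 2).intervalIntegrable 0 t₀
    have e2 : (∫ t in t₀..1, -((q (φ t))^2/2)) = -∫ t in t₀..1, (q (φ t))^2/2 :=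
      intervalIntegral.integral_neg
    have e3 : (∫ t in (0:ℝ)..t₀, (q (φ t))^2/2) + (∫ t in t₀..1, (q (φ t))^2/2)
        = ∫ t in (0:ℝ)..1, (q (φ t))^2/2 :=
      intervalIntegral.integral_add_adjacent_intervals
        (((hqφc.pow 2).div_const 2).intervalIntegrable 0 t₀)
        (((hqφc.pow 2).div_const 2).intervalIntegrable t₀ 1)
    have e4 : (∫ t in (0:ℝ)..1, (q (φ t))^2/2) = (1/2) * ∫ t in (0:ℝ)..1, (q (φ t))^2 := by
      rw [← intervalIntegral.integral_const_mul]
      congr 1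
      funext t
      ring
    rw [e1, e2, hFTC]
    rw [e4] at e3
    linarith
  -- value of ∫ q(φ)²
  have hqsq : (∫ t in (0:ℝ)..1, (q (φ t))^2)
      = ν^2 * (Real.exp m - ∫ t in (0:ℝ)..1, Real.exp (φ t)) := by
    have hcongr : ∀ t ∈ uIcc (0:ℝ) 1, (q (φ t))^2 = ν^2 * (Real.exp m - Real.exp (φ t)) := by
      intro t ht
      rw [uIcc_of_le (by norm_num : (0:ℝ) ≤ 1)] at ht
      have hle : Real.exp (φ t) ≤ Real.exp m := Real.exp_le_exp.2 (hub t ht)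
      simp only [hqdef]
      rw [mul_pow, Real.sq_sqrt (by linarith)]
    rw [intervalIntegral.integral_congr hcongr]
    rw [intervalIntegral.integral_const_mul]
    congr 1
    have : (∫ t in (0:ℝ)..1, (Real.exp m - Real.exp (φ t)))
        = (∫ t in (0:ℝ)..1, Real.exp m) - ∫ t in (0:ℝ)..1, Real.exp (φ t) := by
      apply intervalIntegral.integral_sub
      · exact (continuous_const).intervalIntegrable 0 1
      · exact (Real.continuous_exp.comp hφcont).intervalIntegrable 0 1
    rw [this]
    simp
  have hX : (∫ t in (0:ℝ)..1, Real.exp (∫ s in (0:ℝ)..t, h s)) = ∫ t in (0:ℝ)..1, Real.exp (φ t) := rfl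
  rw [hX]
  have := le_trans (le_of_eq hsplitL.symm) (le_trans (add_le_add ineq1 ineq2) (le_of_eq hsplit))
  rw [hQm, hqsq] at this
  linarith


lemma sq_integral_le_of_eLpNorm_le {u : ℝ → ℝ} (hu : MeasureTheory.MemLp u 2 volume)
    {ε : ℝ} (hε : 0 ≤ ε) (hle : MeasureTheory.eLpNorm u 2 volume ≤ ENNReal.ofReal ε) :
    (∫ x, (u x)^2) ≤ ε^2 := by
  set X : ℝ≥0∞ := ∫⁻ x, ((‖u x‖₊ : ℝ≥0∞) ^ (2:ℝ)) with hX
  have h2 : MeasureTheory.eLpNorm u 2 volume = X ^ (1/(2:ℝ)) := by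
    rw [MeasureTheory.eLpNorm_eq_lintegral_rpow_enorm_toReal two_ne_zero ENNReal.ofNat_ne_top]
    norm_num [hX, enorm_eq_nnnorm]
  rw [h2] at hle
  have h3 : X ≤ (ENNReal.ofReal ε) ^ (2:ℝ) := by
    have h5 := ENNReal.rpow_le_rpow hle (by norm_num : (0:ℝ) ≤ 2)
    rwa [← ENNReal.rpow_mul, one_div, inv_mul_cancel₀ (by norm_num : (2:ℝ) ≠ 0),
      ENNReal.rpow_one] at h5
  have hpt : ∀ x : ℝ, ((‖u x‖₊ : ℝ≥0∞) ^ (2:ℝ)) = ENNReal.ofReal (u x ^ 2) := by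
    intro x
    rw [← enorm_eq_nnnorm, Real.enorm_eq_ofReal_abs, ENNReal.ofReal_rpow_of_nonneg (abs_nonneg _)
      (by norm_num : (0:ℝ) ≤ 2)]
    congr 1
    rw [show (2:ℝ) = ((2:ℕ):ℝ) by norm_num, Real.rpow_natCast, sq_abs]
  have h4 : (∫ x, (u x)^2) = X.toReal := by
    rw [MeasureTheory.integral_eq_lintegral_of_nonneg_ae
      (Filter.Eventually.of_forall fun x => sq_nonneg (u x))
      ((hu.aestronglyMeasurable.aemeasurable.pow_const 2).aestronglyMeasurable)]
    congr 1
    exact (lintegral_congr fun x => (hpt x).symm)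
  rw [h4]
  calc X.toReal ≤ ((ENNReal.ofReal ε) ^ (2:ℝ)).toReal := by
        apply ENNReal.toReal_mono _ h3
        exact (ENNReal.rpow_lt_top_of_nonneg (by norm_num) ENNReal.ofReal_ne_top).ne
    _ = ε^2 := by
        rw [ENNReal.ofReal_rpow_of_nonneg hε (by norm_num : (0:ℝ) ≤ 2),
          ENNReal.toReal_ofReal (Real.rpow_nonneg hε 2),
          show (2:ℝ) = ((2:ℕ):ℝ) by norm_num, Real.rpow_natCast]


lemma cs_interval {v w : ℝ → ℝ}
    (hv : IntervalIntegrable v volume 0 1) (hv2 : IntervalIntegrable (fun t => (v t)^2) volume 0 1)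
    (hw : IntervalIntegrable w volume 0 1) (hw2 : IntervalIntegrable (fun t => (w t)^2) volume 0 1) :
    (∫ t in (0:ℝ)..1, |v t| * |w t|)
      ≤ Real.sqrt (∫ t in (0:ℝ)..1, (v t)^2) * Real.sqrt (∫ t in (0:ℝ)..1, (w t)^2) := by
  set μ := volume.restrict (Ioc (0:ℝ) 1) with hμ
  have hvI : IntegrableOn v (Ioc (0:ℝ) 1) volume :=
    (intervalIntegrable_iff_integrableOn_Ioc_of_le (by norm_num)).1 hv
  have hwI : IntegrableOn w (Ioc (0:ℝ) 1) volume :=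
    (intervalIntegrable_iff_integrableOn_Ioc_of_le (by norm_num)).1 hw
  have hv2I : IntegrableOn (fun t => (v t)^2) (Ioc (0:ℝ) 1) volume :=
    (intervalIntegrable_iff_integrableOn_Ioc_of_le (by norm_num)).1 hv2
  have hw2I : IntegrableOn (fun t => (w t)^2) (Ioc (0:ℝ) 1) volume :=
    (intervalIntegrable_iff_integrableOn_Ioc_of_le (by norm_num)).1 hw2
  have hmv : AEStronglyMeasurable (fun t => |v t|) μ := by
    simpa [Real.norm_eq_abs] using hvI.aestronglyMeasurable.norm
  have hmw : AEStronglyMeasurable (fun t => |w t|) μ := by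
    simpa [Real.norm_eq_abs] using hwI.aestronglyMeasurable.norm
  have hv2μ : Integrable (fun t => |v t|^2) μ := by
    simpa [sq_abs] using hv2I.integrable
  have hw2μ : Integrable (fun t => |w t|^2) μ := by
    simpa [sq_abs] using hw2I.integrable
  have hvmem : MemLp (fun t => |v t|) 2 μ := (memLp_two_iff_integrable_sq hmv).2 hv2μ
  have hwmem : MemLp (fun t => |w t|) 2 μ := (memLp_two_iff_integrable_sq hmw).2 hw2μ
  have hpq : Real.HolderConjugate 2 2 := Real.HolderConjugate.two_two
  have h2 : ENNReal.ofReal (2:ℝ) = 2 := by norm_num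
  have key := MeasureTheory.integral_mul_le_Lp_mul_Lq_of_nonneg hpq
    (Filter.Eventually.of_forall fun t => abs_nonneg (v t))
    (Filter.Eventually.of_forall fun t => abs_nonneg (w t))
    (h2 ▸ hvmem) (h2 ▸ hwmem)
  have hrw : ∀ f : ℝ → ℝ, (∫ a, |f a| ^ (2:ℝ) ∂μ) = ∫ a, (f a)^2 ∂μ := by
    intro f
    apply integral_congr_ae
    apply Filter.Eventually.of_forall
    intro a
    show |f a| ^ (2:ℝ) = (f a)^2
    rw [show (2:ℝ) = ((2:ℕ):ℝ) by norm_num, Real.rpow_natCast, sq_abs]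
  rw [hrw v, hrw w] at key
  have hsq : ∀ r : ℝ, r ^ (1/(2:ℝ)) = Real.sqrt r := fun r => (Real.sqrt_eq_rpow r).symm
  rw [hsq, hsq] at key
  have e1 : (∫ t in (0:ℝ)..1, |v t| * |w t|) = ∫ a, |v a| * |w a| ∂μ :=
    intervalIntegral.integral_of_le (by norm_num)
  have e2 : (∫ t in (0:ℝ)..1, (v t)^2) = ∫ a, (v a)^2 ∂μ :=
    intervalIntegral.integral_of_le (by norm_num)
  have e3 : (∫ t in (0:ℝ)..1, (w t)^2) = ∫ a, (w a)^2 ∂μ :=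
    intervalIntegral.integral_of_le (by norm_num)
  rw [e1, e2, e3]
  exact key

lemma cs_interval' {v w : ℝ → ℝ}
    (hv : IntervalIntegrable v volume 0 1) (hv2 : IntervalIntegrable (fun t => (v t)^2) volume 0 1)
    (hw : IntervalIntegrable w volume 0 1) (hw2 : IntervalIntegrable (fun t => (w t)^2) volume 0 1) :
    |∫ t in (0:ℝ)..1, v t * w t|
      ≤ Real.sqrt (∫ t in (0:ℝ)..1, (v t)^2) * Real.sqrt (∫ t in (0:ℝ)..1, (w t)^2) := by
  calc |∫ t in (0:ℝ)..1, v t * w t| ≤ ∫ t in (0:ℝ)..1, |v t * w t| :=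
        intervalIntegral.abs_integral_le_integral_abs (by norm_num)
    _ = ∫ t in (0:ℝ)..1, |v t| * |w t| := by
        congr 1; funext t; exact abs_mul _ _
    _ ≤ _ := cs_interval hv hv2 hw hw2

lemma approx_cont {g : ℝ → ℝ} (h1 : IntervalIntegrable g volume 0 1)
    (h2 : IntervalIntegrable (fun t => (g t)^2) volume 0 1) {ε : ℝ} (hε : 0 < ε) :
    ∃ h : ℝ → ℝ, Continuous h ∧ (∫ t in (0:ℝ)..1, (g t - h t)^2) ≤ ε^2 := by
  set G := (Ioc (0:ℝ) 1).indicator g with hGdef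
  have hgmeas : AEStronglyMeasurable g (volume.restrict (Ioc (0:ℝ) 1)) :=
    ((intervalIntegrable_iff_integrableOn_Ioc_of_le (by norm_num)).1 h1).aestronglyMeasurable
  have hGmeas : AEStronglyMeasurable G volume :=
    (aestronglyMeasurable_indicator_iff measurableSet_Ioc).2 hgmeas
  have hG2 : Integrable (fun x => (G x)^2) volume := by
    have : (fun x => (G x)^2) = (Ioc (0:ℝ) 1).indicator (fun x => (g x)^2) := by
      funext x
      by_cases hx : x ∈ Ioc (0:ℝ) 1
      · simp [hGdef, Set.indicator_of_mem hx]
      · simp [hGdef, Set.indicator_of_notMem hx]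
    rw [this, integrable_indicator_iff measurableSet_Ioc]
    exact (intervalIntegrable_iff_integrableOn_Ioc_of_le (by norm_num)).1 h2
  have hGmem : MemLp G 2 volume := (memLp_two_iff_integrable_sq hGmeas).2 hG2
  obtain ⟨h, hsupp, hclose, hcont, hhmem⟩ :=
    hGmem.exists_hasCompactSupport_eLpNorm_sub_le ENNReal.ofNat_ne_top
      (ε := ENNReal.ofReal ε) (ENNReal.ofReal_pos.2 hε).ne'
  have humem : MemLp (G - h) 2 volume := hGmem.sub hhmem
  have hgl := sq_integral_le_of_eLpNorm_le humem hε.le hclose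
  refine ⟨h, hcont, ?_⟩
  have hset : (∫ t in (0:ℝ)..1, (g t - h t)^2) = ∫ t in Ioc (0:ℝ) 1, ((G - h) t)^2 ∂volume := by
    rw [intervalIntegral.integral_of_le (by norm_num)]
    apply setIntegral_congr_fun measurableSet_Ioc
    intro x hx
    simp [hGdef, Set.indicator_of_mem hx, Pi.sub_apply]
  rw [hset]
  calc (∫ t in Ioc (0:ℝ) 1, ((G - h) t)^2 ∂volume) ≤ ∫ t, ((G - h) t)^2 :=
        setIntegral_le_integral humem.integrable_sq
          (Filter.Eventually.of_forall fun t => sq_nonneg _)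
    _ ≤ ε^2 := hgl


lemma exp_diff_le {a b c : ℝ} (ha : a ≤ c) (hb : b ≤ c) :
    |Real.exp a - Real.exp b| ≤ Real.exp c * |a - b| := by
  wlog hab : b ≤ a generalizing a b
  · rw [abs_sub_comm (Real.exp a), abs_sub_comm a]
    exact this hb ha (le_of_not_ge hab)
  rw [abs_of_nonneg (sub_nonneg.2 (Real.exp_le_exp.2 hab)), abs_of_nonneg (sub_nonneg.2 hab)]
  have key : Real.exp a - Real.exp b ≤ Real.exp a * (a - b) := by
    have h1 : 1 - (a - b) ≤ Real.exp (-(a-b)) := by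
      have := Real.add_one_le_exp (-(a-b))
      linarith
    have h2 := mul_le_mul_of_nonneg_left h1 (Real.exp_pos a).le
    rw [← Real.exp_add] at h2
    have h3 : a + -(a - b) = b := by ring
    rw [h3] at h2
    nlinarith [Real.exp_pos a]
  calc Real.exp a - Real.exp b ≤ Real.exp a * (a - b) := key
    _ ≤ Real.exp c * (a - b) := by
        apply mul_le_mul_of_nonneg_right (Real.exp_le_exp.2 ha) (sub_nonneg.2 hab)

lemma primitive_continuousOn {g : ℝ → ℝ} (h1 : IntervalIntegrable g volume 0 1) :
    ContinuousOn (fun t => ∫ s in (0:ℝ)..t, g s) (Icc (0:ℝ) 1) := by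
  have := intervalIntegral.continuousOn_primitive_interval'
    (a := 0) (b₁ := 0) (b₂ := 1) h1 left_mem_uIcc
  rwa [uIcc_of_le (by norm_num : (0:ℝ) ≤ 1)] at this

lemma isGreatest_primitive {g : ℝ → ℝ} (h1 : IntervalIntegrable g volume 0 1) :
    IsGreatest ((fun t => ∫ s in (0:ℝ)..t, g s) '' Icc (0:ℝ) 1)
      (sSup ((fun t => ∫ s in (0:ℝ)..t, g s) '' Icc (0:ℝ) 1)) := by
  have hcomp : IsCompact ((fun t => ∫ s in (0:ℝ)..t, g s) '' Icc (0:ℝ) 1) :=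
    isCompact_Icc.image_of_continuousOn (primitive_continuousOn h1)
  exact hcomp.isGreatest_sSup ((nonempty_Icc.2 (by norm_num)).image _)

lemma star {g : ℝ → ℝ} (h1 : IntervalIntegrable g volume 0 1)
    (h2 : IntervalIntegrable (fun t => (g t)^2) volume 0 1) {ν : ℝ} (hν : 0 ≤ ν) :
    ν * Phi (sSup ((fun t => ∫ s in (0:ℝ)..t, g s) '' Icc (0:ℝ) 1))
      - ν^2/2 * (Real.exp (sSup ((fun t => ∫ s in (0:ℝ)..t, g s) '' Icc (0:ℝ) 1))
          - ∫ t in (0:ℝ)..1, Real.exp (∫ s in (0:ℝ)..t, g s))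
      ≤ (1/2) * ∫ t in (0:ℝ)..1, (g t)^2 := by
  set φ : ℝ → ℝ := fun t => ∫ s in (0:ℝ)..t, g s with hφdef
  set m : ℝ := sSup (φ '' Icc (0:ℝ) 1) with hmdef
  set X : ℝ := ∫ t in (0:ℝ)..1, Real.exp (φ t) with hXdef
  set E : ℝ := ∫ t in (0:ℝ)..1, (g t)^2 with hEdef
  set a : ℝ := Real.sqrt E with hadef
  have hIG : IsGreatest (φ '' Icc (0:ℝ) 1) m := isGreatest_primitive h1
  have hub : ∀ t ∈ Icc (0:ℝ) 1, φ t ≤ m := fun t ht => hIG.2 ⟨t, ht, rfl⟩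
  have hφcont : ContinuousOn φ (Icc (0:ℝ) 1) := primitive_continuousOn h1
  set ε : ℕ → ℝ := fun n => 1/(n+1) with hεdef
  have hεpos : ∀ n, 0 < ε n := fun n => by positivity
  have hεle1 : ∀ n, ε n ≤ 1 := by
    intro n
    have hn : (0:ℝ) ≤ n := Nat.cast_nonneg n
    rw [hεdef]
    rw [div_le_one (by positivity)]
    linarith
  choose hseq hcont hclose using fun n => approx_cont h1 h2 (hεpos n)
  set φn : ℕ → ℝ → ℝ := fun n t => ∫ s in (0:ℝ)..t, hseq n s with hφndef
  set M : ℕ → ℝ := fun n => sSup (φn n '' Icc (0:ℝ) 1) with hMdef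
  set Xn : ℕ → ℝ := fun n => ∫ t in (0:ℝ)..1, Real.exp (φn n t) with hXndef
  -- integrability of u n = g - h n and facts
  have hhint : ∀ n, IntervalIntegrable (hseq n) volume 0 1 :=
    fun n => (hcont n).intervalIntegrable 0 1
  have huint : ∀ n, IntervalIntegrable (fun t => g t - hseq n t) volume 0 1 :=
    fun n => h1.sub (hhint n)
  have hghint : ∀ n, IntervalIntegrable (fun t => hseq n t * g t) volume 0 1 :=
    fun n => h1.continuousOn_mul (hcont n).continuousOn
  have hu2int : ∀ n, IntervalIntegrable (fun t => (g t - hseq n t)^2) volume 0 1 := by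
    intro n
    have e : (fun t => (g t - hseq n t)^2)
        = fun t => ((g t)^2 - (2*hseq n t) * g t) + (hseq n t)^2 := by
      funext t; ring
    rw [e]
    exact (h2.sub (h1.continuousOn_mul (by fun_prop))).add
      (((hcont n).pow 2).intervalIntegrable 0 1)
  -- primitive closeness
  have hprim : ∀ n, ∀ t ∈ Icc (0:ℝ) 1, |φ t - φn n t| ≤ ε n := by
    intro n t ht
    have hsub : uIcc (0:ℝ) t ⊆ uIcc (0:ℝ) 1 :=
      uIcc_subset_uIcc left_mem_uIcc (by rw [uIcc_of_le (by norm_num : (0:ℝ) ≤ 1)]; exact ht)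
    have hgt : IntervalIntegrable g volume 0 t := h1.mono_set hsub
    have hht : IntervalIntegrable (hseq n) volume 0 t := (hcont n).intervalIntegrable 0 t
    have e1 : φ t - φn n t = ∫ s in (0:ℝ)..t, (g s - hseq n s) :=
      (intervalIntegral.integral_sub hgt hht).symm
    rw [e1]
    calc |∫ s in (0:ℝ)..t, (g s - hseq n s)| ≤ ∫ s in (0:ℝ)..t, |g s - hseq n s| :=
          intervalIntegral.abs_integral_le_integral_abs ht.1
      _ ≤ ∫ s in (0:ℝ)..1, |g s - hseq n s| := by
          apply intervalIntegral.integral_mono_interval le_rfl ht.1 ht.2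
          · exact Filter.Eventually.of_forall fun s => abs_nonneg _
          · exact (huint n).abs
      _ = ∫ s in (0:ℝ)..1, |g s - hseq n s| * |(1:ℝ)| := by simp
      _ ≤ Real.sqrt (∫ s in (0:ℝ)..1, (g s - hseq n s)^2)
            * Real.sqrt (∫ s in (0:ℝ)..1, ((1:ℝ))^2) := by
          have := cs_interval (huint n) (hu2int n)
            ((continuous_const : Continuous fun _ : ℝ => (1:ℝ)).intervalIntegrable 0 1)
            ((continuous_const.pow 2).intervalIntegrable 0 1)
          calc (∫ s in (0:ℝ)..1, |g s - hseq n s| * |(1:ℝ)|)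
              = ∫ s in (0:ℝ)..1, |(fun t => g t - hseq n t) s| * |(1:ℝ)| := rfl
            _ ≤ _ := this
      _ ≤ ε n := by
          have h1' : (∫ s in (0:ℝ)..1, ((1:ℝ))^2) = 1 := by simp
          rw [h1']
          rw [Real.sqrt_one, mul_one]
          calc Real.sqrt (∫ s in (0:ℝ)..1, (g s - hseq n s)^2)
              ≤ Real.sqrt ((ε n)^2) := Real.sqrt_le_sqrt (hclose n)
            _ = ε n := Real.sqrt_sq (hεpos n).le
  -- closeness of sups
  have hMclose : ∀ n, |M n - m| ≤ ε n := by
    intro n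
    have hIGn : IsGreatest (φn n '' Icc (0:ℝ) 1) (M n) := isGreatest_primitive (hhint n)
    have hubn : ∀ t ∈ Icc (0:ℝ) 1, φn n t ≤ M n := fun t ht => hIGn.2 ⟨t, ht, rfl⟩
    rw [abs_le]
    constructor
    · obtain ⟨t, ht, hφt⟩ := hIG.1
      have h4 := hprim n t ht
      have h3 := hubn t ht
      rw [abs_le] at h4
      rw [← hφt]
      linarith [h4.2, h3]
    · obtain ⟨t, ht, hφnt⟩ := hIGn.1
      have h4 := hprim n t ht
      have h3 := hub t ht
      rw [abs_le] at h4
      rw [← hφnt]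
      linarith [h4.1, h3]
  -- closeness of X
  have hXclose : ∀ n, |Xn n - X| ≤ Real.exp (m+1) * ε n := by
    intro n
    have hφnc : Continuous (φn n) := by
      have : ∀ t : ℝ, HasDerivAt (φn n) (hseq n t) t := fun t =>
        intervalIntegral.integral_hasDerivAt_right ((hcont n).intervalIntegrable 0 t)
          ((hcont n).stronglyMeasurableAtFilter volume (nhds t)) (hcont n).continuousAt
      exact continuous_iff_continuousAt.2 fun t => (this t).continuousAt
    have hi1 : IntervalIntegrable (fun t => Real.exp (φn n t)) volume 0 1 :=
      (Real.continuous_exp.comp hφnc).intervalIntegrable 0 1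
    have hi2 : IntervalIntegrable (fun t => Real.exp (φ t)) volume 0 1 := by
      apply ContinuousOn.intervalIntegrable
      rw [uIcc_of_le (by norm_num : (0:ℝ) ≤ 1)]
      exact Real.continuous_exp.comp_continuousOn hφcont
    have e1 : Xn n - X = ∫ t in (0:ℝ)..1, (Real.exp (φn n t) - Real.exp (φ t)) :=
      (intervalIntegral.integral_sub hi1 hi2).symm
    rw [e1]
    calc |∫ t in (0:ℝ)..1, (Real.exp (φn n t) - Real.exp (φ t))|
        ≤ ∫ t in (0:ℝ)..1, |Real.exp (φn n t) - Real.exp (φ t)| :=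
          intervalIntegral.abs_integral_le_integral_abs (by norm_num)
      _ ≤ ∫ t in (0:ℝ)..1, Real.exp (m+1) * ε n := by
          apply intervalIntegral.integral_mono_on (by norm_num)
          · exact (hi1.sub hi2).abs
          · exact intervalIntegrable_const
          · intro t ht
            have hp := hprim n t ht
            have hb1 : φ t ≤ m + 1 := le_trans (hub t ht) (by linarith)
            have hb2 : φn n t ≤ m + 1 := by
              rw [abs_le] at hp
              have := hub t ht
              have := hεle1 n
              linarith [hp.1]
            calc |Real.exp (φn n t) - Real.exp (φ t)|
                ≤ Real.exp (m+1) * |φn n t - φ t| := exp_diff_le hb2 hb1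
              _ ≤ Real.exp (m+1) * ε n := by
                  apply mul_le_mul_of_nonneg_left _ (Real.exp_pos _).le
                  rw [abs_sub_comm]
                  exact hp
      _ = Real.exp (m+1) * ε n := by
          rw [intervalIntegral.integral_const]
          simp
  -- energy bound
  have hEn : ∀ n, (1/2) * (∫ t in (0:ℝ)..1, (hseq n t)^2)
      ≤ (1/2) * E + a * ε n + (ε n)^2/2 := by
    intro n
    have hgu : |∫ t in (0:ℝ)..1, g t * (g t - hseq n t)| ≤ a * ε n := by
      have := cs_interval' h1 h2 (huint n) (hu2int n)
      calc |∫ t in (0:ℝ)..1, g t * (g t - hseq n t)| ≤ a *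
            Real.sqrt (∫ t in (0:ℝ)..1, (g t - hseq n t)^2) := this
        _ ≤ a * ε n := by
            apply mul_le_mul_of_nonneg_left _ (Real.sqrt_nonneg _)
            calc Real.sqrt (∫ t in (0:ℝ)..1, (g t - hseq n t)^2)
                ≤ Real.sqrt ((ε n)^2) := Real.sqrt_le_sqrt (hclose n)
              _ = ε n := Real.sqrt_sq (hεpos n).le
    have hgu_int : IntervalIntegrable (fun t => g t * (g t - hseq n t)) volume 0 1 := by
      have e : (fun t => g t * (g t - hseq n t)) = fun t => (g t)^2 - hseq n t * g t := by
        funext t; ring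
      rw [e]
      exact h2.sub (hghint n)
    have esplit : (∫ t in (0:ℝ)..1, (hseq n t)^2)
        = E - 2 * (∫ t in (0:ℝ)..1, g t * (g t - hseq n t))
          + ∫ t in (0:ℝ)..1, (g t - hseq n t)^2 := by
      have e : (fun t => (hseq n t)^2)
          = fun t => ((g t)^2 - 2 * (g t * (g t - hseq n t))) + (g t - hseq n t)^2 := by
        funext t; ring
      rw [hEdef, e]
      rw [intervalIntegral.integral_add (h2.sub (hgu_int.const_mul 2)) (hu2int n)]
      rw [intervalIntegral.integral_sub h2 (hgu_int.const_mul 2)]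
      rw [intervalIntegral.integral_const_mul]
    rw [esplit]
    have h3 := hclose n
    have h4 := abs_le.1 hgu
    linarith [h4.1, h4.2]
  -- apply star_cont for each n
  have hkey : ∀ n, ν * Phi (M n) - ν^2/2 * (Real.exp (M n) - Xn n)
      ≤ (1/2) * E + a * ε n + (ε n)^2/2 := by
    intro n
    have hIGn : IsGreatest ((fun t => ∫ s in (0:ℝ)..t, hseq n s) '' Icc (0:ℝ) 1) (M n) :=
      isGreatest_primitive (hhint n)
    have := star_cont (hcont n) hν hIGn
    exact le_trans this (hEn n)
  -- limits
  have hεtend : Filter.Tendsto ε Filter.atTop (nhds 0) := by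
    rw [hεdef]
    exact tendsto_one_div_add_atTop_nhds_zero_nat
  have hMtend : Filter.Tendsto M Filter.atTop (nhds m) := by
    apply tendsto_of_tendsto_of_tendsto_of_le_of_le
      (g := fun n => m - ε n) (h := fun n => m + ε n)
    · have h9 := (tendsto_const_nhds (x := m) (f := Filter.atTop (α := ℕ))).sub hεtend
      rwa [sub_zero] at h9
    · have h9 := (tendsto_const_nhds (x := m) (f := Filter.atTop (α := ℕ))).add hεtend
      rwa [add_zero] at h9
    · intro n
      have h9 := abs_le.1 (hMclose n)
      show m - ε n ≤ M n
      linarith [h9.1]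
    · intro n
      have h9 := abs_le.1 (hMclose n)
      show M n ≤ m + ε n
      linarith [h9.2]
  have hXtend : Filter.Tendsto Xn Filter.atTop (nhds X) := by
    have hC : Filter.Tendsto (fun n => Real.exp (m+1) * ε n) Filter.atTop (nhds 0) := by
      have h9 := hεtend.const_mul (Real.exp (m+1))
      rwa [mul_zero] at h9
    apply tendsto_of_tendsto_of_tendsto_of_le_of_le
      (g := fun n => X - Real.exp (m+1) * ε n) (h := fun n => X + Real.exp (m+1) * ε n)
    · have h9 := (tendsto_const_nhds (x := X) (f := Filter.atTop (α := ℕ))).sub hC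
      rwa [sub_zero] at h9
    · have h9 := (tendsto_const_nhds (x := X) (f := Filter.atTop (α := ℕ))).add hC
      rwa [add_zero] at h9
    · intro n
      have h9 := abs_le.1 (hXclose n)
      show X - Real.exp (m+1) * ε n ≤ Xn n
      linarith [h9.1]
    · intro n
      have h9 := abs_le.1 (hXclose n)
      show Xn n ≤ X + Real.exp (m+1) * ε n
      linarith [h9.2]
  have hLHS : Filter.Tendsto (fun n => ν * Phi (M n) - ν^2/2 * (Real.exp (M n) - Xn n))
      Filter.atTop (nhds (ν * Phi m - ν^2/2 * (Real.exp m - X))) := by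
    have h5 : Filter.Tendsto (fun n => Phi (M n)) Filter.atTop (nhds (Phi m)) :=
      (Phi_continuous.tendsto m).comp hMtend
    have h6 : Filter.Tendsto (fun n => Real.exp (M n)) Filter.atTop (nhds (Real.exp m)) :=
      (Real.continuous_exp.tendsto m).comp hMtend
    exact (h5.const_mul ν).sub ((h6.sub hXtend).const_mul (ν^2/2))
  have hRHS : Filter.Tendsto (fun n => (1/2) * E + a * ε n + (ε n)^2/2)
      Filter.atTop (nhds ((1/2) * E)) := by
    have h7 : Filter.Tendsto (fun n => a * ε n) Filter.atTop (nhds 0) := by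
      have h9 := hεtend.const_mul a
      rwa [mul_zero] at h9
    have h8 : Filter.Tendsto (fun n => (ε n)^2/2) Filter.atTop (nhds 0) := by
      have h9 := (hεtend.mul hεtend).div_const 2
      rw [mul_zero, zero_div] at h9
      have h10 : (fun n => (ε n)^2/2) = fun n => (ε n * ε n)/2 := by
        funext n; rw [pow_two]
      rw [h10]
      exact h9
    have h11 := ((tendsto_const_nhds (x := (1/2) * E) (f := Filter.atTop (α := ℕ))).add h7).add h8
    rwa [add_zero, add_zero] at h11
  exact le_of_tendsto_of_tendsto' hLHS hRHS hkey





-- ## Lower bound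
lemma lower_bd {x β : ℝ} (hβ : 0 < β) (hx : Real.sinh β / β = x) (f g : ℝ → ℝ)
    (hAC : IsAC f g) (hcon : (∫ u in (0:ℝ)..1, Real.exp (f u)) = x) :
    (1/2)*β^2 - β*Real.tanh (β/2) ≤ energy g := by
  obtain ⟨h1, h2, hrep⟩ := hAC
  set c : ℝ := β/2 with hcdef
  have hc : 0 < c := by positivity
  set Tv : ℝ := 2*c^2 - 2*c*(Real.sinh c/Real.cosh c) with hTvdef
  have htarget : (1/2)*β^2 - β*Real.tanh (β/2) = Tv := by
    rw [hTvdef, Real.tanh_eq_sinh_div_cosh, hcdef]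
    ring
  rw [htarget]
  set φ : ℝ → ℝ := fun t => ∫ s in (0:ℝ)..t, g s with hφdef
  set m : ℝ := sSup (φ '' Icc (0:ℝ) 1) with hmdef
  have hIG : IsGreatest (φ '' Icc (0:ℝ) 1) m := isGreatest_primitive h1
  have hub : ∀ t ∈ Icc (0:ℝ) 1, φ t ≤ m := fun t ht => hIG.2 ⟨t, ht, rfl⟩
  have hφcont : ContinuousOn φ (Icc (0:ℝ) 1) := primitive_continuousOn h1
  have hm0 : 0 ≤ m := by
    have h0 : φ 0 = 0 := intervalIntegral.integral_same
    have := hub 0 (by norm_num)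
    linarith [h0 ▸ this]
  have hX : (∫ t in (0:ℝ)..1, Real.exp (φ t)) = x := by
    rw [← hcon]
    apply intervalIntegral.integral_congr
    intro t ht
    rw [uIcc_of_le (by norm_num : (0:ℝ) ≤ 1)] at ht
    show Real.exp (φ t) = Real.exp (f t)
    rw [hrep t ht]
  have hstar : ∀ ν : ℝ, 0 ≤ ν → ν * Phi m - ν^2/2 * (Real.exp m - x) ≤ energy g := by
    intro ν hν
    have := star h1 h2 hν
    rw [hX] at this
    exact this
  have hx1 : 1 < x := by
    rw [← hx, lt_div_iff₀ hβ, one_mul]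
    exact Real.self_lt_sinh_iff.2 hβ
  have hxval : x = Real.sinh c * Real.cosh c / c := by
    rw [← hx]
    have hβ2c : β = 2*c := by rw [hcdef]; ring
    rw [hβ2c, Real.sinh_two_mul]
    field_simp
  have hxm : x ≤ Real.exp m := by
    rw [← hX]
    have hi2 : IntervalIntegrable (fun t => Real.exp (φ t)) volume 0 1 := by
      apply ContinuousOn.intervalIntegrable
      rw [uIcc_of_le (by norm_num : (0:ℝ) ≤ 1)]
      exact Real.continuous_exp.comp_continuousOn hφcont
    calc (∫ t in (0:ℝ)..1, Real.exp (φ t)) ≤ ∫ t in (0:ℝ)..1, Real.exp m := by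
          apply intervalIntegral.integral_mono_on (by norm_num) hi2 intervalIntegrable_const
          intro t ht
          exact Real.exp_le_exp.2 (hub t ht)
      _ = Real.exp m := by simp
  have hEnn : 0 ≤ energy g := by
    unfold energy
    have hnn : (0:ℝ) ≤ ∫ t in (0:ℝ)..1, (g t)^2 :=
      intervalIntegral.integral_nonneg (by norm_num) (fun t _ => sq_nonneg (g t))
    linarith
  have hTvpos : 0 < Tv := by
    rw [hTvdef]
    have := aux_scs_pos hc
    have hcosh := Real.cosh_pos c
    rw [show 2*c^2 - 2*c*(Real.sinh c/Real.cosh c) = 2*c*(c - Real.sinh c/Real.cosh c) by ring]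
    apply mul_pos (by positivity)
    rw [sub_pos, div_lt_iff₀ hcosh]
    linarith
  rcases eq_or_lt_of_le hxm with hcase | hcase
  · -- e^m = x : show impossible
    exfalso
    have hPhi0 : Phi m = 0 := by
      by_contra hne
      have hPpos : 0 < Phi m := lt_of_le_of_ne (Phi_nonneg m) (Ne.symm hne)
      have hν : 0 ≤ (energy g + 1) / Phi m := div_nonneg (by linarith) hPpos.le
      have := hstar _ hν
      rw [← hcase] at this
      rw [sub_self, mul_zero, sub_zero] at this
      rw [div_mul_cancel₀ _ hPpos.ne'] at this
      linarith
    -- Phi m = 0 → sM m = 0 → m = 0 → x ≤ 1 contra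
    have hs0 : sM m = 0 := by
      by_contra hne
      have hspos : 0 < sM m := lt_of_le_of_ne (sM_nonneg m) (Ne.symm hne)
      have := aux_scs_pos hspos
      rw [Phi_def] at hPhi0
      linarith
    have hm00 : m = 0 := by
      have h5 := cosh_sM hm0
      rw [hs0, Real.cosh_zero] at h5
      rw [← Real.exp_zero] at h5
      have h6 := Real.exp_eq_exp.1 h5.symm
      linarith
    rw [hm00, Real.exp_zero] at hcase
    linarith
  · -- x < e^m
    set B : ℝ := Real.exp m - x with hBdef
    have hBpos : 0 < B := by rw [hBdef]; linarith
    have hν : 0 ≤ Phi m / B := div_nonneg (Phi_nonneg m) hBpos.le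
    have hb := hstar _ hν
    have hval : Phi m / B * Phi m - (Phi m / B)^2/2 * (Real.exp m - x)
        = (Phi m)^2 / (2*B) := by
      rw [show Real.exp m - x = B from rfl]
      field_simp
      ring
    rw [hval] at hb
    -- key inequality
    have hkey : 2 * Tv * B ≤ (Phi m)^2 := by
      have hH := aux_Hnonneg hc (sM_nonneg m)
      have hcosh2 : (Real.cosh (sM m))^2 = Real.exp m := by
        rw [cosh_sM hm0, pow_two, ← Real.exp_add]
        congr 1
        ring
      rw [hcosh2, ← hxval] at hH
      rw [Phi_def]
      calc 2 * Tv * B = 2*(2*c^2 - 2*c*(Real.sinh c/Real.cosh c))*(Real.exp m - x) := by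
            rw [hTvdef, hBdef]
        _ ≤ 4*(sM m*Real.cosh (sM m) - Real.sinh (sM m))^2 := hH
        _ = (2*(sM m * Real.cosh (sM m) - Real.sinh (sM m)))^2 := by ring
    have : Tv ≤ (Phi m)^2/(2*B) := by
      rw [le_div_iff₀ (by positivity)]
      linarith
    exact le_trans this hb

-- ## Upper bound (membership)
lemma upper_mem {β : ℝ} (hβ : 0 < β) :
    ∃ f g : ℝ → ℝ, IsAC f g ∧ (∫ u in (0:ℝ)..1, Real.exp (f u)) = Real.sinh β / β ∧
      ((1/2)*β^2 - β*Real.tanh (β/2)) = energy g := by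
  set c : ℝ := β/2 with hcdef
  have hc : 0 < c := by positivity
  set ψ : ℝ → ℝ := fun t => 2*Real.log (Real.cosh c) - 2*Real.log (Real.cosh (c*(1-t))) with hψdef
  set g₀ : ℝ → ℝ := fun t => 2*c*(Real.sinh (c*(1-t))/Real.cosh (c*(1-t))) with hg₀def
  have hin : ∀ t : ℝ, HasDerivAt (fun u : ℝ => c*(1-u)) (c * (-1)) t := by
    intro t
    have h0 : HasDerivAt (fun u : ℝ => 1 - u) (-1) t := by
      simpa using (hasDerivAt_id t).const_sub 1
    exact h0.const_mul c
  have hinner : Continuous (fun t : ℝ => c*(1-t)) := by fun_prop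
  have hg₀c : Continuous g₀ := by
    rw [hg₀def]
    fun_prop (disch := intros; positivity)
  have hψd : ∀ t : ℝ, HasDerivAt ψ (g₀ t) t := by
    intro t
    have hcoshd : HasDerivAt (fun u : ℝ => Real.cosh (c*(1-u)))
        (Real.sinh (c*(1-t)) * (c * (-1))) t := (Real.hasDerivAt_cosh _).comp t (hin t)
    have hlog : HasDerivAt (fun u : ℝ => Real.log (Real.cosh (c*(1-u))))
        (Real.sinh (c*(1-t)) * (c * (-1)) / Real.cosh (c*(1-t))) t :=
      hcoshd.log (Real.cosh_pos _).ne'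
    have := (hlog.const_mul (2:ℝ)).const_sub (2*Real.log (Real.cosh c))
    refine this.congr_deriv ?_
    rw [hg₀def]
    field_simp
  have hψ0 : ψ 0 = 0 := by
    rw [hψdef]
    norm_num
  refine ⟨ψ, g₀, ⟨hg₀c.intervalIntegrable 0 1, (hg₀c.pow 2).intervalIntegrable 0 1, ?_⟩, ?_, ?_⟩
  · intro t _
    have := intervalIntegral.integral_eq_sub_of_hasDerivAt
      (f := ψ) (f' := g₀) (a := 0) (b := t) (fun u _ => hψd u)
      (hg₀c.intervalIntegrable 0 t)
    rw [this, hψ0, sub_zero]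
  · -- constraint
    have hexpψ : ∀ t : ℝ, Real.exp (ψ t) = (Real.cosh c)^2 * (1/(Real.cosh (c*(1-t)))^2) := by
      intro t
      rw [hψdef]
      rw [Real.exp_sub]
      have e1 : ∀ y : ℝ, 0 < y → Real.exp (2*Real.log y) = y^2 := by
        intro y hy
        rw [show (2:ℝ)*Real.log y = Real.log (y^2) by rw [Real.log_pow]; push_cast; ring]
        exact Real.exp_log (by positivity)
      rw [e1 _ (Real.cosh_pos c), e1 _ (Real.cosh_pos _)]
      field_simp
    have hV : ∀ t : ℝ, HasDerivAt
        (fun u : ℝ => -((Real.cosh c)^2/c) * (Real.sinh (c*(1-u))/Real.cosh (c*(1-u))))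
        (Real.exp (ψ t)) t := by
      intro t
      have hqd : HasDerivAt (fun u : ℝ => Real.sinh (c*(1-u))/Real.cosh (c*(1-u)))
          (1/(Real.cosh (c*(1-t)))^2 * (c * (-1))) t := (hd_q _).comp t (hin t)
      have := hqd.const_mul (-((Real.cosh c)^2/c))
      refine this.congr_deriv ?_
      rw [hexpψ t]
      field_simp
    have := intervalIntegral.integral_eq_sub_of_hasDerivAt
      (f := fun u : ℝ => -((Real.cosh c)^2/c) * (Real.sinh (c*(1-u))/Real.cosh (c*(1-u))))
      (f' := fun t => Real.exp (ψ t)) (a := 0) (b := 1) (fun u _ => hV u)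
      (((by rw [hψdef]; fun_prop (disch := intros; positivity) :
        Continuous (fun t : ℝ => Real.exp (ψ t)))).intervalIntegrable 0 1)
    rw [this]
    have hβ2c : β = 2*c := by rw [hcdef]; ring
    rw [hβ2c, Real.sinh_two_mul]
    norm_num
    field_simp
  · -- energy
    have hW : ∀ t : ℝ, HasDerivAt
        (fun u : ℝ => 4*c^2*u + 4*c*(Real.sinh (c*(1-u))/Real.cosh (c*(1-u))))
        ((g₀ t)^2) t := by
      intro t
      have hqd : HasDerivAt (fun u : ℝ => Real.sinh (c*(1-u))/Real.cosh (c*(1-u)))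
          (1/(Real.cosh (c*(1-t)))^2 * (c * (-1))) t := (hd_q _).comp t (hin t)
      have hlin : HasDerivAt (fun u : ℝ => 4*c^2*u) (4*c^2) t := by
        simpa using (hasDerivAt_id t).const_mul (4*c^2)
      have := hlin.add (hqd.const_mul (4*c))
      refine this.congr_deriv ?_
      rw [hg₀def]
      have hid := Real.cosh_sq_sub_sinh_sq (c*(1-t))
      have hcp := (Real.cosh_pos (c*(1-t))).ne'
      field_simp
      nlinarith [hid]
    have := intervalIntegral.integral_eq_sub_of_hasDerivAt
      (f := fun u : ℝ => 4*c^2*u + 4*c*(Real.sinh (c*(1-u))/Real.cosh (c*(1-u))))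
      (f' := fun t => (g₀ t)^2) (a := 0) (b := 1) (fun u _ => hW u)
      ((hg₀c.pow 2).intervalIntegrable 0 1)
    unfold energy
    rw [this]
    have hβ2c : β = 2*c := by rw [hcdef]; ring
    rw [hβ2c, Real.tanh_eq_sinh_div_cosh]
    norm_num
    ring

/-- For `x ≥ 1`, if `β ≥ 0` satisfies `sinh(β)/β = x` (with the convention
`sinh(β)/β = 1` at `β = 0`), then `J_BS(x) = (1/2)β² − β·tanh(β/2)`. -/
theorem JBS_right_wing (x β : ℝ) (hx : 1 ≤ x) (hβ : 0 ≤ β)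
    (hconv : β = 0 → x = 1) (heq : β ≠ 0 → Real.sinh β / β = x) :
    JBS x = (1 / 2) * β ^ 2 - β * Real.tanh (β / 2) := by
  by_cases hβ0 : β = 0
  · subst hβ0
    have hx1 : x = 1 := hconv rfl
    subst hx1
    have hT : (1 / 2) * (0:ℝ) ^ 2 - 0 * Real.tanh (0 / 2) = 0 := by norm_num
    rw [hT]
    unfold JBS
    apply IsLeast.csInf_eq
    constructor
    · refine ⟨fun _ => 0, fun _ => 0, ⟨?_, ?_, ?_⟩, ?_, ?_⟩
      · exact continuous_const.intervalIntegrable 0 1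
      · exact (continuous_const.pow 2).intervalIntegrable 0 1
      · intro t _
        simp
      · simp
      · simp [energy]
    · rintro E ⟨f, g, hAC, hcon, rfl⟩
      unfold energy
      have hnn : (0:ℝ) ≤ ∫ t in (0:ℝ)..1, (g t)^2 :=
        intervalIntegral.integral_nonneg (by norm_num) (fun t _ => sq_nonneg (g t))
      linarith
  · have hβpos : 0 < β := lt_of_le_of_ne hβ (Ne.symm hβ0)
    have hxe : Real.sinh β / β = x := heq hβ0
    unfold JBS
    apply IsLeast.csInf_eq
    constructor
    · obtain ⟨f, g, hAC, hcon, hE⟩ := upper_mem hβpos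
      exact ⟨f, g, hAC, by rw [hcon, hxe], hE⟩
    · rintro E ⟨f, g, hAC, hcon, rfl⟩
      exact lower_bd hβpos hxe f g hAC hcon
end

section
/- For every x with 0 < x ≤ 1, if ξ ∈ [0, π/2) satisfies sin(2ξ)/(2ξ) = x (with the convention that sin(2ξ)/(2ξ) = 1 when ξ = 0), then J_BS(x) = 2ξ·(tan(ξ) − ξ). -/
open MeasureTheory Set

noncomputable def psiF (ξ : ℝ) : ℝ → ℝ :=
  fun t => 2 * Real.log (Real.cos ξ) - 2 * Real.log (Real.cos (ξ * (t - 1)))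

noncomputable def gF (ξ : ℝ) : ℝ → ℝ := fun t => 2 * ξ * Real.tan (ξ * (t - 1))

noncomputable def wF (ξ : ℝ) : ℝ → ℝ := fun t => 2 * ξ ^ 2 / (Real.cos (ξ * (t - 1))) ^ 2

lemma cos_pos_aux {ξ t : ℝ} (hξ0 : 0 ≤ ξ) (hξπ : ξ < Real.pi / 2)
    (ht : t ∈ Icc (0:ℝ) 1) : 0 < Real.cos (ξ * (t - 1)) := by
  apply Real.cos_pos_of_mem_Ioo
  constructor
  · nlinarith [ht.1, ht.2, Real.pi_pos, mul_nonneg hξ0 (sub_nonneg.2 ht.1)]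
  · nlinarith [ht.1, ht.2, Real.pi_pos, mul_nonneg hξ0 (sub_nonneg.2 ht.1)]

lemma hasDerivAt_affine (ξ t : ℝ) : HasDerivAt (fun t => ξ * (t - 1)) ξ t := by
  simpa using ((hasDerivAt_id t).sub_const 1).const_mul ξ

lemma hasDerivAt_gF {ξ t : ℝ} (h : Real.cos (ξ * (t - 1)) ≠ 0) :
    HasDerivAt (gF ξ) (wF ξ t) t := by
  have h1 : HasDerivAt (fun t => Real.tan (ξ * (t - 1)))
      ((1 / Real.cos (ξ * (t - 1)) ^ 2) * ξ) t :=
    by have := (Real.hasDerivAt_tan h).comp t (hasDerivAt_affine ξ t); exact this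
  have := h1.const_mul (2 * ξ)
  refine this.congr_deriv ?_
  unfold wF; ring

lemma hasDerivAt_psiF {ξ t : ℝ} (h : 0 < Real.cos (ξ * (t - 1))) :
    HasDerivAt (psiF ξ) (gF ξ t) t := by
  have hc : HasDerivAt (fun t => Real.cos (ξ * (t - 1)))
      (-Real.sin (ξ * (t - 1)) * ξ) t :=
    (Real.hasDerivAt_cos _).comp t (hasDerivAt_affine ξ t)
  have hl : HasDerivAt (fun t => Real.log (Real.cos (ξ * (t - 1))))
      ((Real.cos (ξ * (t - 1)))⁻¹ * (-Real.sin (ξ * (t - 1)) * ξ)) t :=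
    by have := (Real.hasDerivAt_log h.ne').comp t hc; exact this
  have := (hl.const_mul (2:ℝ)).const_sub (2 * Real.log (Real.cos ξ))
  refine this.congr_deriv ?_
  unfold gF
  rw [Real.tan_eq_sin_div_cos]
  field_simp

lemma exp_psiF {ξ t : ℝ} (hcξ : 0 < Real.cos ξ) (h : 0 < Real.cos (ξ * (t - 1))) :
    Real.exp (psiF ξ t) = (Real.cos ξ) ^ 2 / (Real.cos (ξ * (t - 1))) ^ 2 := by
  unfold psiF
  rw [Real.exp_sub]
  rw [show (2:ℝ) * Real.log (Real.cos ξ) = Real.log ((Real.cos ξ)^2) by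
        rw [Real.log_pow]; push_cast; ring,
      show (2:ℝ) * Real.log (Real.cos (ξ * (t - 1))) = Real.log ((Real.cos (ξ * (t-1)))^2) by
        rw [Real.log_pow]; push_cast; ring,
      Real.exp_log (by positivity), Real.exp_log (by positivity)]

lemma continuousOn_gF {ξ : ℝ} (hξ0 : 0 ≤ ξ) (hξπ : ξ < Real.pi / 2) :
    ContinuousOn (gF ξ) (Icc (0:ℝ) 1) := by
  intro t ht
  exact (hasDerivAt_gF (cos_pos_aux hξ0 hξπ ht).ne').continuousAt.continuousWithinAt

lemma continuousOn_wF {ξ : ℝ} (hξ0 : 0 ≤ ξ) (hξπ : ξ < Real.pi / 2) :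
    ContinuousOn (wF ξ) (Icc (0:ℝ) 1) := by
  apply ContinuousOn.div continuousOn_const
  · have : Continuous fun t : ℝ => (Real.cos (ξ * (t - 1)))^2 := by fun_prop
    exact this.continuousOn
  · intro t ht
    exact pow_ne_zero 2 (cos_pos_aux hξ0 hξπ ht).ne'

lemma continuousOn_psiF {ξ : ℝ} (hξ0 : 0 ≤ ξ) (hξπ : ξ < Real.pi / 2) :
    ContinuousOn (psiF ξ) (Icc (0:ℝ) 1) := by
  intro t ht
  exact (hasDerivAt_psiF (cos_pos_aux hξ0 hξπ ht)).continuousAt.continuousWithinAt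


lemma uIcc_sub {a b : ℝ} (ha : a ∈ Icc (0:ℝ) 1) (hb : b ∈ Icc (0:ℝ) 1) :
    uIcc a b ⊆ Icc (0:ℝ) 1 := by
  rw [uIcc]; exact Icc_subset_Icc (le_inf ha.1 hb.1) (sup_le ha.2 hb.2)

lemma intInt_gF {ξ : ℝ} (hξ0 : 0 ≤ ξ) (hξπ : ξ < Real.pi / 2) {a b : ℝ}
    (ha : a ∈ Icc (0:ℝ) 1) (hb : b ∈ Icc (0:ℝ) 1) :
    IntervalIntegrable (gF ξ) volume a b :=
  ((continuousOn_gF hξ0 hξπ).mono (uIcc_sub ha hb)).intervalIntegrable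

lemma intInt_wF {ξ : ℝ} (hξ0 : 0 ≤ ξ) (hξπ : ξ < Real.pi / 2) {a b : ℝ}
    (ha : a ∈ Icc (0:ℝ) 1) (hb : b ∈ Icc (0:ℝ) 1) :
    IntervalIntegrable (wF ξ) volume a b :=
  ((continuousOn_wF hξ0 hξπ).mono (uIcc_sub ha hb)).intervalIntegrable

lemma psiF_zero (ξ : ℝ) : psiF ξ 0 = 0 := by
  unfold psiF
  norm_num [Real.cos_neg]

lemma gF_one (ξ : ℝ) : gF ξ 1 = 0 := by
  unfold gF; norm_num [Real.tan_zero]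

/-- FTC for psiF: `∫ₐᵇ gF = psiF b - psiF a`. -/
lemma integral_gF {ξ : ℝ} (hξ0 : 0 ≤ ξ) (hξπ : ξ < Real.pi / 2) {a b : ℝ}
    (ha : a ∈ Icc (0:ℝ) 1) (hb : b ∈ Icc (0:ℝ) 1) :
    ∫ t in a..b, gF ξ t = psiF ξ b - psiF ξ a := by
  apply intervalIntegral.integral_eq_sub_of_hasDerivAt
  · intro t ht
    exact hasDerivAt_psiF (cos_pos_aux hξ0 hξπ (uIcc_sub ha hb ht))
  · exact intInt_gF hξ0 hξπ ha hb

/-- FTC for gF: `∫ₐᵇ wF = gF b - gF a`. -/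
lemma integral_wF {ξ : ℝ} (hξ0 : 0 ≤ ξ) (hξπ : ξ < Real.pi / 2) {a b : ℝ}
    (ha : a ∈ Icc (0:ℝ) 1) (hb : b ∈ Icc (0:ℝ) 1) :
    ∫ t in a..b, wF ξ t = gF ξ b - gF ξ a := by
  apply intervalIntegral.integral_eq_sub_of_hasDerivAt
  · intro t ht
    exact hasDerivAt_gF (cos_pos_aux hξ0 hξπ (uIcc_sub ha hb ht)).ne'
  · exact intInt_wF hξ0 hξπ ha hb

lemma isAC_psiF {ξ : ℝ} (hξ0 : 0 ≤ ξ) (hξπ : ξ < Real.pi / 2) :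
    IsAC (psiF ξ) (gF ξ) := by
  refine ⟨intInt_gF hξ0 hξπ (by norm_num) (by norm_num), ?_, ?_⟩
  · apply ContinuousOn.intervalIntegrable
    apply ContinuousOn.pow
    exact (continuousOn_gF hξ0 hξπ).mono (uIcc_sub (by norm_num) (by norm_num))
  · intro t ht
    rw [integral_gF hξ0 hξπ (by norm_num) ht, psiF_zero]
    ring

lemma intInt_gF_sq {ξ : ℝ} (hξ0 : 0 ≤ ξ) (hξπ : ξ < Real.pi / 2) :
    IntervalIntegrable (fun t => (gF ξ t) ^ 2) volume 0 1 :=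
  (((continuousOn_gF hξ0 hξπ).mono
    (uIcc_sub (by norm_num) (by norm_num))).pow 2).intervalIntegrable

/-- energy of gF -/
lemma energy_gF {ξ : ℝ} (hξ0 : 0 ≤ ξ) (hξπ : ξ < Real.pi / 2) :
    energy (gF ξ) = 2 * ξ * (Real.tan ξ - ξ) := by
  have hF : ∀ t ∈ uIcc (0:ℝ) 1, HasDerivAt (fun t => 2 * gF ξ t - 4 * ξ ^ 2 * t)
      ((gF ξ t) ^ 2) t := by
    intro t ht
    have ht' : t ∈ Icc (0:ℝ) 1 := uIcc_sub (by norm_num) (by norm_num) ht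
    have hc := cos_pos_aux hξ0 hξπ ht'
    have h1 := ((hasDerivAt_gF hc.ne').const_mul (2:ℝ)).sub
      (((hasDerivAt_id t).const_mul (4 * ξ ^ 2)))
    refine h1.congr_deriv ?_
    unfold gF wF
    rw [Real.tan_eq_sin_div_cos]
    have hs : Real.sin (ξ * (t-1)) ^ 2 = 1 - Real.cos (ξ * (t-1)) ^ 2 := by
      have := Real.sin_sq_add_cos_sq (ξ * (t-1)); linarith
    field_simp
    nlinarith [hs]
  have hint := intervalIntegral.integral_eq_sub_of_hasDerivAt hF (intInt_gF_sq hξ0 hξπ)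
  unfold energy
  rw [hint]
  simp only [gF_one]
  unfold gF
  have h0 : ξ * (0 - 1) = -ξ := by ring
  rw [h0, Real.tan_neg]
  ring


lemma cosξ_pos {ξ : ℝ} (hξ0 : 0 ≤ ξ) (hξπ : ξ < Real.pi / 2) : 0 < Real.cos ξ := by
  have := cos_pos_aux hξ0 hξπ (show (0:ℝ) ∈ Icc (0:ℝ) 1 by norm_num)
  rwa [show ξ * (0 - 1) = -ξ by ring, Real.cos_neg] at this

lemma integral_exp_psiF_pos {ξ : ℝ} (hξ0 : 0 < ξ) (hξπ : ξ < Real.pi / 2) :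
    ∫ u in (0:ℝ)..1, Real.exp (psiF ξ u) = Real.sin (2 * ξ) / (2 * ξ) := by
  have hcξ := cosξ_pos hξ0.le hξπ
  have hcongr : EqOn (fun u => Real.exp (psiF ξ u))
      (fun u => (Real.cos ξ) ^ 2 / (Real.cos (ξ * (u - 1))) ^ 2) (uIcc (0:ℝ) 1) := by
    intro u hu
    exact exp_psiF hcξ (cos_pos_aux hξ0.le hξπ (uIcc_sub (by norm_num) (by norm_num) hu))
  rw [intervalIntegral.integral_congr hcongr]
  have hF : ∀ t ∈ uIcc (0:ℝ) 1, HasDerivAt (fun t => (Real.cos ξ) ^ 2 / ξ * gF ξ t / (2 * ξ))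
      ((Real.cos ξ) ^ 2 / (Real.cos (ξ * (t - 1))) ^ 2) t := by
    intro t ht
    have hc := cos_pos_aux hξ0.le hξπ (uIcc_sub (by norm_num) (by norm_num) ht)
    have h1 := ((hasDerivAt_gF hc.ne').const_mul ((Real.cos ξ) ^ 2 / ξ)).div_const (2 * ξ)
    refine h1.congr_deriv ?_
    unfold wF
    field_simp
  rw [intervalIntegral.integral_eq_sub_of_hasDerivAt hF]
  · simp only [gF_one]
    unfold gF
    rw [show ξ * (0 - 1) = -ξ by ring, Real.tan_neg, Real.tan_eq_sin_div_cos,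
      Real.sin_two_mul]
    field_simp
    ring
  · apply ContinuousOn.intervalIntegrable
    apply ContinuousOn.div continuousOn_const
    · have : Continuous fun t : ℝ => (Real.cos (ξ * (t - 1))) ^ 2 := by fun_prop
      exact this.continuousOn
    · intro t ht
      exact pow_ne_zero 2 (cos_pos_aux hξ0.le hξπ (uIcc_sub (by norm_num) (by norm_num) ht)).ne'

lemma psiF_of_zero : psiF 0 = fun _ => (0:ℝ) := by
  funext t; unfold psiF; norm_num

/-- The constraint value of the candidate optimizer. -/
lemma integral_exp_psiF {ξ x : ℝ} (hξ0 : 0 ≤ ξ) (hξπ : ξ < Real.pi / 2)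
    (hconv : ξ = 0 → x = 1) (heq : ξ ≠ 0 → Real.sin (2 * ξ) / (2 * ξ) = x) :
    ∫ u in (0:ℝ)..1, Real.exp (psiF ξ u) = x := by
  rcases eq_or_lt_of_le hξ0 with h0 | h0
  · rw [← h0, psiF_of_zero]
    simp [hconv h0.symm]
  · rw [integral_exp_psiF_pos h0 hξπ, heq (ne_of_gt h0)]


/-- Fubini on the triangle: swapping a primitive inside an integral. -/
lemma fubini_primitive (g w : ℝ → ℝ) (hg : IntervalIntegrable g volume 0 1)
    (hw : ContinuousOn w (Icc (0:ℝ) 1)) :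
    ∫ s in (0:ℝ)..1, w s * (∫ t in (0:ℝ)..s, g t)
      = ∫ t in (0:ℝ)..1, (∫ s in t..(1:ℝ), w s) * g t := by
  set μ : Measure ℝ := volume.restrict (Ioc (0:ℝ) 1) with hμ
  have hgI : IntegrableOn g (Ioc (0:ℝ) 1) volume :=
    (intervalIntegrable_iff_integrableOn_Ioc_of_le zero_le_one).1 hg
  have hwI : IntegrableOn w (Ioc (0:ℝ) 1) volume :=
    (hw.integrableOn_Icc).mono_set Ioc_subset_Icc_self
  set F : ℝ × ℝ → ℝ :=
    fun p => {q : ℝ × ℝ | q.2 ≤ q.1}.indicator (fun q => g q.2 * w q.1) p with hF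
  have hS : MeasurableSet {q : ℝ × ℝ | q.2 ≤ q.1} :=
    measurableSet_le measurable_snd measurable_fst
  have hFint : Integrable F (μ.prod μ) := by
    apply Integrable.indicator _ hS
    have h := Integrable.mul_prod (L := ℝ) (hwI : Integrable w μ) (hgI : Integrable g μ)
    have h2 : (fun q : ℝ × ℝ => g q.2 * w q.1) = fun z : ℝ × ℝ => w z.1 * g z.2 := by
      funext q; ring
    rw [h2]
    exact h
  have swap : (∫ s, (∫ t, F (s, t) ∂μ) ∂μ) = ∫ t, (∫ s, F (s, t) ∂μ) ∂μ :=
    MeasureTheory.integral_integral_swap (f := fun s t => F (s, t)) hFint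
  have hL : ∫ s in (0:ℝ)..1, w s * (∫ t in (0:ℝ)..s, g t)
      = ∫ s, (∫ t, F (s, t) ∂μ) ∂μ := by
    rw [intervalIntegral.integral_of_le zero_le_one]
    apply integral_congr_ae
    filter_upwards [ae_restrict_mem measurableSet_Ioc] with s hs
    have h1 : ∀ t, F (s, t) = (Iic s).indicator (fun t => g t * w s) t := by
      intro t
      by_cases h : t ≤ s
      · simp only [hF, Set.indicator_apply, mem_setOf_eq, mem_Iic, h, if_true]
      · simp only [hF, Set.indicator_apply, mem_setOf_eq, mem_Iic, h, if_false]
    calc w s * ∫ t in (0:ℝ)..s, g t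
        = ∫ t in Ioc (0:ℝ) s, g t * w s := by
          rw [intervalIntegral.integral_of_le hs.1.le, integral_mul_const]
          ring
      _ = ∫ t, (Iic s).indicator (fun t => g t * w s) t ∂μ := by
          rw [integral_indicator measurableSet_Iic, hμ,
            Measure.restrict_restrict measurableSet_Iic]
          congr 1
          rw [Iic_inter_Ioc_of_le hs.2]
      _ = ∫ t, F (s, t) ∂μ := by
          apply integral_congr_ae
          filter_upwards with t
          rw [h1]
  have hR : ∫ t in (0:ℝ)..1, (∫ s in t..(1:ℝ), w s) * g t
      = ∫ t, (∫ s, F (s, t) ∂μ) ∂μ := by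
    rw [intervalIntegral.integral_of_le zero_le_one]
    apply integral_congr_ae
    filter_upwards [ae_restrict_mem measurableSet_Ioc] with t ht
    have h1 : ∀ s, F (s, t) = (Ici t).indicator (fun s => g t * w s) s := by
      intro s
      by_cases h : t ≤ s
      · simp only [hF, Set.indicator_apply, mem_setOf_eq, mem_Ici, h, if_true]
      · simp only [hF, Set.indicator_apply, mem_setOf_eq, mem_Ici, h, if_false]
    calc (∫ s in t..(1:ℝ), w s) * g t
        = ∫ s in Icc t 1, g t * w s := by
          rw [intervalIntegral.integral_of_le ht.2, ← integral_Icc_eq_integral_Ioc,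
            integral_const_mul]
          ring
      _ = ∫ s, (Ici t).indicator (fun s => g t * w s) s ∂μ := by
          have hset : Ici t ∩ Ioc 0 1 = Icc t 1 := by
            ext s
            simp only [mem_inter_iff, mem_Ici, mem_Ioc, mem_Icc]
            constructor
            · rintro ⟨h1, h2, h3⟩; exact ⟨h1, h3⟩
            · rintro ⟨h1, h2⟩; exact ⟨h1, lt_of_lt_of_le ht.1 h1, h2⟩
          rw [integral_indicator measurableSet_Ici, hμ,
            Measure.restrict_restrict measurableSet_Ici, hset]
      _ = ∫ s, F (s, t) ∂μ := by
          apply integral_congr_ae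
          filter_upwards with s
          rw [h1]
  rw [hL, hR, ← swap]


lemma icc01 : uIcc (0:ℝ) 1 = Icc (0:ℝ) 1 := uIcc_of_le zero_le_one

/-- Integration by parts against the optimizer. -/
lemma parts {ξ : ℝ} (hξ0 : 0 ≤ ξ) (hξπ : ξ < Real.pi / 2) (f g : ℝ → ℝ)
    (hgint : IntervalIntegrable g volume 0 1)
    (hfprim : ∀ t ∈ Icc (0:ℝ) 1, f t = ∫ s in (0:ℝ)..t, g s) :
    ∫ t in (0:ℝ)..1, wF ξ t * f t = - ∫ t in (0:ℝ)..1, gF ξ t * g t := by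
  have h1 : ∫ t in (0:ℝ)..1, wF ξ t * f t
      = ∫ s in (0:ℝ)..1, wF ξ s * (∫ t in (0:ℝ)..s, g t) := by
    apply intervalIntegral.integral_congr
    intro t ht
    rw [icc01] at ht
    simp only [hfprim t ht]
  rw [h1, fubini_primitive g (wF ξ) hgint (continuousOn_wF hξ0 hξπ)]
  rw [← intervalIntegral.integral_neg]
  apply intervalIntegral.integral_congr
  intro t ht
  rw [icc01] at ht
  have h2 : ∫ s in t..(1:ℝ), wF ξ s = - gF ξ t := by
    rw [integral_wF hξ0 hξπ ht (by norm_num), gF_one]; ring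
  simp only [h2]
  ring

/-- The central lower bound. -/
lemma lower_bound {ξ : ℝ} (hξ0 : 0 ≤ ξ) (hξπ : ξ < Real.pi / 2) (f g : ℝ → ℝ)
    (hAC : IsAC f g)
    (hce : (∫ u in (0:ℝ)..1, Real.exp (f u)) = ∫ u in (0:ℝ)..1, Real.exp (psiF ξ u)) :
    2 * ξ * (Real.tan ξ - ξ) ≤ energy g := by
  obtain ⟨hgint, hg2int, hfprim⟩ := hAC
  have hcξ := cosξ_pos hξ0 hξπ
  -- continuity of f on [0,1]
  have hfc : ContinuousOn f (Icc (0:ℝ) 1) := by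
    have hp := intervalIntegral.continuousOn_primitive_interval'
      (a := 0) (b₁ := 0) (b₂ := 1) hgint (by rw [icc01]; norm_num)
    rw [icc01] at hp
    exact hp.congr hfprim
  have hψc := continuousOn_psiF hξ0 hξπ
  have hwc := continuousOn_wF hξ0 hξπ
  have hgFc := continuousOn_gF hξ0 hξπ
  set lam : ℝ := 2 * ξ ^ 2 / (Real.cos ξ) ^ 2 with hlam
  have hlam0 : 0 ≤ lam := by positivity
  -- pointwise inequality
  have hpt : ∀ t ∈ Icc (0:ℝ) 1,
      wF ξ t * f t - wF ξ t * psiF ξ t ≤ lam * (Real.exp (f t) - Real.exp (psiF ξ t)) := by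
    intro t ht
    have hc := cos_pos_aux hξ0 hξπ ht
    have hw : wF ξ t = lam * Real.exp (psiF ξ t) := by
      rw [exp_psiF hcξ hc, hlam]
      unfold wF
      field_simp
    have h1 := Real.add_one_le_exp (f t - psiF ξ t)
    have h2 : Real.exp (f t) = Real.exp (psiF ξ t) * Real.exp (f t - psiF ξ t) := by
      rw [← Real.exp_add]; ring_nf
    have h3 : 0 ≤ lam * Real.exp (psiF ξ t) := by positivity
    have h4 := mul_le_mul_of_nonneg_left h1 h3
    rw [hw]
    nlinarith [h4, h2]
  -- interval integrabilities
  have iwf : IntervalIntegrable (fun t => wF ξ t * f t) volume 0 1 := by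
    apply ContinuousOn.intervalIntegrable; rw [icc01]
    exact ((hwc).mul hfc)
  have iwψ : IntervalIntegrable (fun t => wF ξ t * psiF ξ t) volume 0 1 := by
    apply ContinuousOn.intervalIntegrable; rw [icc01]
    exact ((hwc).mul hψc)
  have ief : IntervalIntegrable (fun t => Real.exp (f t)) volume 0 1 := by
    apply ContinuousOn.intervalIntegrable; rw [icc01]
    exact hfc.rexp
  have ieψ : IntervalIntegrable (fun t => Real.exp (psiF ξ t)) volume 0 1 := by
    apply ContinuousOn.intervalIntegrable; rw [icc01]
    exact hψc.rexp
  have hmono := intervalIntegral.integral_mono_on zero_le_one (iwf.sub iwψ)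
    ((ief.sub ieψ).const_mul lam) (fun t ht => hpt t ht)
  -- compute both sides of hmono
  have hR : (∫ t in (0:ℝ)..1, lam * (Real.exp (f t) - Real.exp (psiF ξ t))) = 0 := by
    rw [intervalIntegral.integral_const_mul, intervalIntegral.integral_sub ief ieψ, hce]
    ring
  have hL : (∫ t in (0:ℝ)..1, (wF ξ t * f t - wF ξ t * psiF ξ t))
      = (∫ t in (0:ℝ)..1, gF ξ t * gF ξ t) - ∫ t in (0:ℝ)..1, gF ξ t * g t := by
    rw [intervalIntegral.integral_sub iwf iwψ,
      parts hξ0 hξπ f g hgint hfprim,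
      parts hξ0 hξπ (psiF ξ) (gF ξ) (intInt_gF hξ0 hξπ (by norm_num) (by norm_num))
        (isAC_psiF hξ0 hξπ).2.2]
    ring
  rw [hR] at hmono
  rw [hL] at hmono
  -- hence ∫ gF² ≤ ∫ gF g
  have e1 : IntervalIntegrable (fun t => gF ξ t * g t) volume 0 1 :=
    IntervalIntegrable.continuousOn_mul hgint (by rw [icc01]; exact hgFc)
  have e2 : IntervalIntegrable (fun t => gF ξ t * gF ξ t) volume 0 1 := by
    apply ContinuousOn.intervalIntegrable; rw [icc01]
    exact hgFc.mul hgFc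
  -- expansion of the square
  have hsq : 0 ≤ ∫ t in (0:ℝ)..1, (g t - gF ξ t) ^ 2 :=
    intervalIntegral.integral_nonneg zero_le_one (fun u _ => sq_nonneg _)
  have expand : (∫ t in (0:ℝ)..1, (g t - gF ξ t) ^ 2)
      = (∫ t in (0:ℝ)..1, (g t) ^ 2) - 2 * (∫ t in (0:ℝ)..1, gF ξ t * g t)
        + ∫ t in (0:ℝ)..1, gF ξ t * gF ξ t := by
    have hfe : (fun t => (g t - gF ξ t) ^ 2)
        = fun t => ((g t) ^ 2 - 2 * (gF ξ t * g t)) + gF ξ t * gF ξ t := by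
      funext t; ring
    rw [hfe, intervalIntegral.integral_add (hg2int.sub (e1.const_mul 2)) e2,
      intervalIntegral.integral_sub hg2int (e1.const_mul 2),
      intervalIntegral.integral_const_mul]
  have hval : (1:ℝ) / 2 * ∫ t in (0:ℝ)..1, gF ξ t * gF ξ t = 2 * ξ * (Real.tan ξ - ξ) := by
    rw [show (fun t => gF ξ t * gF ξ t) = fun t => (gF ξ t) ^ 2 by funext t; ring]
    have := energy_gF hξ0 hξπ
    unfold energy at this
    exact this
  unfold energy
  nlinarith [hsq, expand, hmono, hval]


/-- For `0 < x ≤ 1`, if `ξ ∈ [0, π/2)` satisfies `sin(2ξ)/(2ξ) = x`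
(with the convention `sin(2ξ)/(2ξ) = 1` at `ξ = 0`), then `J_BS(x) = 2ξ(tan ξ − ξ)`. -/
theorem JBS_left_wing (x ξ : ℝ) (hx0 : 0 < x) (hx1 : x ≤ 1)
    (hξ : ξ ∈ Ico (0:ℝ) (Real.pi / 2))
    (hconv : ξ = 0 → x = 1) (heq : ξ ≠ 0 → Real.sin (2 * ξ) / (2 * ξ) = x) :
    JBS x = 2 * ξ * (Real.tan ξ - ξ) := by
  obtain ⟨hξ0, hξπ⟩ := hξ
  have hψx : (∫ u in (0:ℝ)..1, Real.exp (psiF ξ u)) = x :=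
    integral_exp_psiF hξ0 hξπ hconv heq
  set S : Set ℝ :=
    { E | ∃ f g : ℝ → ℝ, IsAC f g ∧ (∫ u in (0:ℝ)..1, Real.exp (f u)) = x ∧ E = energy g }
    with hS
  have hmem : 2 * ξ * (Real.tan ξ - ξ) ∈ S :=
    ⟨psiF ξ, gF ξ, isAC_psiF hξ0 hξπ, hψx, (energy_gF hξ0 hξπ).symm⟩
  have hlow : ∀ e ∈ S, 2 * ξ * (Real.tan ξ - ξ) ≤ e := by
    rintro e ⟨f, g, hAC, hcon, rfl⟩
    exact lower_bound hξ0 hξπ f g hAC (by rw [hcon, hψx])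
  have : JBS x = sInf S := rfl
  rw [this]
  exact le_antisymm (csInf_le ⟨_, hlow⟩ hmem) (le_csInf ⟨_, hmem⟩ hlow)
end

section
/- Let x ≥ 1 and let β ≥ 0 satisfy sinh(β)/β = x (with the convention sinh(β)/β = 1 at β = 0). Define φ : [0,1] → ℝ by φ(u) = βu − 2·log((e^{βu} + e^β)/(1 + e^β)). Then φ(0) = 0, ∫₀¹ exp(φ(u)) du = x, (1/2)∫₀¹ (φ'(u))² du = (1/2)β² − β·tanh(β/2), and this value equals J_BS(x); that is, φ attains the infimum defining J_BS(x). -/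
open MeasureTheory Set
open intervalIntegral Real Filter Topology

lemma k_nonneg {t : ℝ} (ht : 0 ≤ t) : Real.sinh t ≤ t * Real.cosh t := by
  have hmono : MonotoneOn (fun t => t * Real.cosh t - Real.sinh t) (Ici (0:ℝ)) := by
    have hd : ∀ s : ℝ, HasDerivAt (fun t => t * Real.cosh t - Real.sinh t) (s * Real.sinh s) s := by
      intro s
      have h1 : HasDerivAt (fun t : ℝ => t * Real.cosh t) (1 * Real.cosh s + s * Real.sinh s) s :=
        (hasDerivAt_id s).mul (Real.hasDerivAt_cosh s)
      have := h1.sub (Real.hasDerivAt_sinh s)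
      refine this.congr_deriv ?_; ring
    apply monotoneOn_of_deriv_nonneg (convex_Ici 0)
    · exact fun s _ => ((hd s).differentiableAt).continuousAt.continuousWithinAt
    · exact fun s _ => ((hd s).differentiableAt).differentiableWithinAt
    · intro s hs
      rw [interior_Ici] at hs
      rw [(hd s).deriv]
      exact mul_nonneg hs.le (Real.sinh_nonneg_iff.2 hs.le)
  have := hmono (mem_Ici.2 le_rfl) (mem_Ici.2 ht) ht
  simpa using this

lemma sinh_lt_mul_cosh {t : ℝ} (ht : 0 < t) : Real.sinh t < t * Real.cosh t := by
  have h2 : Real.sinh (t/2) ≤ (t/2) * Real.cosh (t/2) := k_nonneg (by linarith)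
  have hmono : StrictMonoOn (fun t => t * Real.cosh t - Real.sinh t) (Ici (0:ℝ)) := by
    have hd : ∀ s : ℝ, HasDerivAt (fun t => t * Real.cosh t - Real.sinh t) (s * Real.sinh s) s := by
      intro s
      have h1 : HasDerivAt (fun t : ℝ => t * Real.cosh t) (1 * Real.cosh s + s * Real.sinh s) s :=
        (hasDerivAt_id s).mul (Real.hasDerivAt_cosh s)
      have := h1.sub (Real.hasDerivAt_sinh s)
      refine this.congr_deriv ?_; ring
    apply strictMonoOn_of_deriv_pos (convex_Ici 0)
    · exact ContinuousOn.sub (continuousOn_id.mul (Real.continuous_cosh.continuousOn))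
        (Real.continuous_sinh.continuousOn)
    · intro s hs
      rw [interior_Ici] at hs
      rw [(hd s).deriv]
      exact mul_pos hs (Real.sinh_pos_iff.2 hs)
  have := hmono (mem_Ici.2 le_rfl) (mem_Ici.2 ht.le) ht
  simp only [zero_mul, Real.cosh_zero, Real.sinh_zero, sub_zero, mul_zero] at this
  linarith [this]

lemma sinh_div_mono {p q : ℝ} (hp : 0 < p) (hpq : p ≤ q) :
    Real.sinh p * q ≤ Real.sinh q * p := by
  have hq : 0 < q := lt_of_lt_of_le hp hpq
  have hmono : MonotoneOn (fun t => Real.sinh t / t) (Ioi (0:ℝ)) := by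
    apply monotoneOn_of_deriv_nonneg (convex_Ioi 0)
    · exact ContinuousOn.div Real.continuous_sinh.continuousOn continuousOn_id
        (fun s hs => ne_of_gt hs)
    · intro s hs
      rw [interior_Ioi] at hs
      exact ((Real.hasDerivAt_sinh s).div (hasDerivAt_id s) (ne_of_gt hs)).differentiableAt.differentiableWithinAt
    · intro s hs
      rw [interior_Ioi] at hs
      have hdv : HasDerivAt (fun t => Real.sinh t / t) ((Real.cosh s * s - Real.sinh s * 1)/ s^2) s :=
        (Real.hasDerivAt_sinh s).div (hasDerivAt_id s) (ne_of_gt hs)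
      rw [hdv.deriv]
      have := k_nonneg hs.le
      have h2 : (0:ℝ) < s ^ 2 := pow_pos hs 2
      apply div_nonneg _ h2.le
      simp only [id_eq, mul_one]
      nlinarith
  have := hmono (mem_Ioi.2 hp) (mem_Ioi.2 hq) hpq
  rw [div_le_div_iff₀ hp hq] at this
  linarith




section Phi
variable {β : ℝ} {φ : ℝ → ℝ}

lemma exp_add_exp_pos (a b : ℝ) : 0 < Real.exp a + Real.exp b :=
  add_pos (Real.exp_pos a) (Real.exp_pos b)

lemma phi_eq (hφ : ∀ u, φ u = β*u - 2*Real.log ((Real.exp (β*u)+Real.exp β)/(1+Real.exp β))) :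
    ∀ u, φ u = β*u - 2*(Real.log (Real.exp (β*u)+Real.exp β) - Real.log (1+Real.exp β)) := by
  intro u
  rw [hφ u, Real.log_div (ne_of_gt (exp_add_exp_pos _ _))
    (by positivity)]

lemma phi_hasDerivAt (hφ : ∀ u, φ u = β*u - 2*Real.log ((Real.exp (β*u)+Real.exp β)/(1+Real.exp β)))
    (u : ℝ) :
    HasDerivAt φ (β - 2*(Real.exp (β*u)*β)/(Real.exp (β*u)+Real.exp β)) u := by
  have hrw : φ = fun u => β*u - 2*(Real.log (Real.exp (β*u)+Real.exp β) - Real.log (1+Real.exp β)) :=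
    funext (phi_eq hφ)
  rw [hrw]
  have h1 : HasDerivAt (fun u : ℝ => β*u) (β*1) u := (hasDerivAt_id u).const_mul β
  have h2 : HasDerivAt (fun u : ℝ => Real.exp (β*u)) (Real.exp (β*u)*β) u := by
    simpa using h1.exp
  have h3 : HasDerivAt (fun u : ℝ => Real.exp (β*u) + Real.exp β) (Real.exp (β*u)*β) u :=
    h2.add_const _
  have h4 := (h3.log (ne_of_gt (exp_add_exp_pos _ _))).sub_const (Real.log (1+Real.exp β))
  have h5 := h1.sub (h4.const_mul 2)
  refine h5.congr_deriv ?_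
  field_simp

lemma phi_continuous (hφ : ∀ u, φ u = β*u - 2*Real.log ((Real.exp (β*u)+Real.exp β)/(1+Real.exp β))) :
    Continuous φ :=
  continuous_iff_continuousAt.2 fun u => (phi_hasDerivAt hφ u).differentiableAt.continuousAt

lemma phi_deriv (hφ : ∀ u, φ u = β*u - 2*Real.log ((Real.exp (β*u)+Real.exp β)/(1+Real.exp β)))
    (u : ℝ) :
    deriv φ u = β - 2*(Real.exp (β*u)*β)/(Real.exp (β*u)+Real.exp β) :=
  (phi_hasDerivAt hφ u).deriv

lemma exp_phi (hφ : ∀ u, φ u = β*u - 2*Real.log ((Real.exp (β*u)+Real.exp β)/(1+Real.exp β)))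
    (u : ℝ) :
    Real.exp (φ u) = Real.exp (β*u) * (1+Real.exp β)^2 / (Real.exp (β*u)+Real.exp β)^2 := by
  have hq : (0:ℝ) < (Real.exp (β*u)+Real.exp β)/(1+Real.exp β) :=
    div_pos (exp_add_exp_pos _ _) (by positivity)
  rw [hφ u, Real.exp_sub]
  rw [show (2:ℝ)*Real.log ((Real.exp (β*u)+Real.exp β)/(1+Real.exp β))
      = Real.log (((Real.exp (β*u)+Real.exp β)/(1+Real.exp β))^2) by
    rw [Real.log_pow]; push_cast; ring]
  rw [Real.exp_log (by positivity)]
  rw [div_pow, div_div_eq_mul_div]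

end Phi

section PhiInt
variable {β : ℝ} {φ : ℝ → ℝ}

lemma integral_exp_phi (hβ : β ≠ 0)
    (hφ : ∀ u, φ u = β*u - 2*Real.log ((Real.exp (β*u)+Real.exp β)/(1+Real.exp β))) :
    ∫ u in (0:ℝ)..1, Real.exp (φ u) = Real.sinh β / β := by
  set E := Real.exp β with hE
  have hEpos : 0 < E := Real.exp_pos β
  have hder : ∀ u ∈ uIcc (0:ℝ) 1,
      HasDerivAt (fun u => -(1+E)^2/(β*(Real.exp (β*u)+E))) (Real.exp (φ u)) u := by
    intro u _
    have h1 : HasDerivAt (fun u : ℝ => β*u) (β*1) u := (hasDerivAt_id u).const_mul β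
    have h2 : HasDerivAt (fun u : ℝ => Real.exp (β*u)) (Real.exp (β*u)*β) u := by
      simpa using h1.exp
    have h3 : HasDerivAt (fun u : ℝ => β*(Real.exp (β*u)+E)) (β*(Real.exp (β*u)*β)) u :=
      (h2.add_const E).const_mul β
    have hne : β*(Real.exp (β*u)+E) ≠ 0 :=
      mul_ne_zero hβ (ne_of_gt (add_pos (Real.exp_pos _) hEpos))
    have h4 := (h3.inv hne).const_mul (-(1+E)^2)
    refine h4.congr_deriv ?_
    rw [exp_phi hφ u, ← hE]
    have h5 : Real.exp (β*u) + E ≠ 0 := ne_of_gt (add_pos (Real.exp_pos _) hEpos)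
    field_simp
  rw [integral_eq_sub_of_hasDerivAt hder ((Real.continuous_exp.comp (phi_continuous hφ)).intervalIntegrable 0 1)]
  have h5 : Real.exp (β*1) = E := by rw [mul_one]
  have h6 : Real.exp (β*0) = 1 := by rw [mul_zero, Real.exp_zero]
  rw [h5, h6, Real.sinh_eq, Real.exp_neg, ← hE]
  have : (1:ℝ) + E ≠ 0 := by positivity
  field_simp
  ring

lemma integral_sq_deriv_phi (hβ : β ≠ 0)
    (hφ : ∀ u, φ u = β*u - 2*Real.log ((Real.exp (β*u)+Real.exp β)/(1+Real.exp β))) :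
    ∫ u in (0:ℝ)..1, (deriv φ u)^2 = β^2 + 2*β - 4*β*Real.exp β/(1+Real.exp β) := by
  set E := Real.exp β with hE
  have hEpos : 0 < E := Real.exp_pos β
  have hder : ∀ u ∈ uIcc (0:ℝ) 1,
      HasDerivAt (fun u => β^2*u + 4*β*E/(E+Real.exp (β*u))) ((deriv φ u)^2) u := by
    intro u _
    have h1 : HasDerivAt (fun u : ℝ => β*u) (β*1) u := (hasDerivAt_id u).const_mul β
    have h2 : HasDerivAt (fun u : ℝ => Real.exp (β*u)) (Real.exp (β*u)*β) u := by
      simpa using h1.exp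
    have h3 : HasDerivAt (fun u : ℝ => E + Real.exp (β*u)) (Real.exp (β*u)*β) u :=
      h2.const_add E
    have hne : E + Real.exp (β*u) ≠ 0 := ne_of_gt (add_pos hEpos (Real.exp_pos _))
    have h4 := (h3.inv hne).const_mul (4*β*E)
    have h5 : HasDerivAt (fun u : ℝ => β^2*u) (β^2*1) u := (hasDerivAt_id u).const_mul (β^2)
    have h6 := h5.add h4
    refine h6.congr_deriv ?_
    rw [phi_deriv hφ u, ← hE]
    have h7 : Real.exp (β*u) + E ≠ 0 := ne_of_gt (add_pos (Real.exp_pos _) hEpos)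
    field_simp
    ring
  have hcont : Continuous fun u => (deriv φ u)^2 := by
    have : (fun u => (deriv φ u)^2)
        = fun u => (β - 2*(Real.exp (β*u)*β)/(Real.exp (β*u)+Real.exp β))^2 := by
      funext u; rw [phi_deriv hφ u]
    rw [this]
    fun_prop (disch := intro u; exact ne_of_gt (add_pos (Real.exp_pos _) (Real.exp_pos _)))
  rw [integral_eq_sub_of_hasDerivAt hder (hcont.intervalIntegrable 0 1)]
  have h5 : Real.exp (β*1) = E := by rw [mul_one]
  have h6 : Real.exp (β*0) = 1 := by rw [mul_zero, Real.exp_zero]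
  rw [h5, h6]
  have h7 : (1:ℝ) + E ≠ 0 := by positivity
  have h8 : E + E ≠ 0 := by positivity
  have h9 : E + 1 ≠ 0 := by positivity
  field_simp
  ring

lemma energy_value (hβ : β ≠ 0) :
    (1/2) * (β^2 + 2*β - 4*β*Real.exp β/(1+Real.exp β)) = (1/2)*β^2 - β * Real.tanh (β/2) := by
  have hr : Real.exp β = Real.exp (β/2) * Real.exp (β/2) := by
    rw [← Real.exp_add]; ring_nf
  set r := Real.exp (β/2) with hrdef
  have hrpos : 0 < r := Real.exp_pos _
  rw [Real.tanh_eq_sinh_div_cosh, Real.sinh_eq, Real.cosh_eq, Real.exp_neg, ← hrdef, hr]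
  have h1 : (1:ℝ) + r*r ≠ 0 := by positivity
  have h2 : r ≠ 0 := ne_of_gt hrpos
  have h3 : (r + r⁻¹)/2 ≠ 0 := by positivity
  field_simp
  ring
end PhiInt




lemma chainFTC (g : ℝ → ℝ) (hg : IntervalIntegrable g volume 0 1)
    (α A : ℝ → ℝ) (K : ℝ) (hαc : Continuous α) (hαb : ∀ y, |α y| ≤ K) (b : ℝ)
    (hA : ∀ y < b, HasDerivAt A (α y) y)
    (hFb : ∀ t ∈ Icc (0:ℝ) 1, (∫ s in (0:ℝ)..t, g s) < b)
    (p q : ℝ) (hp : p ∈ Icc (0:ℝ) 1) (hq : q ∈ Icc (0:ℝ) 1) (hpq : p ≤ q) :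
    ∫ t in p..q, α (∫ s in (0:ℝ)..t, g s) * g t
      = A (∫ s in (0:ℝ)..q, g s) - A (∫ s in (0:ℝ)..p, g s) := by
  have hK0 : 0 ≤ K := le_trans (abs_nonneg _) (hαb 0)
  set F : ℝ → ℝ := fun t => ∫ s in (0:ℝ)..t, g s with hF
  have hIccpq : Icc p q ⊆ Icc (0:ℝ) 1 := Icc_subset_Icc hp.1 hq.2
  -- continuity of F on [0,1]
  have hFc : ContinuousOn F (Icc (0:ℝ) 1) := by
    have := intervalIntegral.continuousOn_primitive_interval'
      (μ := volume) (b₁ := (0:ℝ)) (b₂ := 1) (a := 0) hg (by rw [uIcc_of_le zero_le_one]; exact ⟨le_refl 0, zero_le_one⟩)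
    rwa [uIcc_of_le zero_le_one] at this
  -- uniform gap below b
  obtain ⟨t0, ht0, hmax⟩ := isCompact_Icc.exists_isMaxOn (nonempty_Icc.2 zero_le_one) hFc
  set δ : ℝ := b - F t0 with hδ
  have hδpos : 0 < δ := sub_pos.2 (hFb t0 ht0)
  have hFle : ∀ t ∈ Icc (0:ℝ) 1, F t ≤ b - δ := by
    intro t ht
    have h2 : F t ≤ F t0 := hmax ht
    simp only [hδ]
    linarith
  -- approximating sequence
  set g' : ℝ → ℝ := (Ioc (0:ℝ) 1).indicator g with hg'
  have hgIoc : IntegrableOn g (Ioc (0:ℝ) 1) volume :=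
    (intervalIntegrable_iff_integrableOn_Ioc_of_le zero_le_one).1 hg
  have hg'int : Integrable g' volume := (integrable_indicator_iff measurableSet_Ioc).2 hgIoc
  have hex : ∀ n : ℕ, ∃ h : ℝ → ℝ, Continuous h ∧ Integrable h volume ∧
      (∫ x, ‖g' x - h x‖) ≤ 1/((n:ℝ)+1) := by
    intro n
    obtain ⟨h, hsupp, hint, hcont, hinteg⟩ :=
      hg'int.exists_hasCompactSupport_integral_sub_le (ε := 1/((n:ℝ)+1)) (by positivity)
    exact ⟨h, hcont, hinteg, hint⟩
  choose gs hgsc hgsint hgsd using hex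
  set Fn : ℕ → ℝ → ℝ := fun n t => ∫ s in (0:ℝ)..t, gs n s with hFn
  -- closeness of integrals on subintervals
  have key0 : ∀ (n : ℕ) (r r' : ℝ), 0 ≤ r → r ≤ r' → r' ≤ 1 →
      (∫ t in r..r', |g t - gs n t|) ≤ 1/((n:ℝ)+1) := by
    intro n r r' h0r hrr' hr1
    have hsub : Ioc r r' ⊆ Ioc (0:ℝ) 1 := Ioc_subset_Ioc h0r hr1
    rw [intervalIntegral.integral_of_le hrr']
    have heq : ∀ x ∈ Ioc r r', |g x - gs n x| = ‖g' x - gs n x‖ := by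
      intro x hx
      rw [hg', indicator_of_mem (hsub hx), Real.norm_eq_abs]
    rw [setIntegral_congr_fun measurableSet_Ioc heq]
    have hint2 : Integrable (fun x => ‖g' x - gs n x‖) volume :=
      (hg'int.sub (hgsint n)).norm
    calc ∫ x in Ioc r r', ‖g' x - gs n x‖
        ≤ ∫ x, ‖g' x - gs n x‖ :=
          setIntegral_le_integral hint2 (Eventually.of_forall fun x => norm_nonneg _)
      _ ≤ 1/((n:ℝ)+1) := hgsd n
  have hgsII : ∀ n, IntervalIntegrable (gs n) volume 0 1 :=
    fun n => ((hgsc n).intervalIntegrable 0 1)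
  have hFnclose : ∀ (n : ℕ) (t : ℝ), t ∈ Icc (0:ℝ) 1 → |Fn n t - F t| ≤ 1/((n:ℝ)+1) := by
    intro n t ht
    have hsub : IntervalIntegrable g volume 0 t :=
      hg.mono_set (by rw [uIcc_of_le ht.1, uIcc_of_le zero_le_one]; exact Icc_subset_Icc le_rfl ht.2)
    have hsub2 : IntervalIntegrable (gs n) volume 0 t := (hgsc n).intervalIntegrable 0 t
    have : Fn n t - F t = ∫ s in (0:ℝ)..t, (gs n s - g s) := by
      rw [intervalIntegral.integral_sub hsub2 hsub]
    rw [this]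
    calc |∫ s in (0:ℝ)..t, (gs n s - g s)| ≤ ∫ s in (0:ℝ)..t, |gs n s - g s| :=
        intervalIntegral.abs_integral_le_integral_abs ht.1
      _ = ∫ s in (0:ℝ)..t, |g s - gs n s| := by
          congr 1; funext s; rw [abs_sub_comm]
      _ ≤ 1/((n:ℝ)+1) := key0 n 0 t le_rfl ht.1 ht.2
  -- limit statements
  have htend0 : Tendsto (fun n : ℕ => 1/((n:ℝ)+1)) atTop (𝓝 0) :=
    tendsto_one_div_add_atTop_nhds_zero_nat
  have hFnt : ∀ t ∈ Icc (0:ℝ) 1, Tendsto (fun n => Fn n t) atTop (𝓝 (F t)) := by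
    intro t ht
    have h1 : Tendsto (fun n => Fn n t - F t) atTop (𝓝 0) :=
      squeeze_zero_norm (fun n => hFnclose n t ht) htend0
    have h2 := h1.add (tendsto_const_nhds (x := F t))
    simpa using h2
  have hNev : ∀ᶠ n : ℕ in atTop, 1/((n:ℝ)+1) < δ := htend0.eventually_lt_const hδpos
  have hFnb : ∀ n : ℕ, 1/((n:ℝ)+1) < δ → ∀ t ∈ Icc (0:ℝ) 1, Fn n t < b := by
    intro n hn t ht
    have h1 := hFnclose n t ht
    have h2 := hFle t ht
    have h3 := (abs_lt.1 (lt_of_le_of_lt h1 hn)).2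
    linarith
  have hFncont : ∀ n : ℕ, Continuous (Fn n) := by
    intro n
    apply continuous_iff_continuousAt.2
    intro t
    exact (((hgsc n).integral_hasStrictDerivAt 0 t).hasDerivAt).differentiableAt.continuousAt
  have hub : uIcc p q ⊆ Icc (0:ℝ) 1 := by
    rw [uIcc_of_le hpq]; exact hIccpq
  have hid : ∀ᶠ n : ℕ in atTop,
      (∫ t in p..q, α (Fn n t) * gs n t) = A (Fn n q) - A (Fn n p) := by
    filter_upwards [hNev] with n hn
    have hFTC1 : ∀ t : ℝ, HasDerivAt (Fn n) (gs n t) t := fun t =>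
      ((hgsc n).integral_hasStrictDerivAt 0 t).hasDerivAt
    have hcomp : ∀ t ∈ uIcc p q, HasDerivAt (fun t => A (Fn n t)) (α (Fn n t) * gs n t) t := by
      intro t ht
      exact (hA _ (hFnb n hn t (hub ht))).comp t (hFTC1 t)
    have hcont : Continuous fun t => α (Fn n t) * gs n t :=
      (hαc.comp (hFncont n)).mul (hgsc n)
    exact integral_eq_sub_of_hasDerivAt hcomp (hcont.intervalIntegrable p q)
  have hAq : Tendsto (fun n => A (Fn n q)) atTop (𝓝 (A (F q))) :=
    ((hA _ (hFb q hq)).continuousAt.tendsto).comp (hFnt q hq)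
  have hAp : Tendsto (fun n => A (Fn n p)) atTop (𝓝 (A (F p))) :=
    ((hA _ (hFb p hp)).continuousAt.tendsto).comp (hFnt p hp)
  have hRHS : Tendsto (fun n => A (Fn n q) - A (Fn n p)) atTop (𝓝 (A (F q) - A (F p))) :=
    hAq.sub hAp
  -- LHS convergence
  have hgpq : IntervalIntegrable g volume p q := by
    apply hg.mono_set
    rw [uIcc_of_le hpq, uIcc_of_le zero_le_one]
    exact hIccpq
  have hint1 : ∀ n : ℕ, IntervalIntegrable (fun t => α (Fn n t) * (gs n t - g t)) volume p q :=
    fun n => IntervalIntegrable.continuousOn_mul (((hgsc n).intervalIntegrable p q).sub hgpq)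
      ((hαc.comp (hFncont n)).continuousOn)
  have hint2 : ∀ n : ℕ, IntervalIntegrable (fun t => α (Fn n t) * g t) volume p q :=
    fun n => IntervalIntegrable.continuousOn_mul hgpq ((hαc.comp (hFncont n)).continuousOn)
  have hsplit : ∀ n : ℕ, (∫ t in p..q, α (Fn n t) * gs n t)
      = (∫ t in p..q, α (Fn n t) * (gs n t - g t)) + ∫ t in p..q, α (Fn n t) * g t := by
    intro n
    rw [← intervalIntegral.integral_add (hint1 n) (hint2 n)]
    congr 1
    funext t
    ring
  have hT1 : Tendsto (fun n => ∫ t in p..q, α (Fn n t) * (gs n t - g t)) atTop (𝓝 0) := by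
    apply squeeze_zero_norm (a := fun n : ℕ => K * (1/((n:ℝ)+1)))
    · intro n
      calc ‖∫ t in p..q, α (Fn n t) * (gs n t - g t)‖
          ≤ ∫ t in p..q, |α (Fn n t) * (gs n t - g t)| := by
            rw [Real.norm_eq_abs]
            exact intervalIntegral.abs_integral_le_integral_abs hpq
        _ ≤ ∫ t in p..q, K * |gs n t - g t| := by
            apply intervalIntegral.integral_mono_on hpq ((hint1 n).abs)
              (((((hgsc n).intervalIntegrable p q).sub hgpq).abs).const_mul K)
            intro x _
            rw [abs_mul]
            exact mul_le_mul_of_nonneg_right (hαb _) (abs_nonneg _)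
        _ = K * ∫ t in p..q, |gs n t - g t| := intervalIntegral.integral_const_mul K _
        _ ≤ K * (1/((n:ℝ)+1)) := by
            have heq2 : (∫ t in p..q, |gs n t - g t|) = ∫ t in p..q, |g t - gs n t| := by
              congr 1; funext t; rw [abs_sub_comm]
            rw [heq2]
            exact mul_le_mul_of_nonneg_left (key0 n p q hp.1 hpq hq.2) hK0
    · simpa using htend0.const_mul K
  have hgm : AEStronglyMeasurable g (volume.restrict (uIoc p q)) := by
    have h1 := hgIoc.aestronglyMeasurable
    rw [uIoc_of_le hpq]
    exact h1.mono_measure (Measure.restrict_mono (Ioc_subset_Ioc hp.1 hq.2) le_rfl)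
  have hT2 : Tendsto (fun n => ∫ t in p..q, α (Fn n t) * g t) atTop
      (𝓝 (∫ t in p..q, α (F t) * g t)) := by
    apply intervalIntegral.tendsto_integral_filter_of_dominated_convergence
      (bound := fun t => K * |g t|)
    · exact Eventually.of_forall fun n =>
        ((hαc.comp (hFncont n)).aestronglyMeasurable).mul hgm
    · refine Eventually.of_forall fun n => Eventually.of_forall fun x _ => ?_
      rw [Real.norm_eq_abs, abs_mul]
      exact mul_le_mul_of_nonneg_right (hαb _) (abs_nonneg _)
    · exact (hgpq.abs).const_mul K
    · refine Eventually.of_forall fun x hx => ?_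
      have hxI : x ∈ Icc (0:ℝ) 1 := by
        rw [uIoc_of_le hpq] at hx
        exact hIccpq (Ioc_subset_Icc_self hx)
      exact ((hαc.tendsto (F x)).comp (hFnt x hxI)).mul_const (g x)
  have hLHS : Tendsto (fun n => ∫ t in p..q, α (Fn n t) * gs n t) atTop
      (𝓝 (∫ t in p..q, α (F t) * g t)) := by
    have := hT1.add hT2
    rw [zero_add] at this
    exact this.congr fun n => (hsplit n).symm
  exact tendsto_nhds_unique hLHS (hRHS.congr' (hid.mono fun n h => h.symm))




noncomputable def afun (μ a y : ℝ) : ℝ := Real.sqrt (2*μ) * Real.sqrt (a - Real.exp y)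

noncomputable def Afun (μ a y : ℝ) : ℝ :=
  Real.sqrt (2*μ) * (2*Real.sqrt (a - Real.exp y)
    - Real.sqrt a * (Real.log (Real.sqrt a + Real.sqrt (a - Real.exp y))
                   - Real.log (Real.sqrt a - Real.sqrt (a - Real.exp y))))

lemma afun_nonneg (μ a y : ℝ) : 0 ≤ afun μ a y :=
  mul_nonneg (Real.sqrt_nonneg _) (Real.sqrt_nonneg _)

lemma afun_continuous (μ a : ℝ) : Continuous (afun μ a) :=
  continuous_const.mul (Real.continuous_sqrt.comp (continuous_const.sub Real.continuous_exp))

lemma afun_bound (μ a y : ℝ) : |afun μ a y| ≤ Real.sqrt (2*μ) * Real.sqrt a := by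
  rw [abs_of_nonneg (afun_nonneg μ a y)]
  apply mul_le_mul_of_nonneg_left _ (Real.sqrt_nonneg _)
  apply Real.sqrt_le_sqrt
  have := Real.exp_pos y
  linarith

lemma Afun_hasDerivAt {μ a : ℝ} (ha : 0 < a) {y : ℝ} (hy : Real.exp y < a) :
    HasDerivAt (Afun μ a) (afun μ a y) y := by
  have h1 : 0 < a - Real.exp y := by linarith
  set t := Real.sqrt (a - Real.exp y) with htdef
  set s := Real.sqrt a with hsdef
  have htpos : 0 < t := Real.sqrt_pos.2 h1
  have hspos : 0 < s := Real.sqrt_pos.2 ha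
  have ht2 : t^2 = a - Real.exp y := Real.sq_sqrt h1.le
  have hs2 : s^2 = a := Real.sq_sqrt ha.le
  have hts : t < s := by
    rw [htdef, hsdef]
    exact Real.sqrt_lt_sqrt h1.le (by linarith [Real.exp_pos y])
  have hsub : 0 < s - t := by linarith
  have hadd : 0 < s + t := by linarith
  -- derivative of inner sqrt
  have hTder : HasDerivAt (fun y => Real.sqrt (a - Real.exp y)) (-Real.exp y/(2*t)) y := by
    have hin : HasDerivAt (fun y : ℝ => a - Real.exp y) (-Real.exp y) y :=
      (Real.hasDerivAt_exp y).const_sub a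
    have := hin.sqrt (ne_of_gt h1)
    simpa [htdef] using this
  have h3 := (hTder.const_add s).log (ne_of_gt hadd)
  have h4 := (hTder.const_sub s).log (ne_of_gt hsub)
  have h5 := (h3.sub h4).const_mul s
  have h6 := ((hTder.const_mul 2).sub h5).const_mul (Real.sqrt (2*μ))
  have heq : Afun μ a = fun y => Real.sqrt (2*μ) * (2*Real.sqrt (a - Real.exp y)
    - s * (Real.log (s + Real.sqrt (a - Real.exp y))
         - Real.log (s - Real.sqrt (a - Real.exp y)))) := rfl
  rw [heq]
  refine h6.congr_deriv ?_
  have hexp : Real.exp y = s^2 - t^2 := by rw [ht2, hs2]; ring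
  rw [afun, ← htdef, hexp]
  field_simp
  ring


lemma Afun_monotoneOn {μ a : ℝ} (ha : 0 < a) :
    MonotoneOn (Afun μ a) (Iio (Real.log a)) := by
  apply monotoneOn_of_deriv_nonneg (convex_Iio _)
  · intro y hy
    have hy' : Real.exp y < a := (Real.lt_log_iff_exp_lt ha).1 hy
    exact (Afun_hasDerivAt ha hy').differentiableAt.continuousAt.continuousWithinAt
  · intro y hy
    rw [interior_Iio] at hy
    have hy' : Real.exp y < a := (Real.lt_log_iff_exp_lt ha).1 hy
    exact (Afun_hasDerivAt ha hy').differentiableAt.differentiableWithinAt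
  · intro y hy
    rw [interior_Iio] at hy
    have hy' : Real.exp y < a := (Real.lt_log_iff_exp_lt ha).1 hy
    rw [(Afun_hasDerivAt ha hy').deriv]
    exact afun_nonneg _ _ _

lemma core (f g : ℝ → ℝ) (hAC : IsAC f g) {x μ a : ℝ} (hμ : 0 < μ)
    (hx : (∫ u in (0:ℝ)..1, Real.exp (f u)) = x)
    (T : ℝ) (hT : T ∈ Icc (0:ℝ) 1)
    (hTmax : ∀ t ∈ Icc (0:ℝ) 1, (∫ s in (0:ℝ)..t, g s) ≤ (∫ s in (0:ℝ)..T, g s))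
    (ha : Real.exp (∫ s in (0:ℝ)..T, g s) < a) :
    Afun μ a (∫ s in (0:ℝ)..T, g s) - Afun μ a 0 + μ*x - μ*a ≤ energy g := by
  obtain ⟨hgI, hg2I, hfF⟩ := hAC
  set F : ℝ → ℝ := fun t => ∫ s in (0:ℝ)..t, g s with hFdef
  set M : ℝ := F T with hMdef
  have ha0 : 0 < a := lt_trans (Real.exp_pos M) ha
  have hFle : ∀ t ∈ Icc (0:ℝ) 1, Real.exp (F t) ≤ Real.exp M :=
    fun t ht => Real.exp_le_exp.2 (hTmax t ht)
  have hFlta : ∀ t ∈ Icc (0:ℝ) 1, Real.exp (F t) < a :=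
    fun t ht => lt_of_le_of_lt (hFle t ht) ha
  have hFb : ∀ t ∈ Icc (0:ℝ) 1, F t < Real.log a :=
    fun t ht => (Real.lt_log_iff_exp_lt ha0).2 (hFlta t ht)
  have hA : ∀ y < Real.log a, HasDerivAt (Afun μ a) (afun μ a y) y :=
    fun y hy => Afun_hasDerivAt ha0 ((Real.lt_log_iff_exp_lt ha0).1 hy)
  have h01 : (0:ℝ) ∈ Icc (0:ℝ) 1 := ⟨le_rfl, zero_le_one⟩
  have h11 : (1:ℝ) ∈ Icc (0:ℝ) 1 := ⟨zero_le_one, le_rfl⟩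
  have hF0 : F 0 = 0 := intervalIntegral.integral_same
  -- the two chain-rule identities
  have I1 := chainFTC g hgI (afun μ a) (Afun μ a) (Real.sqrt (2*μ) * Real.sqrt a)
    (afun_continuous μ a) (afun_bound μ a) (Real.log a) hA hFb 0 T h01 hT hT.1
  have I2 := chainFTC g hgI (afun μ a) (Afun μ a) (Real.sqrt (2*μ) * Real.sqrt a)
    (afun_continuous μ a) (afun_bound μ a) (Real.log a) hA hFb T 1 hT h11 hT.2
  have I1' : (∫ t in (0:ℝ)..T, afun μ a (F t) * g t) = Afun μ a M - Afun μ a 0 := by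
    rw [show (∫ s in (0:ℝ)..(0:ℝ), g s) = 0 from intervalIntegral.integral_same] at I1
    exact I1
  have I2' : (∫ t in T..(1:ℝ), afun μ a (F t) * g t) = Afun μ a (F 1) - Afun μ a M := I2
  -- continuity of F on [0,1]
  have hFc : ContinuousOn F (Icc (0:ℝ) 1) := by
    have := intervalIntegral.continuousOn_primitive_interval'
      (μ := volume) (b₁ := (0:ℝ)) (b₂ := 1) (a := 0) hgI
      (by rw [uIcc_of_le zero_le_one]; exact h01)
    rwa [uIcc_of_le zero_le_one] at this
  have hsub1 : uIcc (0:ℝ) T ⊆ Icc (0:ℝ) 1 := by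
    rw [uIcc_of_le hT.1]; exact Icc_subset_Icc le_rfl hT.2
  have hsub2 : uIcc T (1:ℝ) ⊆ Icc (0:ℝ) 1 := by
    rw [uIcc_of_le hT.2]; exact Icc_subset_Icc hT.1 le_rfl
  have hsub1' : uIcc (0:ℝ) T ⊆ uIcc (0:ℝ) 1 := by rw [uIcc_of_le zero_le_one]; exact hsub1
  have hsub2' : uIcc T (1:ℝ) ⊆ uIcc (0:ℝ) 1 := by rw [uIcc_of_le zero_le_one]; exact hsub2
  -- integrability facts
  have hg1 : IntervalIntegrable g volume 0 T := hgI.mono_set hsub1'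
  have hg2 : IntervalIntegrable g volume T 1 := hgI.mono_set hsub2'
  have hαF1 : IntervalIntegrable (fun t => afun μ a (F t) * g t) volume 0 T :=
    hg1.continuousOn_mul (((afun_continuous μ a).comp_continuousOn (hFc.mono hsub1)))
  have hαF2 : IntervalIntegrable (fun t => afun μ a (F t) * g t) volume T 1 :=
    hg2.continuousOn_mul (((afun_continuous μ a).comp_continuousOn (hFc.mono hsub2)))
  have hexpF1 : IntervalIntegrable (fun t => a - Real.exp (F t)) volume 0 T :=
    (ContinuousOn.intervalIntegrable ((continuousOn_const.sub
      ((Real.continuous_exp.comp_continuousOn (hFc.mono hsub1))))))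
  have hexpF2 : IntervalIntegrable (fun t => a - Real.exp (F t)) volume T 1 :=
    (ContinuousOn.intervalIntegrable ((continuousOn_const.sub
      ((Real.continuous_exp.comp_continuousOn (hFc.mono hsub2))))))
  have hgsq1 : IntervalIntegrable (fun t => (g t)^2) volume 0 T := hg2I.mono_set hsub1'
  have hgsq2 : IntervalIntegrable (fun t => (g t)^2) volume T 1 := hg2I.mono_set hsub2'
  -- squared alpha identity
  have hα2 : ∀ t ∈ Icc (0:ℝ) 1, (afun μ a (F t))^2 = 2*μ*(a - Real.exp (F t)) := by
    intro t ht
    rw [afun, mul_pow, Real.sq_sqrt (by linarith : (0:ℝ) ≤ 2*μ),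
      Real.sq_sqrt (by linarith [hFlta t ht] : (0:ℝ) ≤ a - Real.exp (F t))]
  -- lower bound on [0,T]
  have hlow1 : (∫ t in (0:ℝ)..T, (2*(afun μ a (F t) * g t) - 2*μ*(a - Real.exp (F t))))
      ≤ ∫ t in (0:ℝ)..T, (g t)^2 := by
    apply intervalIntegral.integral_mono_on hT.1
      (((hαF1.const_mul 2)).sub (hexpF1.const_mul (2*μ))) hgsq1
    intro u hu
    have huI : u ∈ Icc (0:ℝ) 1 := Icc_subset_Icc le_rfl hT.2 hu
    nlinarith [sq_nonneg (g u - afun μ a (F u)), hα2 u huI]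
  have hlow2 : (∫ t in T..1, ((-2)*(afun μ a (F t) * g t) - 2*μ*(a - Real.exp (F t))))
      ≤ ∫ t in T..1, (g t)^2 := by
    apply intervalIntegral.integral_mono_on hT.2
      ((hαF2.const_mul (-2)).sub (hexpF2.const_mul (2*μ))) hgsq2
    intro u hu
    have huI : u ∈ Icc (0:ℝ) 1 := Icc_subset_Icc hT.1 le_rfl hu
    nlinarith [sq_nonneg (g u + afun μ a (F u)), hα2 u huI]
  -- compute the left-hand integrals
  have hL1 : (∫ t in (0:ℝ)..T, (2*(afun μ a (F t) * g t) - 2*μ*(a - Real.exp (F t))))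
      = 2*(Afun μ a M - Afun μ a 0) - 2*μ*(∫ t in (0:ℝ)..T, (a - Real.exp (F t))) := by
    rw [intervalIntegral.integral_sub (hαF1.const_mul 2) (hexpF1.const_mul (2*μ)),
      intervalIntegral.integral_const_mul, intervalIntegral.integral_const_mul, I1']
  have hL2 : (∫ t in T..1, ((-2)*(afun μ a (F t) * g t) - 2*μ*(a - Real.exp (F t))))
      = (-2)*(Afun μ a (F 1) - Afun μ a M) - 2*μ*(∫ t in T..1, (a - Real.exp (F t))) := by
    rw [intervalIntegral.integral_sub ((hαF2.const_mul (-2))) (hexpF2.const_mul (2*μ)),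
      intervalIntegral.integral_const_mul, intervalIntegral.integral_const_mul, I2']
  -- total integrals
  have hsq_split : (∫ t in (0:ℝ)..1, (g t)^2)
      = (∫ t in (0:ℝ)..T, (g t)^2) + ∫ t in T..1, (g t)^2 :=
    (intervalIntegral.integral_add_adjacent_intervals hgsq1 hgsq2).symm
  have hexp_split : (∫ t in (0:ℝ)..T, (a - Real.exp (F t))) + (∫ t in T..1, (a - Real.exp (F t)))
      = ∫ t in (0:ℝ)..1, (a - Real.exp (F t)) :=
    intervalIntegral.integral_add_adjacent_intervals hexpF1 hexpF2
  have hexpF01 : IntervalIntegrable (fun t => Real.exp (F t)) volume 0 1 :=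
    (Real.continuous_exp.comp_continuousOn
      (by rwa [uIcc_of_le zero_le_one] : ContinuousOn F (uIcc (0:ℝ) 1))).intervalIntegrable
  have hexp_tot : (∫ t in (0:ℝ)..1, (a - Real.exp (F t))) = a - x := by
    rw [intervalIntegral.integral_sub (intervalIntegrable_const) hexpF01]
    have hcongr : (∫ t in (0:ℝ)..1, Real.exp (F t)) = ∫ u in (0:ℝ)..1, Real.exp (f u) := by
      apply intervalIntegral.integral_congr
      intro t ht
      rw [uIcc_of_le zero_le_one] at ht
      show Real.exp (F t) = Real.exp (f t)
      rw [hfF t ht]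
    rw [hcongr, hx]
    simp
  -- monotonicity: A (F 1) ≤ A M
  have hmono : Afun μ a (F 1) ≤ Afun μ a M :=
    Afun_monotoneOn ha0 (mem_Iio.2 (hFb 1 h11)) (mem_Iio.2 (hFb T hT)) (hTmax 1 h11)
  -- put everything together
  rw [energy]
  nlinarith [hlow1, hlow2, hL1, hL2, hsq_split, hexp_split, hexp_tot, hmono, hμ.le]




noncomputable def LBf (x t : ℝ) : ℝ :=
  (t*Real.cosh (t/2) - 2*Real.sinh (t/2))^2 / (2*(Real.cosh (t/2)^2 - x))

lemma LBf_hasDerivAt (x t : ℝ) (hden : Real.cosh (t/2)^2 - x ≠ 0) :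
    HasDerivAt (LBf x)
      ((2*Real.sinh (t/2)*((t*Real.cosh (t/2) - 2*Real.sinh (t/2))
        *(2*Real.cosh (t/2)*Real.sinh (t/2) - t*x)))
        / (2*(Real.cosh (t/2)^2 - x))^2) t := by
  have hhalf : HasDerivAt (fun t : ℝ => t/2) (1/2) t := (hasDerivAt_id t).div_const 2
  have hc : HasDerivAt (fun t : ℝ => Real.cosh (t/2)) (Real.sinh (t/2) * (1/2)) t := hhalf.cosh
  have hs : HasDerivAt (fun t : ℝ => Real.sinh (t/2)) (Real.cosh (t/2) * (1/2)) t := hhalf.sinh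
  have hN : HasDerivAt (fun t : ℝ => (t*Real.cosh (t/2) - 2*Real.sinh (t/2))^2)
      (2*(t*Real.cosh (t/2) - 2*Real.sinh (t/2))^1
        *(1*Real.cosh (t/2) + t*(Real.sinh (t/2)*(1/2)) - 2*(Real.cosh (t/2)*(1/2)))) t := by
    exact (((hasDerivAt_id t).mul hc).sub (hs.const_mul 2)).pow 2
  have hD : HasDerivAt (fun t : ℝ => 2*(Real.cosh (t/2)^2 - x))
      (2*((2:ℕ)*Real.cosh (t/2)^(2-1)*(Real.sinh (t/2)*(1/2)))) t := by
    exact ((hc.pow 2).sub_const x).const_mul 2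
  have hden2 : 2*(Real.cosh (t/2)^2 - x) ≠ 0 := by
    intro h; apply hden; linarith
  have hdiv := hN.div hD hden2
  show HasDerivAt (fun t : ℝ => (t*Real.cosh (t/2) - 2*Real.sinh (t/2))^2
    / (2*(Real.cosh (t/2)^2 - x))) _ t
  refine hdiv.congr_deriv ?_
  ring

lemma LBf_monotoneOn {x β : ℝ} (hβ : 0 < β) (hsinh : Real.sinh β = β * x)
    (hden : x < Real.cosh (β/2)^2) :
    MonotoneOn (LBf x) (Ici β) := by
  have hdenpos : ∀ t ∈ Ici β, x < Real.cosh (t/2)^2 := by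
    intro t ht
    have h2 : Real.cosh (β/2) ≤ Real.cosh (t/2) := by
      rw [Real.cosh_le_cosh]
      rw [abs_of_pos (by linarith : (0:ℝ) < β/2), abs_of_pos (by linarith [lt_of_lt_of_le hβ ht] : (0:ℝ) < t/2)]
      linarith [mem_Ici.1 ht]
    have h3 : Real.cosh (β/2) > 0 := Real.cosh_pos _
    nlinarith
  apply monotoneOn_of_deriv_nonneg (convex_Ici β)
  · intro t ht
    exact (LBf_hasDerivAt x t (ne_of_gt (by linarith [hdenpos t ht]))).differentiableAt.continuousAt.continuousWithinAt
  · intro t ht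
    rw [interior_Ici] at ht
    exact (LBf_hasDerivAt x t (ne_of_gt (by linarith [hdenpos t (mem_Ici.2 (le_of_lt (mem_Ioi.1 ht)))]))).differentiableAt.differentiableWithinAt
  · intro t ht
    rw [interior_Ici] at ht
    have htβ : β ≤ t := ht.le
    have ht0 : 0 < t := lt_of_lt_of_le hβ htβ
    rw [(LBf_hasDerivAt x t (ne_of_gt (by linarith [hdenpos t htβ]))).deriv]
    apply div_nonneg _ (sq_nonneg _)
    have h1 : 0 ≤ Real.sinh (t/2) := Real.sinh_nonneg_iff.2 (by linarith)
    have h2 : 2*Real.sinh (t/2) ≤ t*Real.cosh (t/2) := by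
      have := k_nonneg (by linarith : (0:ℝ) ≤ t/2)
      nlinarith
    have h3 : t*x ≤ 2*Real.cosh (t/2)*Real.sinh (t/2) := by
      have hst : Real.sinh β * t ≤ Real.sinh t * β := sinh_div_mono hβ htβ
      have h4 : Real.sinh t = 2*Real.sinh (t/2)*Real.cosh (t/2) := by
        have := Real.sinh_two_mul (t/2)
        rw [show 2*(t/2) = t by ring] at this
        linarith
      rw [hsinh] at hst
      nlinarith
    have := mul_nonneg (mul_nonneg h1 (sub_nonneg.2 h2)) (sub_nonneg.2 h3)
    nlinarith

lemma LBf_antitoneOn {x β γ : ℝ} (hγ : 0 < γ) (hγβ : γ ≤ β) (hsinh : Real.sinh β = β * x)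
    (hden : x < Real.cosh (γ/2)^2) :
    AntitoneOn (LBf x) (Icc γ β) := by
  have hdenpos : ∀ t ∈ Icc γ β, x < Real.cosh (t/2)^2 := by
    intro t ht
    have h2 : Real.cosh (γ/2) ≤ Real.cosh (t/2) := by
      rw [Real.cosh_le_cosh]
      rw [abs_of_pos (by linarith : (0:ℝ) < γ/2),
        abs_of_pos (by linarith [lt_of_lt_of_le hγ ht.1] : (0:ℝ) < t/2)]
      linarith [ht.1]
    have h3 : Real.cosh (γ/2) > 0 := Real.cosh_pos _
    nlinarith
  apply antitoneOn_of_deriv_nonpos (convex_Icc γ β)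
  · intro t ht
    exact (LBf_hasDerivAt x t (ne_of_gt (by linarith [hdenpos t ht]))).differentiableAt.continuousAt.continuousWithinAt
  · intro t ht
    have ht' := interior_subset ht
    exact (LBf_hasDerivAt x t (ne_of_gt (by linarith [hdenpos t ht']))).differentiableAt.differentiableWithinAt
  · intro t ht
    rw [interior_Icc] at ht
    have ht0 : 0 < t := lt_of_lt_of_le hγ ht.1.le
    rw [(LBf_hasDerivAt x t (ne_of_gt (by linarith [hdenpos t ⟨ht.1.le, ht.2.le⟩]))).deriv]
    apply div_nonpos_of_nonpos_of_nonneg _ (sq_nonneg _)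
    have h1 : 0 ≤ Real.sinh (t/2) := Real.sinh_nonneg_iff.2 (by linarith)
    have h2 : 2*Real.sinh (t/2) ≤ t*Real.cosh (t/2) := by
      have := k_nonneg (by linarith : (0:ℝ) ≤ t/2)
      nlinarith
    have h3 : 2*Real.cosh (t/2)*Real.sinh (t/2) ≤ t*x := by
      have hst : Real.sinh t * β ≤ Real.sinh β * t := sinh_div_mono ht0 ht.2.le
      have h4 : Real.sinh t = 2*Real.sinh (t/2)*Real.cosh (t/2) := by
        have := Real.sinh_two_mul (t/2)
        rw [show 2*(t/2) = t by ring] at this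
        linarith
      rw [hsinh] at hst
      nlinarith
    have := mul_nonneg (mul_nonneg h1 (sub_nonneg.2 h2)) (sub_nonneg.2 h3)
    nlinarith




lemma LBf_at_beta {x β : ℝ} (hβ : 0 < β) (hsinh : Real.sinh β = β * x) :
    LBf x β = (1/2)*β^2 - β*Real.tanh (β/2) := by
  have hc : 0 < Real.cosh (β/2) := Real.cosh_pos _
  have hG : 0 < β*Real.cosh (β/2) - 2*Real.sinh (β/2) := by
    have := sinh_lt_mul_cosh (by linarith : (0:ℝ) < β/2)
    nlinarith
  have hx : x = 2*Real.sinh (β/2)*Real.cosh (β/2)/β := by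
    have h4 : Real.sinh β = 2*Real.sinh (β/2)*Real.cosh (β/2) := by
      have := Real.sinh_two_mul (β/2)
      rw [show 2*(β/2) = β by ring] at this
      linarith
    rw [h4] at hsinh
    field_simp at hsinh ⊢
    linarith
  rw [LBf, Real.tanh_eq_sinh_div_cosh]
  have hden_pos : 0 < 2*(Real.cosh (β/2)^2 - x) := by
    rw [hx]
    have h9 : Real.cosh (β/2)^2 - 2*Real.sinh (β/2)*Real.cosh (β/2)/β
        = Real.cosh (β/2)*(β*Real.cosh (β/2) - 2*Real.sinh (β/2))/β := by
      field_simp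
    nlinarith [mul_pos hc hG, div_pos (mul_pos hc hG) hβ]
  rw [div_eq_iff (ne_of_gt hden_pos), hx]
  field_simp

lemma energy_lower_bound {x β : ℝ} (hβ : 0 < β) (hsx : Real.sinh β / β = x)
    (f g : ℝ → ℝ) (hAC : IsAC f g)
    (hint : (∫ u in (0:ℝ)..1, Real.exp (f u)) = x) :
    (1/2)*β^2 - β*Real.tanh (β/2) ≤ energy g := by
  have hsinh : Real.sinh β = β * x := by
    field_simp at hsx; linarith
  have hx1 : 1 < x := by
    have h1 : β < Real.sinh β := Real.self_lt_sinh_iff.2 hβ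
    rw [← hsx]
    rw [lt_div_iff₀ hβ]
    linarith
  obtain ⟨hgI, hg2I, hfF⟩ := hAC
  set F : ℝ → ℝ := fun t => ∫ s in (0:ℝ)..t, g s with hFdef
  have h01 : (0:ℝ) ∈ Icc (0:ℝ) 1 := ⟨le_rfl, zero_le_one⟩
  have hFc : ContinuousOn F (Icc (0:ℝ) 1) := by
    have := intervalIntegral.continuousOn_primitive_interval'
      (μ := volume) (b₁ := (0:ℝ)) (b₂ := 1) (a := 0) hgI
      (by rw [uIcc_of_le zero_le_one]; exact h01)
    rwa [uIcc_of_le zero_le_one] at this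
  obtain ⟨T, hT, hTmax'⟩ := isCompact_Icc.exists_isMaxOn (nonempty_Icc.2 zero_le_one) hFc
  have hTmax : ∀ t ∈ Icc (0:ℝ) 1, F t ≤ F T := fun t ht => hTmax' ht
  set M : ℝ := F T with hMdef
  have hF0 : F 0 = 0 := intervalIntegral.integral_same
  -- total integral of exp ∘ F
  have hexpFc : ContinuousOn (fun t => Real.exp (F t)) (Icc (0:ℝ) 1) :=
    Real.continuous_exp.comp_continuousOn hFc
  have hFtot : (∫ t in (0:ℝ)..1, Real.exp (F t)) = x := by
    rw [← hint]
    apply intervalIntegral.integral_congr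
    intro t ht
    rw [uIcc_of_le zero_le_one] at ht
    show Real.exp (F t) = Real.exp (f t)
    rw [hfF t ht]
  -- strict bound x < exp M
  have hxle : x ≤ Real.exp M := by
    rw [← hFtot]
    calc (∫ t in (0:ℝ)..1, Real.exp (F t)) ≤ ∫ _t in (0:ℝ)..1, Real.exp M := by
          apply intervalIntegral.integral_mono_on zero_le_one
            (ContinuousOn.intervalIntegrable
              (by rw [uIcc_of_le zero_le_one]; exact hexpFc)) intervalIntegrable_const
          exact fun u hu => Real.exp_le_exp.2 (hTmax u hu)
      _ = Real.exp M := by simp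
  have hstrict : x < Real.exp M := by
    rcases lt_or_eq_of_le hxle with h | h
    · exact h
    · exfalso
      have h1M : 1 < Real.exp M := by rw [← h]; exact hx1
      have hlt : (∫ t in (0:ℝ)..1, Real.exp (F t)) < ∫ _t in (0:ℝ)..1, Real.exp M := by
        apply intervalIntegral.integral_lt_integral_of_continuousOn_of_le_of_exists_lt
          zero_lt_one hexpFc continuousOn_const
        · exact fun u hu => Real.exp_le_exp.2 (hTmax u (Ioc_subset_Icc_self hu))
        · exact ⟨0, h01, by rw [hF0, Real.exp_zero]; exact h1M⟩
      rw [hFtot] at hlt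
      simp at hlt
      linarith
  have hM0 : 0 < M := by
    by_contra h
    push_neg at h
    have : Real.exp M ≤ 1 := Real.exp_le_one_iff.2 h
    linarith
  -- gamma and friends
  set s : ℝ := Real.sqrt (Real.exp M - 1) with hsdef
  set γ : ℝ := 2 * Real.arsinh s with hγdef
  have heM1 : 1 < Real.exp M := by linarith
  have hspos : 0 < s := Real.sqrt_pos.2 (by linarith)
  have hγpos : 0 < γ := by
    have := Real.arsinh_pos_iff.2 hspos
    rw [hγdef]; linarith
  have hγ2 : γ/2 = Real.arsinh s := by rw [hγdef]; ring
  have hsγ : Real.sinh (γ/2) = s := by rw [hγ2, Real.sinh_arsinh]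
  set c : ℝ := Real.cosh (γ/2) with hcdef
  have hcpos : 0 < c := Real.cosh_pos _
  have hs2 : s^2 = Real.exp M - 1 := Real.sq_sqrt (by linarith)
  have hc2 : c^2 = Real.exp M := by
    rw [hcdef, Real.cosh_sq, hsγ, hs2]; ring
  have hsqc : Real.sqrt (Real.exp M) = c := by
    rw [← hc2, Real.sqrt_sq hcpos.le]
  have hd : 0 < Real.exp M - x := by linarith
  set G : ℝ := γ*c - 2*s with hGdef
  have hGpos : 0 < G := by
    have h1 := sinh_lt_mul_cosh (by linarith : (0:ℝ) < γ/2)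
    rw [hsγ] at h1
    rw [hGdef]
    rw [← hcdef] at h1
    nlinarith
  set μ : ℝ := (G/(Real.exp M - x))^2/2 with hμdef
  have hμpos : 0 < μ := by
    rw [hμdef]
    have : G/(Real.exp M - x) > 0 := div_pos hGpos hd
    positivity
  have hsq2μ : Real.sqrt (2*μ) = G/(Real.exp M - x) := by
    rw [hμdef, show 2*((G/(Real.exp M - x))^2/2) = (G/(Real.exp M - x))^2 by ring,
      Real.sqrt_sq (le_of_lt (div_pos hGpos hd))]
  -- eventual bound from core
  have hev : ∀ᶠ a in 𝓝[>] (Real.exp M),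
      Afun μ a M - Afun μ a 0 + μ*x - μ*a ≤ energy g := by
    apply eventually_nhdsWithin_of_forall
    intro a ha
    exact core f g ⟨hgI, hg2I, hfF⟩ hμpos hint T hT hTmax (mem_Ioi.1 ha)
  -- continuity at exp M
  set p : ℝ := Real.exp M with hpdef
  have hppos : 0 < p := Real.exp_pos M
  have hsqrtp : Real.sqrt p = c := hsqc
  have hCA : ContinuousAt (fun a => Afun μ a M - Afun μ a 0 + μ*x - μ*a) p := by
    have hgen : ∀ y : ℝ, Real.sqrt p - Real.sqrt (p - Real.exp y) ≠ 0 →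
        Real.sqrt p + Real.sqrt (p - Real.exp y) ≠ 0 →
        ContinuousAt (fun a => Afun μ a y) p := by
      intro y hne1 hne2
      apply ContinuousAt.mul continuousAt_const
      have hsq1 : ContinuousAt (fun a : ℝ => Real.sqrt (a - Real.exp y)) p :=
        (Real.continuous_sqrt.comp (continuous_id.sub continuous_const)).continuousAt
      have hsq2 : ContinuousAt (fun a : ℝ => Real.sqrt a) p := Real.continuous_sqrt.continuousAt
      apply ContinuousAt.sub
      · exact hsq1.const_mul 2
      apply hsq2.mul
      apply ContinuousAt.sub
      · exact (hsq2.add hsq1).log hne2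
      · exact (hsq2.sub hsq1).log hne1
    have hsub0 : p - Real.exp M = 0 := by rw [hpdef]; ring
    have hAM : ContinuousAt (fun a => Afun μ a M) p := by
      apply hgen M
      · rw [hsub0, Real.sqrt_zero, sub_zero, hsqrtp]; exact ne_of_gt hcpos
      · rw [hsub0, Real.sqrt_zero, add_zero, hsqrtp]; exact ne_of_gt hcpos
    have hsub1 : p - Real.exp 0 = Real.exp M - 1 := by rw [hpdef, Real.exp_zero]
    have hA0 : ContinuousAt (fun a => Afun μ a 0) p := by
      apply hgen 0
      · rw [hsub1, ← hsdef, hsqrtp]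
        have : c - s = Real.exp (-(γ/2)) := by
          rw [← Real.cosh_sub_sinh (γ/2), hsγ, hcdef]
        rw [this]
        exact ne_of_gt (Real.exp_pos _)
      · rw [hsub1, ← hsdef, hsqrtp]
        positivity
    exact ((hAM.sub hA0).add continuousAt_const).sub (continuousAt_id.const_mul μ)
  -- the limit value
  have hval : Afun μ p M - Afun μ p 0 + μ*x - μ*p = LBf x γ := by
    have h1 : Afun μ p M = 0 := by
      rw [Afun, show p - Real.exp M = 0 by rw [hpdef]; ring, Real.sqrt_zero]
      simp
    have h2 : Afun μ p 0 = Real.sqrt (2*μ) * (2*s - c*γ) := by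
      rw [Afun, show p - Real.exp 0 = Real.exp M - 1 by rw [hpdef, Real.exp_zero], ← hsdef,
        hsqrtp]
      congr 2
      rw [show c + s = Real.exp (γ/2) by rw [← Real.cosh_add_sinh (γ/2), hsγ, hcdef],
        show c - s = Real.exp (-(γ/2)) by rw [← Real.cosh_sub_sinh (γ/2), hsγ, hcdef],
        Real.log_exp, Real.log_exp]
      ring
    rw [h1, h2, hsq2μ, LBf, ← hcdef, hsγ, hc2, hμdef, hGdef]
    have hdne : p - x ≠ 0 := ne_of_gt hd
    field_simp
    ring
  -- pass to the limit
  have htend : Tendsto (fun a => Afun μ a M - Afun μ a 0 + μ*x - μ*a) (𝓝[>] p)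
      (𝓝 (LBf x γ)) := by
    rw [← hval]
    exact hCA.continuousWithinAt.tendsto
  have hLB : LBf x γ ≤ energy g := le_of_tendsto htend hev
  -- compare LBf x γ with LBf x β
  have hcoshβ : x < Real.cosh (β/2)^2 := by
    have h1 := sinh_lt_mul_cosh (by linarith : (0:ℝ) < β/2)
    have h4 : Real.sinh β = 2*Real.sinh (β/2)*Real.cosh (β/2) := by
      have := Real.sinh_two_mul (β/2)
      rw [show 2*(β/2) = β by ring] at this
      linarith
    have hcb : 0 < Real.cosh (β/2) := Real.cosh_pos _
    have hsb : 0 ≤ Real.sinh (β/2) := Real.sinh_nonneg_iff.2 (by linarith)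
    nlinarith [hsinh]
  have hfinal : LBf x β ≤ LBf x γ := by
    rcases le_total β γ with h | h
    · exact LBf_monotoneOn hβ hsinh hcoshβ (mem_Ici.2 le_rfl) (mem_Ici.2 h) h
    · have hcoshγ : x < Real.cosh (γ/2)^2 := by rw [hc2]; exact hstrict
      exact LBf_antitoneOn hγpos h hsinh hcoshγ ⟨le_rfl, h⟩ ⟨h, le_rfl⟩ h
  calc (1/2)*β^2 - β*Real.tanh (β/2) = LBf x β := (LBf_at_beta hβ hsinh).symm
    _ ≤ LBf x γ := hfinal
    _ ≤ energy g := hLB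


/-- For `x ≥ 1` and `β ≥ 0` with `sinh(β)/β = x` (convention `1` at `β = 0`),
the path `φ(u) = βu − 2·log((e^{βu} + e^β)/(1 + e^β))` satisfies `φ(0) = 0`,
`∫₀¹ exp(φ(u)) du = x`, has energy `(1/2)β² − β·tanh(β/2)`, and attains the infimum
defining `J_BS(x)`. -/
theorem JBS_optimal_path_right (x β : ℝ) (hx : 1 ≤ x) (hβ : 0 ≤ β)
    (hconv : β = 0 → x = 1) (heq : β ≠ 0 → Real.sinh β / β = x)
    (φ : ℝ → ℝ)
    (hφ : ∀ u, φ u = β * u - 2 * Real.log ((Real.exp (β * u) + Real.exp β) / (1 + Real.exp β))) :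
    φ 0 = 0 ∧
    (∫ u in (0:ℝ)..1, Real.exp (φ u)) = x ∧
    (1 / 2) * (∫ u in (0:ℝ)..1, (deriv φ u) ^ 2) = (1 / 2) * β ^ 2 - β * Real.tanh (β / 2) ∧
    JBS x = (1 / 2) * β ^ 2 - β * Real.tanh (β / 2) := by
  have hone : (0:ℝ) < 1 + Real.exp β := by positivity
  have hphi0 : φ 0 = 0 := by
    rw [hφ 0, mul_zero, Real.exp_zero, div_self (ne_of_gt hone), Real.log_one]
    ring
  by_cases hb0 : β = 0
  · -- degenerate case
    have hx1 : x = 1 := hconv hb0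
    subst hb0
    have hphi_all : ∀ u, φ u = 0 := by
      intro u
      rw [hφ u, zero_mul, Real.exp_zero, div_self (by norm_num : (1:ℝ)+1 ≠ 0), Real.log_one]
      ring
    have hφf : φ = fun _ => (0:ℝ) := funext hphi_all
    refine ⟨hphi0, ?_, ?_, ?_⟩
    · rw [hφf]
      simp [hx1]
    · rw [hφf]
      norm_num
    · have hmem : (0:ℝ) ∈ { E | ∃ f g : ℝ → ℝ, IsAC f g ∧
          (∫ u in (0:ℝ)..1, Real.exp (f u)) = x ∧ E = energy g } := by
        refine ⟨fun _ => (0:ℝ), fun _ => (0:ℝ), ⟨intervalIntegrable_const,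
          by simpa using (intervalIntegrable_const (μ := volume) (a := (0:ℝ)) (b := 1)
            (c := (0:ℝ))), fun t _ => by simp⟩, by simp [hx1], by rw [energy]; simp⟩
      have hlb : ∀ E ∈ { E | ∃ f g : ℝ → ℝ, IsAC f g ∧
          (∫ u in (0:ℝ)..1, Real.exp (f u)) = x ∧ E = energy g }, (0:ℝ) ≤ E := by
        rintro E ⟨f, g, hAC, _, rfl⟩
        rw [energy]
        apply mul_nonneg (by norm_num)
        exact intervalIntegral.integral_nonneg zero_le_one (fun u _ => sq_nonneg _)
      have hv0 : (1/2)*(0:ℝ)^2 - 0*Real.tanh (0/2) = 0 := by norm_num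
      rw [JBS, hv0]
      exact le_antisymm (csInf_le ⟨0, hlb⟩ hmem) (le_csInf ⟨0, hmem⟩ hlb)
  · -- main case
    have hβpos : 0 < β := lt_of_le_of_ne hβ (Ne.symm hb0)
    have hsx : Real.sinh β / β = x := heq hb0
    have hint : (∫ u in (0:ℝ)..1, Real.exp (φ u)) = x := by
      rw [integral_exp_phi hb0 hφ, hsx]
    have hsq : (1/2) * (∫ u in (0:ℝ)..1, (deriv φ u)^2)
        = (1/2)*β^2 - β*Real.tanh (β/2) := by
      rw [integral_sq_deriv_phi hb0 hφ]
      exact energy_value hb0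
    refine ⟨hphi0, hint, hsq, ?_⟩
    -- the variational characterization
    have hdcont : Continuous (deriv φ) := by
      have : deriv φ = fun u => β - 2*(Real.exp (β*u)*β)/(Real.exp (β*u)+Real.exp β) :=
        funext (phi_deriv hφ)
      rw [this]
      fun_prop (disch := intro u; exact ne_of_gt (exp_add_exp_pos _ _))
    have hIsAC : IsAC φ (deriv φ) := by
      refine ⟨hdcont.intervalIntegrable 0 1, ((hdcont.pow 2).intervalIntegrable 0 1), ?_⟩
      intro t _
      have hftc : (∫ s in (0:ℝ)..t, deriv φ s) = φ t - φ 0 := by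
        apply intervalIntegral.integral_eq_sub_of_hasDerivAt
        · intro u _
          rw [phi_deriv hφ u]
          exact phi_hasDerivAt hφ u
        · exact hdcont.intervalIntegrable 0 t
      rw [hftc, hphi0, sub_zero]
    have hmem : ((1/2)*β^2 - β*Real.tanh (β/2)) ∈ { E | ∃ f g : ℝ → ℝ, IsAC f g ∧
        (∫ u in (0:ℝ)..1, Real.exp (f u)) = x ∧ E = energy g } := by
      refine ⟨φ, deriv φ, hIsAC, hint, ?_⟩
      rw [energy]
      exact hsq.symm
    have hlb : ∀ E ∈ { E | ∃ f g : ℝ → ℝ, IsAC f g ∧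
        (∫ u in (0:ℝ)..1, Real.exp (f u)) = x ∧ E = energy g },
        (1/2)*β^2 - β*Real.tanh (β/2) ≤ E := by
      rintro E ⟨f, g, hAC, hintf, rfl⟩
      exact energy_lower_bound hβpos hsx f g hAC hintf
    rw [JBS]
    exact le_antisymm (csInf_le ⟨_, hlb⟩ hmem) (le_csInf ⟨_, hmem⟩ hlb)
end

section
/- Let 0 < x < 1 and let ξ ∈ (0, π/2) satisfy sin(2ξ)/(2ξ) = x. Define φ : [0,1] → ℝ by φ(u) = log( cos²(ξ) / cos²(ξ(u−1)) ). Then φ(0) = 0, ∫₀¹ exp(φ(u)) du = x, (1/2)∫₀¹ (φ'(u))² du = 2ξ·(tan(ξ) − ξ), and this value equals J_BS(x); that is, φ attains the infimum defining J_BS(x). -/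
open MeasureTheory Set

namespace JBSaux

variable {ξ : ℝ}

/-- The optimal path. -/
noncomputable def ph (ξ : ℝ) : ℝ → ℝ :=
  fun u => Real.log (Real.cos ξ ^ 2 / Real.cos (ξ * (u - 1)) ^ 2)

/-- Its derivative. -/
noncomputable def gs (ξ : ℝ) : ℝ → ℝ := fun u => 2 * ξ * Real.tan (ξ * (u - 1))

lemma cos_pos (hξ : ξ ∈ Ioo (0:ℝ) (Real.pi/2)) {u : ℝ} (hu : u ∈ Icc (0:ℝ) 1) :
    0 < Real.cos (ξ * (u - 1)) := by
  apply Real.cos_pos_of_mem_Ioo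
  obtain ⟨h0, h2⟩ := hξ
  obtain ⟨hu0, hu1⟩ := hu
  constructor
  · nlinarith
  · nlinarith [Real.pi_pos]

lemma cosξ_pos (hξ : ξ ∈ Ioo (0:ℝ) (Real.pi/2)) : 0 < Real.cos ξ := by
  apply Real.cos_pos_of_mem_Ioo
  constructor
  · nlinarith [hξ.1, Real.pi_pos]
  · exact hξ.2

lemma cos_le (hξ : ξ ∈ Ioo (0:ℝ) (Real.pi/2)) {u : ℝ} (hu : u ∈ Icc (0:ℝ) 1) :
    Real.cos ξ ≤ Real.cos (ξ * (u - 1)) := by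
  rw [show ξ * (u - 1) = -(ξ * (1 - u)) by ring, Real.cos_neg]
  apply Real.cos_le_cos_of_nonneg_of_le_pi
  · nlinarith [hξ.1, hu.2]
  · nlinarith [Real.pi_pos, hξ.2]
  · nlinarith [hξ.1, hu.1]

lemma hasDerivAt_lin (ξ u : ℝ) : HasDerivAt (fun u : ℝ => ξ * (u - 1)) ξ u := by
  simpa using ((hasDerivAt_id u).sub_const 1).const_mul ξ

lemma hasDerivAt_tan_comp {u : ℝ} (h : Real.cos (ξ * (u - 1)) ≠ 0) :
    HasDerivAt (fun u => Real.tan (ξ * (u - 1))) (ξ / Real.cos (ξ * (u - 1)) ^ 2) u := by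
  have := (Real.hasDerivAt_tan h).comp u (hasDerivAt_lin ξ u)
  refine this.congr_deriv ?_
  ring

lemma hasDerivAt_ph {u : ℝ} (hξc : Real.cos ξ ≠ 0) (h : 0 < Real.cos (ξ * (u - 1))) :
    HasDerivAt (ph ξ) (gs ξ u) u := by
  have hcos : HasDerivAt (fun u => Real.cos (ξ * (u - 1)))
      (-Real.sin (ξ * (u - 1)) * ξ) u :=
    (Real.hasDerivAt_cos _).comp u (hasDerivAt_lin ξ u)
  have hsq : HasDerivAt (fun u => Real.cos (ξ * (u - 1)) ^ 2)
      ((2 : ℕ) * Real.cos (ξ * (u - 1)) ^ 1 * (-Real.sin (ξ * (u - 1)) * ξ)) u := hcos.pow 2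
  have hne : Real.cos (ξ * (u - 1)) ^ 2 ≠ 0 := pow_ne_zero _ h.ne'
  have hlog : HasDerivAt (fun u => Real.log (Real.cos (ξ * (u - 1)) ^ 2))
      ((Real.cos (ξ * (u - 1)) ^ 2)⁻¹ *
        ((2 : ℕ) * Real.cos (ξ * (u - 1)) ^ 1 * (-Real.sin (ξ * (u - 1)) * ξ))) u :=
    (Real.hasDerivAt_log hne).comp (h₂ := Real.log) u hsq
  have heq : ∀ v : ℝ, 0 < Real.cos (ξ * (v - 1)) →
      Real.log (Real.cos ξ ^ 2 / Real.cos (ξ * (v - 1)) ^ 2)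
        = Real.log (Real.cos ξ ^ 2) - Real.log (Real.cos (ξ * (v - 1)) ^ 2) := by
    intro v hv
    exact Real.log_div (pow_ne_zero _ hξc) (pow_ne_zero _ hv.ne')
  have hψ : HasDerivAt
      (fun u => Real.log (Real.cos ξ ^ 2) - Real.log (Real.cos (ξ * (u - 1)) ^ 2))
      (gs ξ u) u := by
    have := (hasDerivAt_const u (Real.log (Real.cos ξ ^ 2))).sub hlog
    refine this.congr_deriv ?_
    rw [gs, Real.tan_eq_sin_div_cos]
    field_simp
    ring
  apply hψ.congr_of_eventuallyEq
  have hcont : Continuous fun v : ℝ => Real.cos (ξ * (v - 1)) := by continuity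
  have hev : ∀ᶠ v in nhds u, 0 < Real.cos (ξ * (v - 1)) :=
    (hcont.continuousAt (x := u)).preimage_mem_nhds (Ioi_mem_nhds h)
  filter_upwards [hev] with v hv
  exact heq v hv

lemma contOn_w (hξ : ξ ∈ Ioo (0:ℝ) (Real.pi/2)) :
    ContinuousOn (fun u => Real.cos ξ ^ 2 / Real.cos (ξ * (u - 1)) ^ 2) (Icc (0:ℝ) 1) := by
  apply continuousOn_const.div
  · exact ((Real.continuous_cos.comp (by continuity)).pow 2).continuousOn
  · exact fun u hu => pow_ne_zero 2 (cos_pos hξ hu).ne'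

lemma contOn_tan_comp (hξ : ξ ∈ Ioo (0:ℝ) (Real.pi/2)) :
    ContinuousOn (fun u => Real.tan (ξ * (u - 1))) (Icc (0:ℝ) 1) := by
  have : ∀ u ∈ Icc (0:ℝ) 1, Real.tan (ξ * (u - 1))
      = Real.sin (ξ * (u - 1)) / Real.cos (ξ * (u - 1)) := fun u _ => Real.tan_eq_sin_div_cos _
  apply ContinuousOn.congr _ this
  exact (Real.continuous_sin.comp (by continuity)).continuousOn.div
    (Real.continuous_cos.comp (by continuity)).continuousOn
    (fun u hu => (cos_pos hξ hu).ne')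

lemma contOn_gs (hξ : ξ ∈ Ioo (0:ℝ) (Real.pi/2)) : ContinuousOn (gs ξ) (Icc (0:ℝ) 1) := by
  have := (contOn_tan_comp hξ).const_smul (2 * ξ)
  exact this.congr (fun u _ => by simp [gs, smul_eq_mul])

lemma contOn_ph (hξ : ξ ∈ Ioo (0:ℝ) (Real.pi/2)) : ContinuousOn (ph ξ) (Icc (0:ℝ) 1) := by
  apply (contOn_w hξ).log
  intro u hu
  exact (div_pos (pow_pos (cosξ_pos hξ) 2) (pow_pos (cos_pos hξ hu) 2)).ne'

lemma exp_ph (hξ : ξ ∈ Ioo (0:ℝ) (Real.pi/2)) {u : ℝ} (hu : u ∈ Icc (0:ℝ) 1) :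
    Real.exp (ph ξ u) = Real.cos ξ ^ 2 / Real.cos (ξ * (u - 1)) ^ 2 :=
  Real.exp_log (div_pos (pow_pos (cosξ_pos hξ) 2) (pow_pos (cos_pos hξ hu) 2))

lemma integral_w (hξ : ξ ∈ Ioo (0:ℝ) (Real.pi/2)) {s : ℝ} (hs : s ∈ Icc (0:ℝ) 1) :
    ∫ t in s..1, Real.cos ξ ^ 2 / Real.cos (ξ * (t - 1)) ^ 2
      = -(Real.cos ξ ^ 2 / ξ) * Real.tan (ξ * (s - 1)) := by
  have hξ0 : ξ ≠ 0 := hξ.1.ne'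
  have huIcc : uIcc s 1 ⊆ Icc (0:ℝ) 1 := by
    rw [uIcc_of_le hs.2]; exact Icc_subset_Icc hs.1 le_rfl
  have hder : ∀ t ∈ uIcc s 1,
      HasDerivAt (fun t => Real.cos ξ ^ 2 / ξ * Real.tan (ξ * (t - 1)))
        (Real.cos ξ ^ 2 / Real.cos (ξ * (t - 1)) ^ 2) t := by
    intro t ht
    have hc := cos_pos hξ (huIcc ht)
    have := (hasDerivAt_tan_comp hc.ne').const_mul (Real.cos ξ ^ 2 / ξ)
    refine this.congr_deriv ?_
    field_simp
  have hint : IntervalIntegrable (fun t => Real.cos ξ ^ 2 / Real.cos (ξ * (t - 1)) ^ 2)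
      volume s 1 := ((contOn_w hξ).mono huIcc).intervalIntegrable
  rw [intervalIntegral.integral_eq_sub_of_hasDerivAt hder hint]
  norm_num

lemma integral_exp_ph (hξ : ξ ∈ Ioo (0:ℝ) (Real.pi/2)) {s : ℝ} (hs : s ∈ Icc (0:ℝ) 1) :
    ∫ t in s..1, Real.exp (ph ξ t) = -(Real.cos ξ ^ 2 / ξ) * Real.tan (ξ * (s - 1)) := by
  rw [← integral_w hξ hs]
  apply intervalIntegral.integral_congr
  intro t ht
  rw [uIcc_of_le hs.2] at ht
  exact exp_ph hξ ⟨le_trans hs.1 ht.1, ht.2⟩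

lemma integral_exp_ph_eq_x {x : ℝ} (hξ : ξ ∈ Ioo (0:ℝ) (Real.pi/2))
    (heq : Real.sin (2 * ξ) / (2 * ξ) = x) :
    ∫ t in (0:ℝ)..1, Real.exp (ph ξ t) = x := by
  rw [integral_exp_ph hξ (left_mem_Icc.mpr zero_le_one)]
  rw [show ξ * ((0:ℝ) - 1) = -ξ by ring, Real.tan_neg, ← heq]
  have hξ0 : ξ ≠ 0 := hξ.1.ne'
  have hc : Real.cos ξ ≠ 0 := (cosξ_pos hξ).ne'
  rw [Real.sin_two_mul, Real.tan_eq_sin_div_cos]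
  field_simp

lemma integral_gs_sq (hξ : ξ ∈ Ioo (0:ℝ) (Real.pi/2)) :
    ∫ u in (0:ℝ)..1, (gs ξ u) ^ 2 = 4 * ξ * Real.tan ξ - 4 * ξ ^ 2 := by
  have huIcc : uIcc (0:ℝ) 1 = Icc (0:ℝ) 1 := uIcc_of_le zero_le_one
  have hder : ∀ t ∈ uIcc (0:ℝ) 1,
      HasDerivAt (fun u => 4 * ξ * Real.tan (ξ * (u - 1)) - 4 * ξ ^ 2 * u)
        ((gs ξ t) ^ 2) t := by
    intro t ht
    rw [huIcc] at ht
    have hc := cos_pos hξ ht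
    have h1 := ((hasDerivAt_tan_comp hc.ne').const_mul (4 * ξ)).sub
      ((hasDerivAt_id t).const_mul (4 * ξ ^ 2))
    refine h1.congr_deriv ?_
    have hpy := Real.sin_sq_add_cos_sq (ξ * (t - 1))
    rw [gs, Real.tan_eq_sin_div_cos]
    field_simp
    nlinarith [hpy]
  have hint : IntervalIntegrable (fun u => (gs ξ u) ^ 2) volume 0 1 := by
    apply ContinuousOn.intervalIntegrable
    rw [huIcc]
    exact (contOn_gs hξ).pow 2
  rw [intervalIntegral.integral_eq_sub_of_hasDerivAt hder hint]
  norm_num [gs, Real.tan_neg]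
  ring

lemma ph_zero (hξ : ξ ∈ Ioo (0:ℝ) (Real.pi/2)) : ph ξ 0 = 0 := by
  rw [ph, show ξ * ((0:ℝ) - 1) = -ξ by ring, Real.cos_neg, div_self, Real.log_one]
  exact pow_ne_zero _ (cosξ_pos hξ).ne'

lemma isac_ph (hξ : ξ ∈ Ioo (0:ℝ) (Real.pi/2)) : IsAC (ph ξ) (gs ξ) := by
  have huIcc : uIcc (0:ℝ) 1 = Icc (0:ℝ) 1 := uIcc_of_le zero_le_one
  have hgsi : IntervalIntegrable (gs ξ) volume 0 1 := by
    apply ContinuousOn.intervalIntegrable; rw [huIcc]; exact contOn_gs hξ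
  refine ⟨hgsi, ?_, ?_⟩
  · apply ContinuousOn.intervalIntegrable; rw [huIcc]; exact (contOn_gs hξ).pow 2
  · intro t ht
    have hsub : uIcc (0:ℝ) t ⊆ Icc (0:ℝ) 1 := by
      rw [uIcc_of_le ht.1]; exact Icc_subset_Icc le_rfl ht.2
    have : ∫ s in (0:ℝ)..t, gs ξ s = ph ξ t - ph ξ 0 := by
      apply intervalIntegral.integral_eq_sub_of_hasDerivAt
      · intro u hu
        exact hasDerivAt_ph (cosξ_pos hξ).ne' (cos_pos hξ (hsub hu))
      · exact hgsi.mono_set (by rw [huIcc]; exact hsub)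
    rw [this, ph_zero hξ, sub_zero]

lemma energy_gs (hξ : ξ ∈ Ioo (0:ℝ) (Real.pi/2)) :
    energy (gs ξ) = 2 * ξ * (Real.tan ξ - ξ) := by
  rw [energy, integral_gs_sq hξ]; ring

end JBSaux

lemma swap_lemma (h w : ℝ → ℝ) (hh : IntegrableOn h (Ioc (0:ℝ) 1) volume)
    (hw : Measurable w) (hwb : ∀ t ∈ Ioc (0:ℝ) 1, |w t| ≤ 1) :
    ∫ s in Ioc (0:ℝ) 1, h s * ∫ t in Ioc s 1, w t
      = ∫ t in Ioc (0:ℝ) 1, (∫ s in Ioc 0 t, h s) * w t := by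
  set μ : Measure ℝ := volume.restrict (Ioc (0:ℝ) 1) with hμ
  have hμfin : IsFiniteMeasure μ := by
    constructor; rw [hμ]; simp [Measure.restrict_apply]
  set F : ℝ × ℝ → ℝ := fun p => if p.1 ≤ p.2 then h p.1 * w p.2 else 0 with hF
  have hFind : F = {q : ℝ × ℝ | q.1 ≤ q.2}.indicator (fun q => h q.1 * w q.2) := by
    funext p; rw [Set.indicator_apply]; rfl
  have hmes : MeasurableSet {q : ℝ × ℝ | q.1 ≤ q.2} :=
    measurableSet_le measurable_fst measurable_snd
  have hwint : Integrable w μ := by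
    have : ∀ᵐ t ∂μ, ‖w t‖ ≤ 1 := by
      rw [hμ, ae_restrict_iff' measurableSet_Ioc]
      exact Filter.Eventually.of_forall (fun t ht => by simpa using hwb t ht)
    exact Integrable.mono' (integrable_const 1) (hw.aestronglyMeasurable) this
  have hhint : Integrable h μ := hh
  have hFasm : AEStronglyMeasurable F (μ.prod μ) := by
    rw [hFind]
    apply AEStronglyMeasurable.indicator _ hmes
    exact hhint.aestronglyMeasurable.comp_fst.mul ((hw.comp measurable_snd).aestronglyMeasurable)
  have hFint : Integrable F (μ.prod μ) := by
    apply Integrable.mono (hhint.norm.mul_prod hwint.norm) hFasm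
    apply Filter.Eventually.of_forall
    intro p
    simp only [hF]
    by_cases hp : p.1 ≤ p.2
    · rw [if_pos hp]
      simp only [norm_mul, norm_norm]
      exact le_of_eq rfl
    · rw [if_neg hp]
      simp only [norm_zero, norm_mul, norm_norm]
      positivity
  have hswap := MeasureTheory.integral_integral_swap (f := fun s t => F (s, t)) (μ := μ) (ν := μ)
    (by exact hFint)
  have hL : ∫ s, (∫ t, F (s, t) ∂μ) ∂μ = ∫ s in Ioc (0:ℝ) 1, h s * ∫ t in Ioc s 1, w t := by
    rw [hμ]
    apply setIntegral_congr_fun measurableSet_Ioc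
    intro s hs
    show (∫ t, F (s, t) ∂μ) = h s * ∫ t in Ioc s 1, w t
    have heq : (fun t => F (s, t)) = (Ici s).indicator (fun t => h s * w t) := by
      funext t
      simp only [hF, Set.indicator_apply, mem_Ici]
    rw [heq, hμ, setIntegral_indicator measurableSet_Ici]
    have hset : Ioc (0:ℝ) 1 ∩ Ici s = Icc s 1 := by
      ext t
      simp only [mem_inter_iff, mem_Ioc, mem_Ici, mem_Icc]
      constructor
      · rintro ⟨⟨_, ht1⟩, hts⟩; exact ⟨hts, ht1⟩
      · rintro ⟨hts, ht1⟩; exact ⟨⟨lt_of_lt_of_le hs.1 hts, ht1⟩, hts⟩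
    rw [hset, integral_Icc_eq_integral_Ioc, integral_const_mul]
  have hR : ∫ t, (∫ s, F (s, t) ∂μ) ∂μ = ∫ t in Ioc (0:ℝ) 1, (∫ s in Ioc 0 t, h s) * w t := by
    rw [hμ]
    apply setIntegral_congr_fun measurableSet_Ioc
    intro t ht
    show (∫ s, F (s, t) ∂μ) = (∫ s in Ioc 0 t, h s) * w t
    have heq : (fun s => F (s, t)) = (Iic t).indicator (fun s => h s * w t) := by
      funext s
      simp only [hF, Set.indicator_apply, mem_Iic]
    rw [heq, hμ, setIntegral_indicator measurableSet_Iic]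
    have hset : Ioc (0:ℝ) 1 ∩ Iic t = Ioc 0 t := by
      ext s
      simp only [mem_inter_iff, mem_Ioc, mem_Iic]
      constructor
      · rintro ⟨⟨hs0, _⟩, hst⟩; exact ⟨hs0, hst⟩
      · rintro ⟨hs0, hst⟩; exact ⟨⟨hs0, le_trans hst ht.2⟩, hst⟩
    rw [hset, integral_mul_const]
  rw [← hL, ← hR]
  exact hswap

namespace JBSaux

lemma lower {ξ x : ℝ} (hξ : ξ ∈ Ioo (0:ℝ) (Real.pi/2))
    (heq : Real.sin (2 * ξ) / (2 * ξ) = x) (f g : ℝ → ℝ)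
    (hac : IsAC f g) (hcon : (∫ u in (0:ℝ)..1, Real.exp (f u)) = x) :
    2 * ξ * (Real.tan ξ - ξ) ≤ energy g := by
  obtain ⟨hgi, hg2i, hfi⟩ := hac
  have huIcc : uIcc (0:ℝ) 1 = Icc (0:ℝ) 1 := uIcc_of_le zero_le_one
  have hlp : 0 < 2 * ξ ^ 2 / Real.cos ξ ^ 2 :=
    div_pos (by nlinarith [hξ.1]) (pow_pos (cosξ_pos hξ) 2)
  set lam := 2 * ξ ^ 2 / Real.cos ξ ^ 2 with hlam
  -- continuity of f on [0,1]
  have hprim : ContinuousOn (fun b => ∫ s in (0:ℝ)..b, g s) (Icc (0:ℝ) 1) := by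
    have := intervalIntegral.continuousOn_primitive_interval' hgi
      (left_mem_uIcc (a := (0:ℝ)) (b := 1))
    rwa [huIcc] at this
  have hfc : ContinuousOn f (Icc (0:ℝ) 1) := hprim.congr (fun t ht => hfi t ht)
  have hphc : ContinuousOn (ph ξ) (Icc (0:ℝ) 1) := contOn_ph hξ
  -- Step A: convexity of exp + constraint
  have hexpph_int : IntervalIntegrable (fun t => Real.exp (ph ξ t)) volume 0 1 := by
    apply ContinuousOn.intervalIntegrable; rw [huIcc]
    exact Real.continuous_exp.comp_continuousOn hphc
  have hexpf_int : IntervalIntegrable (fun t => Real.exp (f t)) volume 0 1 := by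
    apply ContinuousOn.intervalIntegrable; rw [huIcc]
    exact Real.continuous_exp.comp_continuousOn hfc
  have hprod_int : IntervalIntegrable (fun t => Real.exp (ph ξ t) * (f t - ph ξ t)) volume 0 1 := by
    apply ContinuousOn.intervalIntegrable; rw [huIcc]
    exact (Real.continuous_exp.comp_continuousOn hphc).mul (hfc.sub hphc)
  have hconv : (∫ t in (0:ℝ)..1, Real.exp (ph ξ t) * (f t - ph ξ t)) ≤ 0 := by
    have hle : ∀ t ∈ Icc (0:ℝ) 1,
        Real.exp (ph ξ t) * (f t - ph ξ t) ≤ Real.exp (f t) - Real.exp (ph ξ t) := by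
      intro t _
      have h1 := Real.add_one_le_exp (f t - ph ξ t)
      have h2 : Real.exp (ph ξ t) * Real.exp (f t - ph ξ t) = Real.exp (f t) := by
        rw [← Real.exp_add]; ring_nf
      nlinarith [Real.exp_pos (ph ξ t)]
    have hmono := intervalIntegral.integral_mono_on zero_le_one hprod_int
      (hexpf_int.sub hexpph_int) hle
    have : (∫ t in (0:ℝ)..1, (Real.exp (f t) - Real.exp (ph ξ t))) = 0 := by
      rw [intervalIntegral.integral_sub hexpf_int hexpph_int, hcon,
        integral_exp_ph_eq_x hξ heq, sub_self]
    linarith [hmono, this.le]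
  -- Step B: representation of gs
  have hrep : ∀ s ∈ Icc (0:ℝ) 1,
      gs ξ s = -lam * ∫ t in Ioc s 1, Real.exp (ph ξ t) := by
    intro s hs
    rw [← intervalIntegral.integral_of_le hs.2, integral_exp_ph hξ hs, hlam, gs]
    have hc : Real.cos ξ ≠ 0 := (cosξ_pos hξ).ne'
    have hξ0 : ξ ≠ 0 := hξ.1.ne'
    field_simp
  -- Step C: Fubini
  set h : ℝ → ℝ := fun s => g s - gs ξ s with hh
  set w : ℝ → ℝ := fun t => Real.exp (ph ξ t) with hwdef
  have hgs_intOn : IntegrableOn (gs ξ) (Ioc (0:ℝ) 1) volume := by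
    have : IntegrableOn (gs ξ) (Icc (0:ℝ) 1) volume :=
      (contOn_gs hξ).integrableOn_Icc
    exact this.mono_set Ioc_subset_Icc_self
  have hh_int : IntegrableOn h (Ioc (0:ℝ) 1) volume := hgi.1.sub hgs_intOn
  have hw_meas : Measurable w := by
    apply Real.measurable_exp.comp
    apply Real.measurable_log.comp
    exact (measurable_const.div ((Real.measurable_cos.comp (by measurability)).pow_const 2))
  have hwb : ∀ t ∈ Ioc (0:ℝ) 1, |w t| ≤ 1 := by
    intro t ht
    have ht' : t ∈ Icc (0:ℝ) 1 := Ioc_subset_Icc_self ht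
    rw [hwdef]
    rw [abs_of_pos (Real.exp_pos _), exp_ph hξ ht']
    rw [div_le_one (pow_pos (cos_pos hξ ht') 2)]
    have := cos_le hξ ht'
    nlinarith [cosξ_pos hξ]
  have hswap := swap_lemma h w hh_int hw_meas hwb
  -- inner integral of h is f - ph
  have hinner : ∀ t ∈ Ioc (0:ℝ) 1, (∫ s in Ioc 0 t, h s) = f t - ph ξ t := by
    intro t ht
    have ht' : t ∈ Icc (0:ℝ) 1 := Ioc_subset_Icc_self ht
    have hsub : uIcc (0:ℝ) t ⊆ uIcc (0:ℝ) 1 := by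
      rw [uIcc_of_le ht'.1, huIcc]; exact Icc_subset_Icc le_rfl ht'.2
    have hgt : IntervalIntegrable g volume 0 t := hgi.mono_set hsub
    have hgst : IntervalIntegrable (gs ξ) volume 0 t := by
      apply IntervalIntegrable.mono_set _ hsub
      apply ContinuousOn.intervalIntegrable; rw [huIcc]; exact contOn_gs hξ
    rw [← intervalIntegral.integral_of_le ht'.1]
    rw [show h = fun s => g s - gs ξ s from rfl]
    rw [intervalIntegral.integral_sub hgt hgst]
    rw [← hfi t ht']
    have := (isac_ph hξ).2.2 t ht'
    rw [← this]
  -- Step D: cross term nonneg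
  have hD : 0 ≤ ∫ s in (0:ℝ)..1, gs ξ s * (g s - gs ξ s) := by
    rw [intervalIntegral.integral_of_le zero_le_one]
    have e1 : ∫ s in Ioc (0:ℝ) 1, gs ξ s * (g s - gs ξ s)
        = ∫ s in Ioc (0:ℝ) 1, -lam * (h s * ∫ t in Ioc s 1, w t) := by
      apply setIntegral_congr_fun measurableSet_Ioc
      intro s hs
      show gs ξ s * (g s - gs ξ s) = -lam * (h s * ∫ t in Ioc s 1, w t)
      simp only [hh, hwdef]
      rw [hrep s (Ioc_subset_Icc_self hs)]
      ring
    rw [e1, integral_const_mul, hswap]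
    have e2 : ∫ t in Ioc (0:ℝ) 1, (∫ s in Ioc 0 t, h s) * w t
        = ∫ t in Ioc (0:ℝ) 1, Real.exp (ph ξ t) * (f t - ph ξ t) := by
      apply setIntegral_congr_fun measurableSet_Ioc
      intro t ht
      show (∫ s in Ioc 0 t, h s) * w t = Real.exp (ph ξ t) * (f t - ph ξ t)
      rw [hinner t ht, hwdef]
      ring
    rw [e2, ← intervalIntegral.integral_of_le zero_le_one]
    nlinarith [hconv, hlp]
  -- Step E: expand the square
  have i_gs2 : IntervalIntegrable (fun t => (gs ξ t) ^ 2) volume 0 1 := by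
    apply ContinuousOn.intervalIntegrable; rw [huIcc]; exact (contOn_gs hξ).pow 2
  have i_cross : IntervalIntegrable (fun t => gs ξ t * (g t - gs ξ t)) volume 0 1 := by
    have i_gsg : IntervalIntegrable (fun t => gs ξ t * g t) volume 0 1 :=
      hgi.continuousOn_mul (by rw [huIcc]; exact contOn_gs hξ)
    have : (fun t => gs ξ t * (g t - gs ξ t))
        = fun t => gs ξ t * g t - (gs ξ t) ^ 2 := by funext t; ring
    rw [this]
    exact i_gsg.sub i_gs2
  have i_sq : IntervalIntegrable (fun t => (g t - gs ξ t) ^ 2) volume 0 1 := by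
    have hc2 : ContinuousOn (fun t => 2 * gs ξ t) (Icc (0:ℝ) 1) := by
      exact continuousOn_const.mul (contOn_gs hξ)
    have i_gsg : IntervalIntegrable (fun t => (2 * gs ξ t) * g t) volume 0 1 :=
      hgi.continuousOn_mul (by rw [huIcc]; exact hc2)
    have heq2 : (fun t => (g t - gs ξ t) ^ 2)
        = fun t => (g t) ^ 2 - (2 * gs ξ t) * g t + (gs ξ t) ^ 2 := by funext t; ring
    rw [heq2]
    exact (hg2i.sub i_gsg).add i_gs2
  have hsplit : (∫ t in (0:ℝ)..1, (g t) ^ 2)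
      = (∫ t in (0:ℝ)..1, (g t - gs ξ t) ^ 2)
        + ((∫ t in (0:ℝ)..1, 2 * (gs ξ t * (g t - gs ξ t)))
          + (∫ t in (0:ℝ)..1, (gs ξ t) ^ 2)) := by
    rw [← intervalIntegral.integral_add (i_cross.const_mul 2) i_gs2]
    rw [← intervalIntegral.integral_add i_sq ((i_cross.const_mul 2).add i_gs2)]
    apply intervalIntegral.integral_congr
    intro t _
    show (g t) ^ 2 = (g t - gs ξ t) ^ 2 + (2 * (gs ξ t * (g t - gs ξ t)) + (gs ξ t) ^ 2)
    ring
  have hA : 0 ≤ ∫ t in (0:ℝ)..1, (g t - gs ξ t) ^ 2 :=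
    intervalIntegral.integral_nonneg zero_le_one (fun t _ => sq_nonneg _)
  have hB : 0 ≤ ∫ t in (0:ℝ)..1, 2 * (gs ξ t * (g t - gs ξ t)) := by
    rw [intervalIntegral.integral_const_mul]
    linarith [hD]
  have hC := integral_gs_sq hξ
  rw [energy]
  rw [hsplit, hC]
  nlinarith [hA, hB]

end JBSaux

/-- For `0 < x < 1` and `ξ ∈ (0, π/2)` with `sin(2ξ)/(2ξ) = x`, the path
`φ(u) = log(cos²(ξ)/cos²(ξ(u−1)))` satisfies `φ(0) = 0`, `∫₀¹ exp(φ(u)) du = x`, has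
energy `2ξ(tan ξ − ξ)`, and attains the infimum defining `J_BS(x)`. -/
theorem JBS_optimal_path_left (x ξ : ℝ) (hx0 : 0 < x) (hx1 : x < 1)
    (hξ : ξ ∈ Ioo (0:ℝ) (Real.pi / 2))
    (heq : Real.sin (2 * ξ) / (2 * ξ) = x)
    (φ : ℝ → ℝ)
    (hφ : ∀ u, φ u = Real.log (Real.cos ξ ^ 2 / Real.cos (ξ * (u - 1)) ^ 2)) :
    φ 0 = 0 ∧
    (∫ u in (0:ℝ)..1, Real.exp (φ u)) = x ∧
    (1 / 2) * (∫ u in (0:ℝ)..1, (deriv φ u) ^ 2) = 2 * ξ * (Real.tan ξ - ξ) ∧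
    JBS x = 2 * ξ * (Real.tan ξ - ξ) := by
  have hξ' : ξ ∈ Ioo (0:ℝ) (Real.pi / 2) := hξ
  have hphid : φ = JBSaux.ph ξ := funext hφ
  have huIcc : uIcc (0:ℝ) 1 = Icc (0:ℝ) 1 := uIcc_of_le zero_le_one
  refine ⟨?_, ?_, ?_, ?_⟩
  · rw [hphid]; exact JBSaux.ph_zero hξ
  · rw [hphid]; exact JBSaux.integral_exp_ph_eq_x hξ heq
  · have hderiv : ∀ u ∈ Icc (0:ℝ) 1, deriv φ u = JBSaux.gs ξ u := by
      intro u hu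
      rw [hphid]
      exact (JBSaux.hasDerivAt_ph (JBSaux.cosξ_pos hξ).ne' (JBSaux.cos_pos hξ hu)).deriv
    have : (∫ u in (0:ℝ)..1, (deriv φ u) ^ 2) = ∫ u in (0:ℝ)..1, (JBSaux.gs ξ u) ^ 2 := by
      apply intervalIntegral.integral_congr
      intro u hu
      show deriv φ u ^ 2 = JBSaux.gs ξ u ^ 2
      rw [hderiv u (huIcc ▸ hu)]
    rw [this, JBSaux.integral_gs_sq hξ]
    ring
  · have hmem : (2 * ξ * (Real.tan ξ - ξ)) ∈
        { E | ∃ f g : ℝ → ℝ, IsAC f g ∧ (∫ u in (0:ℝ)..1, Real.exp (f u)) = x ∧ E = energy g } :=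
      ⟨JBSaux.ph ξ, JBSaux.gs ξ, JBSaux.isac_ph hξ, JBSaux.integral_exp_ph_eq_x hξ heq,
        (JBSaux.energy_gs hξ).symm⟩
    have hlb : ∀ E ∈ { E | ∃ f g : ℝ → ℝ, IsAC f g ∧
        (∫ u in (0:ℝ)..1, Real.exp (f u)) = x ∧ E = energy g }, 2 * ξ * (Real.tan ξ - ξ) ≤ E := by
      rintro E ⟨f, g, hac, hcon, rfl⟩
      exact JBSaux.lower hξ heq f g hac hcon
    exact le_antisymm (csInf_le ⟨_, hlb⟩ hmem) (le_csInf ⟨_, hmem⟩ hlb)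
end
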